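/- arXiv:2005.07257 — 9 statements merged into one kernel-verified Lean document; each statement's English description precedes it below -/
import Mathlib

section
/- Suppose λ ∈ ℝ^N is entrywise nonnegative with λ ≠ 0, δ and α are entrywise positive, s ≥ 0, and B is an irreducible nonnegative matrix. Then there exists exactly one vector p ∈ [0,1]^N satisfying g(s,p) = 0, and this vector satisfies 0 < p_i < 1 for every index i. -/
noncomputable section

open Matrix

/-- Irreducibility of a nonnegative matrix: for all indices `i, j` there is `k ≥ 1`
with `(B^k) i j > 0`. -/
def MatIrred {N : ℕ} (B : Matrix (Fin N) (Fin N) ℝ) : Prop :=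
  ∀ i j, ∃ k : ℕ, 1 ≤ k ∧ 0 < (B ^ k) i j

/-- The map `g(s,p)` with `g_i(s,p) = (1 - p_i)(λ_i + (Bp)_i) - (α_i s_i + δ_i) p_i`. -/
def gfun {N : ℕ} (B : Matrix (Fin N) (Fin N) ℝ) (lam δ α s p : Fin N → ℝ) : Fin N → ℝ :=
  fun i => (1 - p i) * (lam i + B.mulVec p i) - (α i * s i + δ i) * p i

namespace Statement0Aux

variable {N : ℕ}

lemma mulVec_apply' (B : Matrix (Fin N) (Fin N) ℝ) (p : Fin N → ℝ) (i : Fin N) :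
    B.mulVec p i = ∑ j, B i j * p j := rfl

lemma pow_nonneg' (B : Matrix (Fin N) (Fin N) ℝ) (hB : ∀ i j, 0 ≤ B i j) :
    ∀ k i j, 0 ≤ (B ^ k) i j := by
  intro k
  induction k with
  | zero =>
    intro i j
    rcases eq_or_ne i j with rfl | hne
    · simp [Matrix.one_apply]
    · simp [Matrix.one_apply, hne]
  | succ k ih =>
    intro i j
    rw [pow_succ, Matrix.mul_apply]
    exact Finset.sum_nonneg fun l _ => mul_nonneg (ih i l) (hB l j)

lemma exists_pos_of_sum_pos {ι : Type*} [Fintype ι] (f : ι → ℝ) (h : 0 < ∑ i, f i) :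
    ∃ i, 0 < f i := by
  obtain ⟨i, _, hi⟩ := Finset.exists_lt_of_sum_lt
    (show ∑ i, (0 : ℝ) < ∑ i, f i by simpa using h)
  exact ⟨i, hi⟩

lemma mulVec_nonneg (B : Matrix (Fin N) (Fin N) ℝ) (hB : ∀ i j, 0 ≤ B i j)
    (p : Fin N → ℝ) (hp : ∀ i, 0 ≤ p i) (i : Fin N) : 0 ≤ B.mulVec p i := by
  rw [mulVec_apply']
  exact Finset.sum_nonneg fun j _ => mul_nonneg (hB i j) (hp j)

lemma mulVec_mono (B : Matrix (Fin N) (Fin N) ℝ) (hB : ∀ i j, 0 ≤ B i j)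
    (p q : Fin N → ℝ) (hpq : ∀ j, p j ≤ q j) (i : Fin N) :
    B.mulVec p i ≤ B.mulVec q i := by
  rw [mulVec_apply', mulVec_apply']
  exact Finset.sum_le_sum fun j _ => mul_le_mul_of_nonneg_left (hpq j) (hB i j)

lemma mulVec_pos (B : Matrix (Fin N) (Fin N) ℝ) (hB : ∀ i j, 0 ≤ B i j)
    (p : Fin N → ℝ) (hp : ∀ i, 0 ≤ p i) {i l : Fin N} (hil : 0 < B i l) (hpl : 0 < p l) :
    0 < B.mulVec p i := by
  rw [mulVec_apply']
  refine Finset.sum_pos' (fun j _ => mul_nonneg (hB i j) (hp j)) ⟨l, Finset.mem_univ l, ?_⟩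
  exact mul_pos hil hpl

/-- Positivity propagates along powers of a nonnegative matrix. -/
lemma prop_pos (B : Matrix (Fin N) (Fin N) ℝ) (hB : ∀ i j, 0 ≤ B i j)
    (p : Fin N → ℝ) (hstep : ∀ i l, 0 < B i l → 0 < p l → 0 < p i) :
    ∀ k i j, 0 < (B ^ k) i j → 0 < p j → 0 < p i := by
  intro k
  induction k with
  | zero =>
    intro i j h hpj
    rcases eq_or_ne i j with rfl | hne
    · exact hpj
    · rw [pow_zero] at h; simp [Matrix.one_apply, hne] at h
  | succ k ih =>
    intro i j h hpj
    rw [pow_succ', Matrix.mul_apply] at h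
    obtain ⟨l, hl⟩ := exists_pos_of_sum_pos _ h
    have hBk : 0 ≤ (B ^ k) l j := pow_nonneg' B hB k l j
    have hBil : 0 < B i l := by nlinarith [hB i l]
    have hBlj : 0 < (B ^ k) l j := by nlinarith [hB i l]
    exact hstep i l hBil (ih l j hBlj hpj)

/-- Every row of an irreducible nonnegative matrix has a positive entry. -/
lemma row_pos (B : Matrix (Fin N) (Fin N) ℝ) (hB : ∀ i j, 0 ≤ B i j)
    (hBirr : MatIrred B) (i : Fin N) : ∃ l, 0 < B i l := by
  obtain ⟨k, hk1, hk⟩ := hBirr i i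
  obtain ⟨m, rfl⟩ : ∃ m, k = m + 1 := ⟨k - 1, by omega⟩
  rw [pow_succ', Matrix.mul_apply] at hk
  obtain ⟨l, hl⟩ := exists_pos_of_sum_pos _ hk
  have hBk : 0 ≤ (B ^ m) l i := pow_nonneg' B hB m l i
  exact ⟨l, by nlinarith [hB i l]⟩

end Statement0Aux

open Statement0Aux in
theorem statement0 {N : ℕ} (hN : 2 ≤ N)
    (B : Matrix (Fin N) (Fin N) ℝ) (hBnn : ∀ i j, 0 ≤ B i j) (hBirr : MatIrred B)
    (lam δ α s : Fin N → ℝ)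
    (hlam : ∀ i, 0 ≤ lam i) (hlam0 : lam ≠ 0)
    (hδ : ∀ i, 0 < δ i) (hα : ∀ i, 0 < α i) (hs : ∀ i, 0 ≤ s i) :
    ∃ p : Fin N → ℝ,
      ((∀ i, 0 ≤ p i ∧ p i ≤ 1) ∧ gfun B lam δ α s p = 0) ∧
      (∀ i, 0 < p i ∧ p i < 1) ∧
      (∀ q : Fin N → ℝ, (∀ i, 0 ≤ q i ∧ q i ≤ 1) → gfun B lam δ α s q = 0 → q = p) := by
  classical
  set c : Fin N → ℝ := fun i => α i * s i + δ i with hc_def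
  have hc : ∀ i, 0 < c i := fun i => add_pos_of_nonneg_of_pos (mul_nonneg (hα i).le (hs i)) (hδ i)
  set F : Fin N → ℝ → ℝ := fun i x => (lam i + x) / (lam i + x + c i) with hF_def
  have hden : ∀ i x, 0 ≤ x → 0 < lam i + x + c i := by
    intro i x hx
    have := hlam i; have := hc i; linarith
  have hF01 : ∀ i x, 0 ≤ x → 0 ≤ F i x ∧ F i x < 1 := by
    intro i x hx
    have hd := hden i x hx
    constructor
    · exact div_nonneg (by linarith [hlam i]) hd.le
    · rw [div_lt_one hd]; linarith [hc i]
  have hFmono : ∀ i x y, 0 ≤ x → x ≤ y → F i x ≤ F i y := by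
    intro i x y hx hxy
    have hdx := hden i x hx
    have hdy := hden i y (hx.trans hxy)
    rw [hF_def]
    rw [div_le_div_iff₀ hdx hdy]
    nlinarith [hlam i, hc i]
  have hFconc : ∀ i θ x, 0 < θ → θ < 1 → 0 < x → θ * F i x < F i (θ * x) := by
    intro i θ x hθ hθ1 hx
    have hdx := hden i x hx.le
    have hdθx := hden i (θ * x) (by positivity)
    rw [hF_def]
    simp only []
    rw [mul_div_assoc'] -- θ * (a/b) = (θ*a)/b
    rw [div_lt_div_iff₀ hdx hdθx]
    nlinarith [mul_pos (mul_pos (sub_pos.2 hθ1) hθ) (mul_pos hx hx),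
      mul_nonneg (mul_nonneg (sub_pos.2 hθ1).le (hlam i)) (hlam i),
      mul_nonneg (mul_nonneg (sub_pos.2 hθ1).le (hlam i)) (hc i).le,
      mul_nonneg (mul_nonneg (mul_nonneg (sub_pos.2 hθ1).le (by linarith : (0:ℝ) ≤ 1 + θ)) (hlam i)) hx.le]
  -- characterization of zeros of gfun
  have hchar : ∀ q : Fin N → ℝ, (∀ i, 0 ≤ q i) →
      (gfun B lam δ α s q = 0 ↔ ∀ i, q i = F i (B.mulVec q i)) := by
    intro q hq
    have hx : ∀ i, 0 ≤ B.mulVec q i := mulVec_nonneg B hBnn q hq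
    rw [funext_iff]
    constructor
    · intro h i
      have hi := h i
      have hd := hden i _ (hx i)
      simp only [gfun, Pi.zero_apply] at hi
      rw [hF_def, eq_div_iff hd.ne']
      simp only [hc_def]
      linear_combination -hi
    · intro h i
      have hi := h i
      have hd := hden i _ (hx i)
      simp only [gfun, Pi.zero_apply]
      rw [hi, hF_def]
      simp only [hc_def] at hd ⊢
      field_simp
      ring
  -- positivity of any fixed point
  have hpos : ∀ q : Fin N → ℝ, (∀ i, 0 ≤ q i) → (∀ i, q i = F i (B.mulVec q i)) →
      ∀ i, 0 < q i ∧ q i < 1 := by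
    intro q hq hfix
    have hx : ∀ i, 0 ≤ B.mulVec q i := mulVec_nonneg B hBnn q hq
    have hlt1 : ∀ i, q i < 1 := fun i => (hfix i) ▸ (hF01 i _ (hx i)).2
    have hstep : ∀ i l, 0 < B i l → 0 < q l → 0 < q i := by
      intro i l hil hql
      have hxp : 0 < B.mulVec q i := mulVec_pos B hBnn q hq hil hql
      rw [hfix i, hF_def]
      exact div_pos (by linarith [hlam i]) (hden i _ (hx i))
    obtain ⟨j, hj⟩ : ∃ j, 0 < lam j := by
      by_contra h
      push_neg at h
      exact hlam0 (funext fun j => le_antisymm (h j) (hlam j))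
    have hqj : 0 < q j := by
      rw [hfix j, hF_def]
      exact div_pos (by linarith [hx j]) (hden j _ (hx j))
    intro i
    refine ⟨?_, hlt1 i⟩
    obtain ⟨k, hk1, hk⟩ := hBirr i j
    exact prop_pos B hBnn q hstep k i j hk hqj
  -- existence via Knaster–Tarski on [0,1]^N
  haveI : Fact ((0:ℝ) ≤ 1) := ⟨zero_le_one⟩
  set Φ : (Fin N → Set.Icc (0:ℝ) 1) →o (Fin N → Set.Icc (0:ℝ) 1) :=
    ⟨fun u i => ⟨F i (B.mulVec (fun j => (u j : ℝ)) i), by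
        have hx : 0 ≤ B.mulVec (fun j => ((u j : ℝ))) i :=
          mulVec_nonneg B hBnn _ (fun j => (u j).2.1) i
        exact ⟨(hF01 i _ hx).1, (hF01 i _ hx).2.le⟩⟩,
      by
        intro u v huv i
        have hx : 0 ≤ B.mulVec (fun j => ((u j : ℝ))) i :=
          mulVec_nonneg B hBnn _ (fun j => (u j).2.1) i
        have hm : B.mulVec (fun j => ((u j : ℝ))) i ≤ B.mulVec (fun j => ((v j : ℝ))) i :=
          mulVec_mono B hBnn _ _ (fun j => huv j) i
        exact hFmono i _ _ hx hm⟩ with hΦ_def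
  have hfixΦ : Φ Φ.lfp = Φ.lfp := OrderHom.map_lfp Φ
  set p : Fin N → ℝ := fun i => ((Φ.lfp i : ℝ)) with hp_def
  have hp01 : ∀ i, 0 ≤ p i ∧ p i ≤ 1 := fun i => ⟨(Φ.lfp i).2.1, (Φ.lfp i).2.2⟩
  have hpfix : ∀ i, p i = F i (B.mulVec p i) := by
    intro i
    have := congrFun hfixΦ i
    have h2 := congrArg (Subtype.val) this
    exact h2.symm
  have hpg : gfun B lam δ α s p = 0 := (hchar p (fun i => (hp01 i).1)).2 hpfix
  have hppos := hpos p (fun i => (hp01 i).1) hpfix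
  -- uniqueness key lemma
  have hne : (Finset.univ : Finset (Fin N)).Nonempty := ⟨⟨0, by omega⟩, Finset.mem_univ _⟩
  have key : ∀ q r : Fin N → ℝ, (∀ i, q i = F i (B.mulVec q i)) →
      (∀ i, r i = F i (B.mulVec r i)) → (∀ i, 0 < q i) → (∀ i, 0 < r i) →
      ∀ i, r i ≤ q i := by
    intro q r hqf hrf hqp hrp
    set θ : ℝ := Finset.univ.inf' hne (fun i => q i / r i) with hθ_def
    have hθle : ∀ i, θ ≤ q i / r i := fun i => Finset.inf'_le _ (Finset.mem_univ i)
    have hθr : ∀ i, θ * r i ≤ q i := by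
      intro i
      have := hθle i
      rw [le_div_iff₀ (hrp i)] at this
      linarith
    have hθpos : 0 < θ := by
      rw [hθ_def, Finset.lt_inf'_iff]
      exact fun i _ => div_pos (hqp i) (hrp i)
    obtain ⟨i0, _, hi0⟩ := Finset.exists_mem_eq_inf' hne (fun i => q i / r i)
    have hqi0 : q i0 = θ * r i0 := by
      have : θ = q i0 / r i0 := hi0
      rw [this, div_mul_cancel₀ _ (hrp i0).ne']
    have h1le : 1 ≤ θ := by
      by_contra hlt
      push_neg at hlt
      -- (Br)_{i0} > 0 since r > 0 and row i0 has a positive entry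
      obtain ⟨l, hl⟩ := row_pos B hBnn hBirr i0
      have hxr : 0 < B.mulVec r i0 := mulVec_pos B hBnn r (fun i => (hrp i).le) hl (hrp l)
      have hmono : θ * B.mulVec r i0 ≤ B.mulVec q i0 := by
        have h1 : B.mulVec (fun j => θ * r j) i0 ≤ B.mulVec q i0 :=
          mulVec_mono B hBnn _ _ hθr i0
        have h2 : B.mulVec (fun j => θ * r j) i0 = θ * B.mulVec r i0 := by
          rw [mulVec_apply', mulVec_apply', Finset.mul_sum]
          exact Finset.sum_congr rfl fun j _ => by ring
        linarith [h1, h2.symm.le]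
      have hchain : q i0 < q i0 := by
        calc q i0 = θ * r i0 := hqi0
          _ = θ * F i0 (B.mulVec r i0) := by rw [← hrf i0]
          _ < F i0 (θ * B.mulVec r i0) := hFconc i0 θ _ hθpos hlt hxr
          _ ≤ F i0 (B.mulVec q i0) := hFmono i0 _ _ (by positivity) hmono
          _ = q i0 := (hqf i0).symm
      exact lt_irrefl _ hchain
    intro i
    calc r i = 1 * r i := (one_mul _).symm
      _ ≤ θ * r i := mul_le_mul_of_nonneg_right h1le (hrp i).le
      _ ≤ q i := hθr i
  refine ⟨p, ⟨hp01, hpg⟩, hppos, ?_⟩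
  intro q hq01 hqg
  have hqfix := (hchar q (fun i => (hq01 i).1)).1 hqg
  have hqpos := hpos q (fun i => (hq01 i).1) hqfix
  have h1 := key p q hpfix hqfix (fun i => (hppos i).1) (fun i => (hqpos i).1)
  have h2 := key q p hqfix hpfix (fun i => (hqpos i).1) (fun i => (hppos i).1)
  funext i
  exact le_antisymm (h1 i) (h2 i)
end
end

section
/- Let p* ∈ (0,1)^N satisfy g(s,p*) = 0 and set u := α∘s + δ and Ξ := diag((1 − p*)/u). Then the spectral radius of ΞB is at most 1; consequently the spectral radius of diag(1 − p*)·Ξ·B equals the spectral radius of diag((1 − p*)∘(1 − p*)/u)·B and is at most 1 − min_i p*_i, which is strictly less than 1. -/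
noncomputable section

open Matrix

/-- Spectral radius of a real matrix: the maximum modulus of its complex eigenvalues. -/
def specRad {N : ℕ} (A : Matrix (Fin N) (Fin N) ℝ) : ℝ :=
  sSup ((fun μ : ℂ => ‖μ‖) '' spectrum ℂ (A.map Complex.ofReal))

lemma specRad_le_of_subinvariant {N : ℕ} (hN : 0 < N) (A : Matrix (Fin N) (Fin N) ℝ)
    (hA : ∀ i j, 0 ≤ A i j) (x : Fin N → ℝ) (hx : ∀ i, 0 < x i) (c : ℝ) (hc : 0 ≤ c)
    (hAx : ∀ i, A.mulVec x i ≤ c * x i) : specRad A ≤ c := by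
  apply Real.sSup_le _ hc
  rintro r ⟨μ, hμ, rfl⟩
  have hμ' : μ ∈ spectrum ℂ (Matrix.toLinAlgEquiv' (A.map Complex.ofReal)) := by
    rwa [AlgEquiv.spectrum_eq]
  have hev : Module.End.HasEigenvalue (Matrix.toLinAlgEquiv' (A.map Complex.ofReal)) μ :=
    Module.End.HasEigenvalue.of_mem_spectrum hμ'
  obtain ⟨v, hv⟩ := hev.exists_hasEigenvector
  have hvne : v ≠ 0 := hv.2
  have hveq : ∀ i, (A.map Complex.ofReal).mulVec v i = μ * v i := by
    intro i
    have h := hv.apply_eq_smul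
    rw [Matrix.toLinAlgEquiv'_apply] at h
    exact congrFun h i
  haveI : Nonempty (Fin N) := ⟨⟨0, hN⟩⟩
  obtain ⟨i, hi⟩ := Finite.exists_max (fun i => ‖v i‖ / x i)
  set r := ‖v i‖ / x i with hr
  have hratio : ∀ j, ‖v j‖ ≤ r * x j := by
    intro j
    have := hi j
    rw [div_le_iff₀ (hx j)] at this
    linarith [this]
  have hvi : 0 < ‖v i‖ := by
    rcases Function.ne_iff.mp hvne with ⟨j, hj⟩
    have h1 : 0 < ‖v j‖ := by
      simpa using norm_pos_iff.mpr hj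
    have h2 : ‖v j‖ / x j ≤ r := hi j
    have h3 : 0 < r := lt_of_lt_of_le (div_pos h1 (hx j)) h2
    have := mul_pos h3 (hx i)
    calc 0 < r * x i := this
      _ = ‖v i‖ := by rw [hr, div_mul_cancel₀ _ (hx i).ne']
  have key : ‖μ‖ * ‖v i‖ ≤ c * ‖v i‖ := by
    have h1 : ‖μ‖ * ‖v i‖
        = ‖(A.map Complex.ofReal).mulVec v i‖ := by
      rw [hveq i, norm_mul]
    rw [h1]
    have h2 : ‖(A.map Complex.ofReal).mulVec v i‖
        ≤ ∑ j, A i j * ‖v j‖ := by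
      simp only [Matrix.mulVec, dotProduct, Matrix.map_apply]
      refine le_trans (norm_sum_le _ _) (le_of_eq ?_)
      refine Finset.sum_congr rfl fun j _ => ?_
      rw [norm_mul, Complex.norm_real, Real.norm_eq_abs, abs_of_nonneg (hA i j)]
    refine h2.trans ?_
    have h3 : ∑ j, A i j * ‖v j‖ ≤ ∑ j, A i j * (r * x j) :=
      Finset.sum_le_sum fun j _ => mul_le_mul_of_nonneg_left (hratio j) (hA i j)
    refine h3.trans ?_
    have h4 : ∑ j, A i j * (r * x j) = r * A.mulVec x i := by
      simp only [Matrix.mulVec, dotProduct, Finset.mul_sum]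
      exact Finset.sum_congr rfl fun j _ => by ring
    rw [h4]
    have h5 : r * A.mulVec x i ≤ r * (c * x i) := by
      refine mul_le_mul_of_nonneg_left (hAx i) ?_
      exact div_nonneg (norm_nonneg _) (hx i).le
    refine h5.trans (le_of_eq ?_)
    have : r * x i = ‖v i‖ := by rw [hr, div_mul_cancel₀ _ (hx i).ne']
    rw [← this]; ring
  exact le_of_mul_le_mul_right key hvi

theorem statement2 {N : ℕ} (hN : 2 ≤ N)
    (B : Matrix (Fin N) (Fin N) ℝ) (hBnn : ∀ i j, 0 ≤ B i j) (hBirr : MatIrred B)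
    (lam δ α s : Fin N → ℝ)
    (hlam : ∀ i, 0 ≤ lam i) (hlam0 : lam ≠ 0)
    (hδ : ∀ i, 0 < δ i) (hα : ∀ i, 0 < α i) (hs : ∀ i, 0 ≤ s i)
    (pstar : Fin N → ℝ) (hpstar : ∀ i, 0 < pstar i ∧ pstar i < 1)
    (hpeq : gfun B lam δ α s pstar = 0)
    (u : Fin N → ℝ) (hu : u = fun i => α i * s i + δ i)
    (Ξ : Matrix (Fin N) (Fin N) ℝ)
    (hΞ : Ξ = Matrix.diagonal (fun i => (1 - pstar i) / u i)) :
    specRad (Ξ * B) ≤ 1 ∧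
    specRad (Matrix.diagonal (fun i => 1 - pstar i) * Ξ * B) =
      specRad (Matrix.diagonal (fun i => (1 - pstar i) * (1 - pstar i) / u i) * B) ∧
    specRad (Matrix.diagonal (fun i => 1 - pstar i) * Ξ * B) ≤ 1 - ⨅ i, pstar i ∧
    (1 - ⨅ i, pstar i) < 1 := by
  have hN0 : 0 < N := by omega
  haveI : Nonempty (Fin N) := ⟨⟨0, hN0⟩⟩
  have hupos : ∀ i, 0 < u i := by
    intro i; rw [hu]
    exact add_pos_of_nonneg_of_pos (mul_nonneg (hα i).le (hs i)) (hδ i)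
  have hpe : ∀ i, (1 - pstar i) * (lam i + B.mulVec pstar i) = u i * pstar i := by
    intro i
    have h := congrFun hpeq i
    simp only [gfun, Pi.zero_apply, sub_eq_zero] at h
    rw [h, hu]
  have hBp : ∀ i, 0 ≤ B.mulVec pstar i := by
    intro i
    simp only [Matrix.mulVec, dotProduct]
    exact Finset.sum_nonneg fun j _ => mul_nonneg (hBnn i j) (hpstar j).1.le
  have hb : ∀ i, (1 - pstar i) / u i * B.mulVec pstar i ≤ pstar i := by
    intro i
    have h1 : (1 - pstar i) * B.mulVec pstar i ≤ u i * pstar i := by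
      have h2 := hpe i
      have h3 : 0 ≤ (1 - pstar i) * lam i :=
        mul_nonneg (by linarith [(hpstar i).2]) (hlam i)
      nlinarith [h2, h3]
    rw [div_mul_eq_mul_div, div_le_iff₀ (hupos i)]
    calc (1 - pstar i) * B.mulVec pstar i ≤ u i * pstar i := h1
      _ = pstar i * u i := by ring
  have hbnn : ∀ i, 0 ≤ (1 - pstar i) / u i * B.mulVec pstar i := fun i =>
    mul_nonneg (div_nonneg (by linarith [(hpstar i).2]) (hupos i).le) (hBp i)
  have hinf_le : ∀ i, ⨅ j, pstar j ≤ pstar i := fun i =>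
    ciInf_le (Finite.bddBelow_range _) i
  have hinf_pos : 0 < ⨅ i, pstar i := by
    obtain ⟨i0, hi0⟩ := Finite.exists_min fun i => pstar i
    have : (⨅ i, pstar i) = pstar i0 :=
      le_antisymm (hinf_le i0) (le_ciInf fun j => hi0 j)
    rw [this]; exact (hpstar i0).1
  have hc1 : 0 ≤ 1 - ⨅ i, pstar i := by
    have := hinf_le ⟨0, hN0⟩
    linarith [(hpstar ⟨0, hN0⟩).2]
  have hM : Matrix.diagonal (fun i => 1 - pstar i) * Ξ * B =
      Matrix.diagonal (fun i => (1 - pstar i) * (1 - pstar i) / u i) * B := by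
    rw [hΞ, Matrix.diagonal_mul_diagonal]
    have h : (fun i => (1 - pstar i) * ((1 - pstar i) / u i))
        = fun i => (1 - pstar i) * (1 - pstar i) / u i :=
      funext fun i => (mul_div_assoc _ _ _).symm
    rw [h]
  refine ⟨?_, by rw [hM], ?_, by linarith⟩
  · refine specRad_le_of_subinvariant hN0 _ ?_ pstar (fun i => (hpstar i).1) 1 zero_le_one ?_
    · intro i j
      rw [hΞ, Matrix.diagonal_mul]
      exact mul_nonneg (div_nonneg (by linarith [(hpstar i).2]) (hupos i).le) (hBnn i j)
    · intro i
      rw [← Matrix.mulVec_mulVec, hΞ, Matrix.mulVec_diagonal, one_mul]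
      exact hb i
  · rw [hM]
    refine specRad_le_of_subinvariant hN0 _ ?_ pstar (fun i => (hpstar i).1)
      (1 - ⨅ i, pstar i) hc1 ?_
    · intro i j
      rw [Matrix.diagonal_mul]
      refine mul_nonneg (div_nonneg ?_ (hupos i).le) (hBnn i j)
      exact mul_nonneg (by linarith [(hpstar i).2]) (by linarith [(hpstar i).2])
    · intro i
      rw [← Matrix.mulVec_mulVec, Matrix.mulVec_diagonal]
      have heq : (1 - pstar i) * (1 - pstar i) / u i * B.mulVec pstar i
          = (1 - pstar i) * ((1 - pstar i) / u i * B.mulVec pstar i) := by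
        field_simp
      rw [heq]
      exact mul_le_mul (by linarith [hinf_le i]) (hb i) (hbnn i) hc1
end
end

section
/- Let p* ∈ (0,1)^N satisfy g(s,p*) = 0, set u := α∘s + δ and H(p)_i := (λ_i + (Bp)_i)/(λ_i + (Bp)_i + u_i). Then for all p, p′ ∈ ℝ^N with p ≥ p′ ≥ p* (entrywise) one has, entrywise, 0 ≤ H(p) − H(p′) ≤ diag((1 − p*)∘(1 − p*)/u) · B · (p − p′). -/
noncomputable section

open Matrix

theorem statement3 {N : ℕ} (hN : 2 ≤ N)
    (B : Matrix (Fin N) (Fin N) ℝ) (hBnn : ∀ i j, 0 ≤ B i j) (hBirr : MatIrred B)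
    (lam δ α s : Fin N → ℝ)
    (hlam : ∀ i, 0 ≤ lam i) (hlam0 : lam ≠ 0)
    (hδ : ∀ i, 0 < δ i) (hα : ∀ i, 0 < α i) (hs : ∀ i, 0 ≤ s i)
    (pstar : Fin N → ℝ) (hpstar : ∀ i, 0 < pstar i ∧ pstar i < 1)
    (hpeq : gfun B lam δ α s pstar = 0)
    (u : Fin N → ℝ) (hu : u = fun i => α i * s i + δ i)
    (H : (Fin N → ℝ) → (Fin N → ℝ))
    (hH : H = fun p i => (lam i + B.mulVec p i) / (lam i + B.mulVec p i + u i)) :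
    ∀ p p' : Fin N → ℝ, (∀ i, pstar i ≤ p' i) → (∀ i, p' i ≤ p i) →
      ∀ i, 0 ≤ H p i - H p' i ∧
        H p i - H p' i ≤
          ((Matrix.diagonal (fun j => (1 - pstar j) * (1 - pstar j) / u j)) * B).mulVec
            (fun j => p j - p' j) i := by

  intro p p' hp' hpp i
  subst hH hu
  -- basic positivity
  have hui : 0 < α i * s i + δ i := by
    have := mul_nonneg (hα i).le (hs i); linarith [hδ i]
  have hmono : ∀ q r : Fin N → ℝ, (∀ j, q j ≤ r j) → B.mulVec q i ≤ B.mulVec r i := by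
    intro q r h
    simp only [Matrix.mulVec, dotProduct]
    exact Finset.sum_le_sum fun j _ => mul_le_mul_of_nonneg_left (h j) (hBnn i j)
  set U := α i * s i + δ i with hUdef
  set A := lam i + B.mulVec pstar i with hAdef
  set A' := lam i + B.mulVec p' i with hA'def
  set A2 := lam i + B.mulVec p i with hA2def
  set P := 1 - pstar i with hPdef
  have hPpos : 0 < P := by have := (hpstar i).2; rw [hPdef]; linarith
  have hPA : P * (A + U) = U := by
    have h0 := congrFun hpeq i
    simp only [gfun, Pi.zero_apply] at h0
    rw [hPdef, hAdef, hUdef]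
    nlinarith [h0]
  have hAA' : A ≤ A' := by have := hmono pstar p' hp'; rw [hAdef, hA'def]; linarith
  have hA'A2 : A' ≤ A2 := by have := hmono p' p hpp; rw [hA'def, hA2def]; linarith
  have hApos : 0 < A + U := by nlinarith [hPA, hui, hPpos]
  have hA'pos : 0 < A' + U := by linarith
  have hA2pos : 0 < A2 + U := by linarith
  have hDelta : B.mulVec (fun j => p j - p' j) i = A2 - A' := by
    rw [hA2def, hA'def]
    simp only [Matrix.mulVec, dotProduct, mul_sub]
    rw [Finset.sum_sub_distrib]; ring
  have hD0 : 0 ≤ A2 - A' := by linarith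
  have hRHS : ((Matrix.diagonal (fun j => (1 - pstar j) * (1 - pstar j) / (α j * s j + δ j))) * B).mulVec
      (fun j => p j - p' j) i = P * P / U * (A2 - A') := by
    rw [← Matrix.mulVec_mulVec, Matrix.mulVec, diagonal_dotProduct, hDelta,
      hPdef, hUdef]
  constructor
  · rw [sub_nonneg, div_le_div_iff₀ hA'pos hA2pos]
    nlinarith
  · rw [hRHS]
    have hkey : A2 / (A2 + U) - A' / (A' + U) = U * (A2 - A') / ((A2 + U) * (A' + U)) := by
      field_simp; ring
    rw [hkey, div_mul_eq_mul_div, div_le_div_iff₀ (by positivity) hui]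
    have hsq : U * U ≤ P * P * ((A2 + U) * (A' + U)) := by
      have h1 : P * (A + U) ≤ P * (A' + U) := by nlinarith
      have h2 : P * (A + U) ≤ P * (A2 + U) := by nlinarith
      calc U * U = P * (A + U) * (P * (A + U)) := by rw [hPA]
        _ ≤ P * (A2 + U) * (P * (A' + U)) :=
            mul_le_mul h2 h1 (by positivity) (by positivity)
        _ = P * P * ((A2 + U) * (A' + U)) := by ring
    have hfin := mul_le_mul_of_nonneg_right hsq hD0
    linarith [hfin]
end
end

section
/- Let B ∈ ℝ^{N×N} be entrywise nonnegative and irreducible, let λ ∈ ℝ^N be entrywise nonnegative with λ ≠ 0, let p ∈ ℝ^N be entrywise positive, and let z ∈ ℝ^N satisfy (diag(z) − B)p = λ. Then diag(z) − B is invertible, its inverse is entrywise nonnegative, and every complex eigenvalue of diag(z) − B has positive real part (i.e., diag(z) − B is a nonsingular M-matrix). -/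
noncomputable section

open Matrix Finset

section Aux
variable {N : ℕ}

lemma entry_mul_nonneg {P Q : Matrix (Fin N) (Fin N) ℝ}
    (hP : ∀ i j, 0 ≤ P i j) (hQ : ∀ i j, 0 ≤ Q i j) : ∀ i j, 0 ≤ (P * Q) i j := by
  intro i j
  rw [Matrix.mul_apply]
  exact Finset.sum_nonneg fun l _ => mul_nonneg (hP i l) (hQ l j)

lemma entry_pow_nonneg {P : Matrix (Fin N) (Fin N) ℝ}
    (hP : ∀ i j, 0 ≤ P i j) : ∀ (k : ℕ) i j, 0 ≤ (P ^ k) i j := by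
  intro k
  induction k with
  | zero => intro i j; simp [Matrix.one_apply]; split <;> norm_num
  | succ n ih =>
    rw [pow_succ]
    exact entry_mul_nonneg ih hP

lemma entry_pow_le_pow {P Q : Matrix (Fin N) (Fin N) ℝ}
    (hP : ∀ i j, 0 ≤ P i j) (hPQ : ∀ i j, P i j ≤ Q i j) :
    ∀ (k : ℕ) i j, (P ^ k) i j ≤ (Q ^ k) i j := by
  intro k
  induction k with
  | zero => intro i j; simp
  | succ n ih =>
    intro i j
    rw [pow_succ, pow_succ, Matrix.mul_apply, Matrix.mul_apply]
    refine Finset.sum_le_sum fun l _ => ?_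
    exact mul_le_mul (ih i l) (hPQ l j) (hP l j) (le_trans (entry_pow_nonneg hP n i l) (ih i l))

lemma rowsum_pow_le {P : Matrix (Fin N) (Fin N) ℝ} {θ : ℝ}
    (hP : ∀ i j, 0 ≤ P i j) (hθ : 0 ≤ θ) (hrow : ∀ i, ∑ j, P i j ≤ θ) :
    ∀ (n : ℕ) i, ∑ j, (P ^ n) i j ≤ θ ^ n := by
  intro n
  induction n with
  | zero => intro i; simp [Matrix.one_apply]
  | succ n ih =>
    intro i
    have : ∑ j, (P ^ (n+1)) i j = ∑ l, P i l * (∑ j, (P ^ n) l j) := by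
      rw [pow_succ']
      simp only [Matrix.mul_apply, Finset.mul_sum]
      rw [Finset.sum_comm]
    rw [this, pow_succ']
    calc ∑ l, P i l * (∑ j, (P ^ n) l j) ≤ ∑ l, P i l * θ ^ n := by
          refine Finset.sum_le_sum fun l _ => mul_le_mul_of_nonneg_left (ih l) (hP i l)
      _ = (∑ l, P i l) * θ ^ n := by rw [Finset.sum_mul]
      _ ≤ θ * θ ^ n := mul_le_mul_of_nonneg_right (hrow i) (pow_nonneg hθ n)

lemma one_sub_unit_inv_nonneg (hN : 0 < N) {X : Matrix (Fin N) (Fin N) ℝ} {θ : ℝ}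
    (hX : ∀ i j, 0 ≤ X i j) (hθ0 : 0 ≤ θ) (hθ1 : θ < 1) (hrow : ∀ i, ∑ j, X i j ≤ θ) :
    IsUnit (1 - X) ∧ ∀ i j, 0 ≤ (1 - X)⁻¹ i j := by
  have hdet : (1 - X).det ≠ 0 := by
    intro hd
    obtain ⟨v, hv0, hv⟩ := (Matrix.exists_mulVec_eq_zero_iff).2 hd
    have hvx : ∀ i, v i = (X.mulVec v) i := by
      intro i
      have := congrFun hv i
      simp [Matrix.sub_mulVec, Matrix.one_mulVec, sub_eq_zero] at this
      exact this
    obtain ⟨i, -, hi⟩ := Finset.exists_max_image Finset.univ (fun j => |v j|) ⟨⟨0, hN⟩, Finset.mem_univ _⟩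
    have hvi : 0 < |v i| := by
      obtain ⟨j, hj⟩ := Function.ne_iff.1 hv0
      exact lt_of_lt_of_le (abs_pos.2 hj) (hi j (Finset.mem_univ j))
    have : |v i| ≤ θ * |v i| := by
      calc |v i| = |(X.mulVec v) i| := by rw [← hvx i]
        _ = |∑ j, X i j * v j| := by simp [Matrix.mulVec, dotProduct]
        _ ≤ ∑ j, |X i j * v j| := Finset.abs_sum_le_sum_abs _ _
        _ = ∑ j, X i j * |v j| := by
            refine Finset.sum_congr rfl fun j _ => ?_
            rw [abs_mul, abs_of_nonneg (hX i j)]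
        _ ≤ ∑ j, X i j * |v i| := by
            refine Finset.sum_le_sum fun j _ => mul_le_mul_of_nonneg_left (hi j (Finset.mem_univ j)) (hX i j)
        _ = (∑ j, X i j) * |v i| := by rw [Finset.sum_mul]
        _ ≤ θ * |v i| := mul_le_mul_of_nonneg_right (hrow i) (le_of_lt hvi)
    nlinarith
  have hunit : IsUnit (1 - X) := (Matrix.isUnit_iff_isUnit_det _).2 (isUnit_iff_ne_zero.2 hdet)
  refine ⟨hunit, ?_⟩
  intro i j
  set Y := (1 - X)⁻¹ with hY
  set K := ∑ l, |Y i l| with hK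
  have hdet' : IsUnit (1 - X).det := isUnit_iff_ne_zero.2 hdet
  have key : ∀ n : ℕ, -(K * θ ^ n) ≤ Y i j := by
    intro n
    set g : Matrix (Fin N) (Fin N) ℝ := ∑ k ∈ Finset.range n, X ^ k with hg
    have hgeom : (1 - X) * g = 1 - X ^ n := by
      have h := mul_geom_sum X n
      have : (1 - X) * g = -((X - 1) * g) := by noncomm_ring
      rw [this, h]; noncomm_ring
    have hgY : g = Y - Y * (X ^ n) := by
      have := congrArg (fun M => Y * M) hgeom
      rw [← Matrix.mul_assoc, Matrix.nonsing_inv_mul _ hdet', Matrix.one_mul] at this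
      rw [this, Matrix.mul_sub, Matrix.mul_one]
    have hgij : 0 ≤ g i j := by
      rw [hg]
      rw [Matrix.sum_apply]
      exact Finset.sum_nonneg fun k _ => entry_pow_nonneg hX k i j
    have hYX : -(K * θ ^ n) ≤ (Y * (X ^ n)) i j := by
      have hentry : ∀ l, (X ^ n) l j ≤ θ ^ n := by
        intro l
        calc (X ^ n) l j ≤ ∑ j', (X ^ n) l j' :=
              Finset.single_le_sum (fun j' _ => entry_pow_nonneg hX n l j') (Finset.mem_univ j)
          _ ≤ θ ^ n := rowsum_pow_le hX hθ0 hrow n l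
      rw [Matrix.mul_apply]
      calc -(K * θ ^ n) = ∑ l, -(|Y i l| * θ ^ n) := by
            simp [hK, Finset.sum_mul, Finset.sum_neg_distrib]
        _ ≤ ∑ l, Y i l * (X ^ n) l j := by
            refine Finset.sum_le_sum fun l _ => ?_
            have h1 : |Y i l * (X ^ n) l j| ≤ |Y i l| * θ ^ n := by
              rw [abs_mul]
              refine mul_le_mul_of_nonneg_left ?_ (abs_nonneg _)
              rw [abs_of_nonneg (entry_pow_nonneg hX n l j)]
              exact hentry l
            have := neg_abs_le (Y i l * (X ^ n) l j)
            linarith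
    have : Y i j = g i j + (Y * (X ^ n)) i j := by
      have := congrFun (congrFun hgY i) j
      simp [Matrix.sub_apply] at this
      linarith
    linarith
  have htend : Filter.Tendsto (fun n : ℕ => -(K * θ ^ n)) Filter.atTop (nhds 0) := by
    have h1 : Filter.Tendsto (fun n : ℕ => θ ^ n) Filter.atTop (nhds 0) :=
      tendsto_pow_atTop_nhds_zero_of_lt_one hθ0 hθ1
    have := (h1.const_mul K).neg
    simpa using this
  exact le_of_tendsto htend (Filter.Eventually.of_forall key)

lemma rowsum_succ {C : Matrix (Fin N) (Fin N) ℝ} (n : ℕ) (i : Fin N) :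
    ∑ j, (C ^ (n+1)) i j = ∑ l, (C ^ n) i l * (∑ j, C l j) := by
  rw [pow_succ]
  simp only [Matrix.mul_apply, Finset.mul_sum]
  rw [Finset.sum_comm]

lemma exists_pow_rowsum_lt {C : Matrix (Fin N) (Fin N) ℝ} {u : Fin N → ℝ}
    (hC : ∀ i j, 0 ≤ C i j)
    (hCpow : ∀ k i j, 0 ≤ (C ^ k) i j)
    (hCirr : ∀ i j, ∃ k, 1 ≤ k ∧ 0 < (C ^ k) i j)
    (hu : ∀ i, 0 ≤ u i) (hu0 : ∃ j, 0 < u j)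
    (hrow : ∀ i, ∑ j, C i j = 1 - u i) :
    ∃ m, ∀ i, ∑ j, (C ^ m) i j < 1 := by
  set s : ℕ → Fin N → ℝ := fun n i => ∑ j, (C ^ n) i j with hs
  have hs1 : ∀ n i, s n i ≤ 1 := by
    intro n i
    have := rowsum_pow_le hC (zero_le_one) (fun i => by rw [hrow i]; linarith [hu i]) n i
    simpa using this
  have hanti : ∀ i, Antitone (fun n => s n i) := by
    intro i
    apply antitone_nat_of_succ_le
    intro n
    revert i
    induction n with
    | zero =>
      intro i
      simp only [hs, zero_add, pow_one, pow_zero]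
      rw [hrow i]
      have h1 : ∑ j, (1 : Matrix (Fin N) (Fin N) ℝ) i j = 1 := by simp [Matrix.one_apply]
      rw [h1]
      linarith [hu i]
    | succ n ih =>
      intro i
      have h1 : s (n+2) i = ∑ l, C i l * s (n+1) l := by
        simp only [hs]
        rw [pow_succ']
        simp only [Matrix.mul_apply, Finset.mul_sum]
        rw [Finset.sum_comm]
      have h2 : s (n+1) i = ∑ l, C i l * s n l := by
        simp only [hs]
        rw [pow_succ']
        simp only [Matrix.mul_apply, Finset.mul_sum]
        rw [Finset.sum_comm]
      rw [h1, h2]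
      exact Finset.sum_le_sum fun l _ => mul_le_mul_of_nonneg_left (ih l) (hC i l)
  have hex : ∀ i, ∃ n, s n i < 1 := by
    intro i
    obtain ⟨j, hj⟩ := hu0
    obtain ⟨k, hk1, hkpos⟩ := hCirr i j
    refine ⟨k + 1, ?_⟩
    have h1 : s (k+1) i = ∑ l, (C ^ k) i l * (1 - u l) := by
      simp only [hs]
      rw [rowsum_succ]
      exact Finset.sum_congr rfl fun l _ => by rw [hrow l]
    have h2 : ∑ l, (C ^ k) i l * (1 - u l) = s k i - ∑ l, (C ^ k) i l * u l := by
      simp only [hs, mul_sub, mul_one, Finset.sum_sub_distrib]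
    have h3 : (C ^ k) i j * u j ≤ ∑ l, (C ^ k) i l * u l :=
      Finset.single_le_sum (fun l _ => mul_nonneg (hCpow k i l) (hu l)) (Finset.mem_univ j)
    have h4 : 0 < (C ^ k) i j * u j := mul_pos hkpos hj
    have h5 := hs1 k i
    rw [h1, h2]
    linarith
  choose nn hnn using hex
  refine ⟨Finset.univ.sup nn, fun i => ?_⟩
  have : s (Finset.univ.sup nn) i ≤ s (nn i) i :=
    hanti i (Finset.le_sup (Finset.mem_univ i))
  exact lt_of_le_of_lt this (hnn i)

end Aux

theorem statement4 {N : ℕ} (hN : 2 ≤ N)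
    (B : Matrix (Fin N) (Fin N) ℝ) (hBnn : ∀ i j, 0 ≤ B i j) (hBirr : MatIrred B)
    (lam : Fin N → ℝ) (hlam : ∀ i, 0 ≤ lam i) (hlam0 : lam ≠ 0)
    (p : Fin N → ℝ) (hp : ∀ i, 0 < p i)
    (z : Fin N → ℝ) (hz : (Matrix.diagonal z - B).mulVec p = lam) :
    IsUnit (Matrix.diagonal z - B) ∧
    (∀ i j, 0 ≤ (Matrix.diagonal z - B)⁻¹ i j) ∧
    (∀ μ ∈ spectrum ℂ ((Matrix.diagonal z - B).map Complex.ofReal), 0 < μ.re) := by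
  have hN0 : 0 < N := by omega
  haveI hne : Nonempty (Fin N) := ⟨⟨0, hN0⟩⟩
  set A := Matrix.diagonal z - B with hA
  -- the balance equations
  have hz' : ∀ i, z i * p i = (∑ j, B i j * p j) + lam i := by
    intro i
    have h := congrFun hz i
    rw [Matrix.sub_mulVec] at h
    simp only [Pi.sub_apply, Matrix.mulVec_diagonal] at h
    have hB : (B.mulVec p) i = ∑ j, B i j * p j := by
      simp [Matrix.mulVec, dotProduct]
    rw [hB] at h
    linarith
  -- each row of B has a positive entry
  have hrowB : ∀ i, 0 < ∑ j, B i j * p j := by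
    intro i
    have hex : ∃ j, 0 < B i j := by
      by_contra hcon
      push_neg at hcon
      have hzero : ∀ j, B i j = 0 := fun j => le_antisymm (hcon j) (hBnn i j)
      obtain ⟨k, hk1, hkpos⟩ := hBirr i i
      obtain ⟨k', rfl⟩ : ∃ k', k = k' + 1 := ⟨k - 1, by omega⟩
      have : (B ^ (k' + 1)) i i = 0 := by
        rw [pow_succ']
        rw [Matrix.mul_apply]
        exact Finset.sum_eq_zero fun l _ => by rw [hzero l, zero_mul]
      linarith
    obtain ⟨j, hj⟩ := hex
    exact Finset.sum_pos' (fun l _ => mul_nonneg (hBnn i l) (le_of_lt (hp l)))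
      ⟨j, Finset.mem_univ j, mul_pos hj (hp j)⟩
  set w : Fin N → ℝ := fun i => z i * p i with hw
  have hwpos : ∀ i, 0 < w i := by
    intro i
    simp only [hw]
    rw [hz' i]
    have := hrowB i
    have := hlam i
    linarith
  have hzpos : ∀ i, 0 < z i := by
    intro i
    rcases mul_pos_iff.mp (hwpos i) with ⟨h1, _⟩ | ⟨_, h2⟩
    · exact h1
    · exact absurd (hp i) (not_lt.2 (le_of_lt h2))
  set C : Matrix (Fin N) (Fin N) ℝ := Matrix.of (fun i j => B i j * p j / w i) with hC
  have hCapp : ∀ i j, C i j = B i j * p j / w i := fun i j => rfl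
  have hCnn : ∀ i j, 0 ≤ C i j := fun i j =>
    div_nonneg (mul_nonneg (hBnn i j) (le_of_lt (hp j))) (le_of_lt (hwpos i))
  set u : Fin N → ℝ := fun i => lam i / w i with hu
  have hunn : ∀ i, 0 ≤ u i := fun i => div_nonneg (hlam i) (le_of_lt (hwpos i))
  have hu0 : ∃ j, 0 < u j := by
    obtain ⟨j, hj⟩ := Function.ne_iff.1 hlam0
    exact ⟨j, div_pos (lt_of_le_of_ne (hlam j) (Ne.symm hj)) (hwpos j)⟩
  have hCrow : ∀ i, ∑ j, C i j = 1 - u i := by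
    intro i
    simp only [hCapp]
    rw [← Finset.sum_div]
    have hsum : ∑ j, B i j * p j = w i - lam i := by
      simp only [hw]; rw [hz' i]; ring
    rw [hsum, sub_div, div_self (ne_of_gt (hwpos i))]
  -- irreducibility transfers to C
  have hCirr : ∀ i j, ∃ k, 1 ≤ k ∧ 0 < (C ^ k) i j := by
    set c : ℝ := Finset.univ.inf' Finset.univ_nonempty
      (fun q : Fin N × Fin N => p q.2 / w q.1) with hc
    have hcpos : 0 < c := by
      rw [hc, Finset.lt_inf'_iff]
      exact fun q _ => div_pos (hp q.2) (hwpos q.1)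
    have hcle : ∀ i j, c ≤ p j / w i := by
      intro i j
      exact Finset.inf'_le _ (Finset.mem_univ (i, j))
    have hle : ∀ i j, (c • B) i j ≤ C i j := by
      intro i j
      simp only [Matrix.smul_apply, smul_eq_mul, hCapp]
      rw [mul_comm c (B i j), mul_div_assoc]
      exact mul_le_mul_of_nonneg_left (hcle i j) (hBnn i j)
    have hcBnn : ∀ i j, 0 ≤ (c • B) i j := fun i j =>
      mul_nonneg (le_of_lt hcpos) (hBnn i j)
    intro i j
    obtain ⟨k, hk1, hkpos⟩ := hBirr i j
    refine ⟨k, hk1, ?_⟩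
    have h1 : ((c • B) ^ k) i j ≤ (C ^ k) i j := entry_pow_le_pow hcBnn hle k i j
    have h2 : ((c • B) ^ k) i j = c ^ k * (B ^ k) i j := by
      rw [smul_pow]
      simp
    have h3 : 0 < c ^ k * (B ^ k) i j := mul_pos (pow_pos hcpos k) hkpos
    linarith
  -- find m with row sums of C^m < 1
  obtain ⟨m, hm⟩ := exists_pow_rowsum_lt hCnn (entry_pow_nonneg hCnn) hCirr hunn hu0 hCrow
  set X := C ^ m with hX
  set θ : ℝ := Finset.univ.sup' Finset.univ_nonempty (fun i => ∑ j, X i j) with hθ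
  have hθ1 : θ < 1 := by
    rw [hθ, Finset.sup'_lt_iff]
    exact fun i _ => hm i
  have hθ0 : 0 ≤ θ := by
    refine le_trans ?_ (Finset.le_sup' (fun i => ∑ j, X i j) (Finset.mem_univ (⟨0, hN0⟩ : Fin N)))
    exact Finset.sum_nonneg fun j _ => entry_pow_nonneg hCnn m _ j
  have hθrow : ∀ i, ∑ j, X i j ≤ θ :=
    fun i => Finset.le_sup' (fun i => ∑ j, X i j) (Finset.mem_univ i)
  obtain ⟨hXunit, hXinv⟩ := one_sub_unit_inv_nonneg hN0 (entry_pow_nonneg hCnn m) hθ0 hθ1 hθrow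
  have hXdet : IsUnit (1 - X).det := (Matrix.isUnit_iff_isUnit_det _).1 hXunit
  -- geometric sum
  set g : Matrix (Fin N) (Fin N) ℝ := ∑ k ∈ Finset.range m, C ^ k with hg
  have hgeom : (1 - C) * g = 1 - X := by
    have h := mul_geom_sum C m
    have h2 : (1 - C) * g = -((C - 1) * g) := by noncomm_ring
    rw [h2, h, hX]; noncomm_ring
  have hgnn : ∀ i j, 0 ≤ g i j := by
    intro i j
    rw [hg, Matrix.sum_apply]
    exact Finset.sum_nonneg fun k _ => entry_pow_nonneg hCnn k i j
  have hCdet : (1 - C).det ≠ 0 := by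
    intro hd
    have := congrArg Matrix.det hgeom
    rw [Matrix.det_mul, hd, zero_mul] at this
    exact (isUnit_iff_ne_zero.1 hXdet) this.symm
  have hCunit : IsUnit (1 - C) := (Matrix.isUnit_iff_isUnit_det _).2 (isUnit_iff_ne_zero.2 hCdet)
  have hCinv : (1 - C)⁻¹ = g * (1 - X)⁻¹ := by
    apply Matrix.inv_eq_right_inv
    rw [← Matrix.mul_assoc, hgeom, Matrix.mul_nonsing_inv _ hXdet]
  have hCinvnn : ∀ i j, 0 ≤ (1 - C)⁻¹ i j := by
    rw [hCinv]
    exact entry_mul_nonneg hgnn hXinv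
  -- relation A * D = E * (1 - C)
  have hAD : A * Matrix.diagonal p = Matrix.diagonal w * (1 - C) := by
    have hEC : Matrix.diagonal w * C = B * Matrix.diagonal p := by
      ext i j
      rw [Matrix.diagonal_mul, Matrix.mul_diagonal, hCapp]
      rw [mul_div_assoc']
      exact mul_div_cancel_left₀ _ (ne_of_gt (hwpos i))
    rw [Matrix.mul_sub, Matrix.mul_one, hEC, hA, Matrix.sub_mul, Matrix.diagonal_mul_diagonal]
  have hdetp : (Matrix.diagonal p).det ≠ 0 := by
    rw [Matrix.det_diagonal]
    exact ne_of_gt (Finset.prod_pos fun i _ => hp i)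
  have hdetw : (Matrix.diagonal w).det ≠ 0 := by
    rw [Matrix.det_diagonal]
    exact ne_of_gt (Finset.prod_pos fun i _ => hwpos i)
  have hAdet : A.det ≠ 0 := by
    have h := congrArg Matrix.det hAD
    rw [Matrix.det_mul, Matrix.det_mul] at h
    have h2 : A.det * (Matrix.diagonal p).det ≠ 0 := by
      rw [h]; exact mul_ne_zero hdetw hCdet
    exact left_ne_zero_of_mul h2
  have hAunit : IsUnit A := (Matrix.isUnit_iff_isUnit_det _).2 (isUnit_iff_ne_zero.2 hAdet)
  have hAinv : A⁻¹ = Matrix.diagonal p * ((1 - C)⁻¹ * (Matrix.diagonal w)⁻¹) := by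
    apply Matrix.inv_eq_right_inv
    rw [← Matrix.mul_assoc, ← Matrix.mul_assoc, hAD,
      Matrix.mul_assoc (Matrix.diagonal w),
      Matrix.mul_nonsing_inv _ (isUnit_iff_ne_zero.2 hCdet), Matrix.mul_one,
      Matrix.mul_nonsing_inv _ (isUnit_iff_ne_zero.2 hdetw)]
  have hdiagpnn : ∀ i j, 0 ≤ (Matrix.diagonal p) i j := by
    intro i j
    rcases eq_or_ne i j with rfl | hij
    · rw [Matrix.diagonal_apply_eq]; exact le_of_lt (hp i)
    · rw [Matrix.diagonal_apply_ne _ hij]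
  have hwinveq : (Matrix.diagonal w)⁻¹ = Matrix.diagonal (fun i => (w i)⁻¹) := by
    apply Matrix.inv_eq_right_inv
    rw [Matrix.diagonal_mul_diagonal]
    ext i j
    rcases eq_or_ne i j with rfl | hij
    · rw [Matrix.diagonal_apply_eq, Matrix.one_apply_eq]
      exact mul_inv_cancel₀ (ne_of_gt (hwpos i))
    · rw [Matrix.diagonal_apply_ne _ hij, Matrix.one_apply_ne hij]
  have hwinvnn : ∀ i j, 0 ≤ (Matrix.diagonal w)⁻¹ i j := by
    intro i j
    rw [hwinveq]
    rcases eq_or_ne i j with rfl | hij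
    · rw [Matrix.diagonal_apply_eq]
      exact inv_nonneg.2 (le_of_lt (hwpos i))
    · rw [Matrix.diagonal_apply_ne _ hij]
  have hAinvnn : ∀ i j, 0 ≤ A⁻¹ i j := by
    rw [hAinv]
    exact entry_mul_nonneg hdiagpnn (entry_mul_nonneg hCinvnn hwinvnn)
  refine ⟨hAunit, hAinvnn, ?_⟩
  -- spectrum
  intro μ hμ
  set A' := A.map Complex.ofReal with hA'
  have hA'det : A'.det ≠ 0 := by
    have h : A'.det = (A.det : ℂ) := by
      rw [hA', show A.map Complex.ofReal = Complex.ofRealHom.mapMatrix A from rfl,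
        ← RingHom.map_det]
      rfl
    rw [h]
    exact_mod_cast hAdet
  have hμ0 : μ ≠ 0 := by
    rintro rfl
    rw [spectrum.zero_mem_iff] at hμ
    exact hμ ((Matrix.isUnit_iff_isUnit_det _).2 (isUnit_iff_ne_zero.2 hA'det))
  have hnu : ¬IsUnit (algebraMap ℂ (Matrix (Fin N) (Fin N) ℂ) μ - A') := spectrum.mem_iff.1 hμ
  have hdet0 : (algebraMap ℂ (Matrix (Fin N) (Fin N) ℂ) μ - A').det = 0 := by
    by_contra h
    exact hnu ((Matrix.isUnit_iff_isUnit_det _).2 (isUnit_iff_ne_zero.2 h))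
  obtain ⟨v, hv0, hv⟩ := (Matrix.exists_mulVec_eq_zero_iff).2 hdet0
  have hkey : ∀ i, ((z i : ℂ) - μ) * v i = ∑ j, (B i j : ℂ) * v j := by
    intro i
    have h := congrFun hv i
    rw [Matrix.sub_mulVec] at h
    simp only [Pi.sub_apply, Pi.zero_apply] at h
    have h1 : ((algebraMap ℂ (Matrix (Fin N) (Fin N) ℂ) μ).mulVec v) i = μ * v i := by
      rw [Algebra.algebraMap_eq_smul_one, Matrix.smul_mulVec, Matrix.one_mulVec]
      simp
    have h2 : (A'.mulVec v) i = (z i : ℂ) * v i - ∑ j, (B i j : ℂ) * v j := by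
      have hAij : ∀ j, A' i j = ((Matrix.diagonal z) i j : ℂ) - (B i j : ℂ) := by
        intro j
        rw [hA', Matrix.map_apply, hA, Matrix.sub_apply, Complex.ofReal_sub]
      simp only [Matrix.mulVec, dotProduct, hAij, sub_mul]
      rw [Finset.sum_sub_distrib]
      congr 1
      rw [Finset.sum_eq_single i]
      · rw [Matrix.diagonal_apply_eq]
      · intro j _ hj
        rw [Matrix.diagonal_apply_ne' _ hj]
        simp
      · intro h
        exact absurd (Finset.mem_univ i) h
    rw [h1, h2] at h
    linear_combination -h
  obtain ⟨i, -, hi⟩ := Finset.exists_max_image Finset.univ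
    (fun j => ‖v j‖ / p j) ⟨⟨0, hN0⟩, Finset.mem_univ _⟩
  set r := ‖v i‖ / p i with hr'
  have hr : 0 < r := by
    obtain ⟨j, hj⟩ := Function.ne_iff.1 hv0
    exact lt_of_lt_of_le (div_pos (norm_pos_iff.2 hj) (hp j)) (hi j (Finset.mem_univ j))
  have haj : ∀ j, ‖v j‖ ≤ r * p j := by
    intro j
    have := hi j (Finset.mem_univ j)
    rw [div_le_iff₀ (hp j)] at this
    linarith [this]
  have hai : ‖v i‖ = r * p i := by
    rw [hr', div_mul_cancel₀ _ (ne_of_gt (hp i))]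
  have hineq : ‖(z i : ℂ) - μ‖ * (r * p i) ≤ r * (z i * p i) := by
    calc ‖(z i : ℂ) - μ‖ * (r * p i)
        = ‖(z i : ℂ) - μ‖ * ‖v i‖ := by rw [hai]
      _ = ‖((z i : ℂ) - μ) * v i‖ := (norm_mul _ _).symm
      _ = ‖∑ j, (B i j : ℂ) * v j‖ := by rw [hkey i]
      _ ≤ ∑ j, ‖(B i j : ℂ) * v j‖ := norm_sum_le _ _
      _ = ∑ j, B i j * ‖v j‖ := by
          refine Finset.sum_congr rfl fun j _ => ?_
          rw [norm_mul, Complex.norm_real, Real.norm_eq_abs, abs_of_nonneg (hBnn i j)]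
      _ ≤ ∑ j, B i j * (r * p j) := by
          exact Finset.sum_le_sum fun j _ => mul_le_mul_of_nonneg_left (haj j) (hBnn i j)
      _ = r * ∑ j, B i j * p j := by
          rw [Finset.mul_sum]
          exact Finset.sum_congr rfl fun j _ => by ring
      _ ≤ r * (z i * p i) := by
          have h1 := hz' i
          have h2 := hlam i
          exact mul_le_mul_of_nonneg_left (by linarith) (le_of_lt hr)
  have habs : ‖(z i : ℂ) - μ‖ ≤ z i := by
    have hpos : 0 < r * p i := mul_pos hr (hp i)
    have h : ‖(z i : ℂ) - μ‖ * (r * p i) ≤ z i * (r * p i) := by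
      calc ‖(z i : ℂ) - μ‖ * (r * p i) ≤ r * (z i * p i) := hineq
        _ = z i * (r * p i) := by ring
    exact le_of_mul_le_mul_right h hpos
  by_contra hre
  push_neg at hre
  have h1 : z i ≤ ((z i : ℂ) - μ).re := by
    simp only [Complex.sub_re, Complex.ofReal_re]
    linarith
  have h2 := Complex.re_le_norm ((z i : ℂ) - μ)
  have h3 : ‖(z i : ℂ) - μ‖ = z i := le_antisymm habs (le_trans h1 h2)
  have h4 : ((z i : ℂ) - μ).re = z i := le_antisymm (le_trans h2 (le_of_eq h3)) h1
  have h5 : ((z i : ℂ) - μ).im = 0 := by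
    have h6 := Complex.sq_norm ((z i : ℂ) - μ)
    rw [h3, Complex.normSq_apply, h4] at h6
    nlinarith
  have hμim : μ.im = 0 := by
    simp only [Complex.sub_im, Complex.ofReal_im] at h5
    linarith
  have hμre : μ.re = 0 := by
    simp only [Complex.sub_re, Complex.ofReal_re] at h4
    linarith
  exact hμ0 (Complex.ext hμre hμim)
end
end

section
/- Let B ∈ ℝ^{N×N} be entrywise nonnegative. Then the set Ω := { z ∈ ℝ^N : z ≥ 0 and every complex eigenvalue of diag(z) − B has positive real part } is a convex subset of ℝ^N. -/
noncomputable section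

open Matrix

lemma eig_of_mem_spectrum {n : ℕ} (M : Matrix (Fin n) (Fin n) ℂ) (μ : ℂ)
    (h : μ ∈ spectrum ℂ M) : ∃ v, v ≠ 0 ∧ M.mulVec v = μ • v := by
  rw [spectrum.mem_iff] at h
  have hdet : (algebraMap ℂ (Matrix (Fin n) (Fin n) ℂ) μ - M).det = 0 := by
    by_contra hd
    exact h ((Matrix.isUnit_iff_isUnit_det _).2 (isUnit_iff_ne_zero.2 hd))
  obtain ⟨v, hv, hmv⟩ := (Matrix.exists_mulVec_eq_zero_iff).2 hdet
  refine ⟨v, hv, ?_⟩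
  have := hmv
  rw [sub_mulVec] at this
  have h2 : (algebraMap ℂ (Matrix (Fin n) (Fin n) ℂ) μ).mulVec v = μ • v := by
    ext i
    simp [Matrix.algebraMap_eq_diagonal, mulVec_diagonal, Pi.algebraMap_apply, Algebra.algebraMap_self_apply]
  rw [h2] at this
  linear_combination (norm := module) -this

lemma mem_spectrum_of_eig {n : ℕ} (M : Matrix (Fin n) (Fin n) ℂ) (μ : ℂ)
    (v : Fin n → ℂ) (hv : v ≠ 0) (h : M.mulVec v = μ • v) : μ ∈ spectrum ℂ M := by
  rw [spectrum.mem_iff]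
  intro hu
  have hdet := (Matrix.isUnit_iff_isUnit_det _).1 hu
  have : (algebraMap ℂ (Matrix (Fin n) (Fin n) ℂ) μ - M).det = 0 := by
    rw [← Matrix.exists_mulVec_eq_zero_iff]
    refine ⟨v, hv, ?_⟩
    rw [sub_mulVec, h]
    have h2 : (algebraMap ℂ (Matrix (Fin n) (Fin n) ℂ) μ).mulVec v = μ • v := by
      ext i
      simp [Matrix.algebraMap_eq_diagonal, mulVec_diagonal, Pi.algebraMap_apply, Algebra.algebraMap_self_apply]
    rw [h2]; simp
  exact (isUnit_iff_ne_zero.1 hdet) this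

lemma gersh {N : ℕ} (hN : 0 < N) (B : Matrix (Fin N) (Fin N) ℝ) (hB : ∀ i j, 0 ≤ B i j)
    (z x : Fin N → ℝ) (hx : ∀ i, 0 < x i)
    (hrow : ∀ i, ∑ j, B i j * x j < z i * x i) :
    ∀ μ ∈ spectrum ℂ ((Matrix.diagonal z - B).map Complex.ofReal), 0 < μ.re := by
  intro μ hμ
  obtain ⟨v, hv, hmv⟩ := eig_of_mem_spectrum _ _ hμ
  obtain ⟨i, -, hi⟩ := Finset.exists_max_image Finset.univ
    (fun j => ‖v j‖ / x j) ⟨⟨0, hN⟩, Finset.mem_univ _⟩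
  set c : ℝ := ‖v i‖ / x i with hc
  have hcpos : 0 < c := by
    obtain ⟨k, hk⟩ : ∃ k, v k ≠ 0 := by
      by_contra h; push_neg at h; exact hv (funext h)
    have h1 : 0 < ‖v k‖ / x k :=
      div_pos (by simpa using hk) (hx k)
    exact lt_of_lt_of_le h1 (hi k (Finset.mem_univ k))
  have hvi : ‖v i‖ = c * x i := by
    rw [hc, div_mul_cancel₀ _ (ne_of_gt (hx i))]
  have hbound : ∀ j, ‖v j‖ ≤ c * x j := by
    intro j
    have := hi j (Finset.mem_univ j)
    calc ‖v j‖ = (‖v j‖ / x j) * x j := by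
          rw [div_mul_cancel₀ _ (ne_of_gt (hx j))]
    _ ≤ c * x j := mul_le_mul_of_nonneg_right this (le_of_lt (hx j))
  -- row equation
  have hrowi : ((z i : ℂ) - μ) * v i = ∑ j, (B i j : ℂ) * v j := by
    have h1 := congrFun hmv i
    have h2 : (((Matrix.diagonal z - B).map Complex.ofReal).mulVec v) i
        = (z i : ℂ) * v i - ∑ j, (B i j : ℂ) * v j := by
      simp [mulVec, dotProduct, Matrix.map_apply, Matrix.sub_apply, Matrix.diagonal_apply,
        sub_mul, Finset.sum_sub_distrib, apply_ite Complex.ofReal,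
        Finset.sum_ite_eq, ite_mul]
    rw [h2] at h1
    have : μ • v i = μ * v i := rfl
    rw [Pi.smul_apply] at h1
    rw [this] at h1
    ring_nf
    ring_nf at h1
    linear_combination h1
  have hzi : 0 < z i := by
    have h0 : (0:ℝ) ≤ ∑ j, B i j * x j :=
      Finset.sum_nonneg fun j _ => mul_nonneg (hB i j) (le_of_lt (hx j))
    nlinarith [hrow i, hx i]
  have habs : ‖(z i : ℂ) - μ‖ * ‖v i‖ < z i * (c * x i) := by
    rw [← norm_mul, hrowi]
    calc ‖∑ j, (B i j : ℂ) * v j‖ ≤ ∑ j, ‖(B i j : ℂ) * v j‖ :=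
          norm_sum_le _ _
    _ = ∑ j, B i j * ‖v j‖ := by
          refine Finset.sum_congr rfl fun j _ => ?_
          rw [norm_mul, Complex.norm_real, Real.norm_eq_abs, abs_of_nonneg (hB i j)]
    _ ≤ ∑ j, B i j * (c * x j) :=
          Finset.sum_le_sum fun j _ => mul_le_mul_of_nonneg_left (hbound j) (hB i j)
    _ = c * ∑ j, B i j * x j := by rw [Finset.mul_sum]; exact Finset.sum_congr rfl fun j _ => by ring
    _ < c * (z i * x i) := by exact mul_lt_mul_of_pos_left (hrow i) hcpos
    _ = z i * (c * x i) := by ring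
  have habs2 : ‖(z i : ℂ) - μ‖ < z i := by
    rw [hvi] at habs
    have hpos : 0 < c * x i := mul_pos hcpos (hx i)
    exact lt_of_mul_lt_mul_right habs (le_of_lt hpos)
  have hsq : (z i - μ.re)^2 + μ.im^2 < (z i)^2 := by
    have h1 : ‖(z i:ℂ) - μ‖ ^ 2 < (z i) ^ 2 := by
      nlinarith [norm_nonneg ((z i:ℂ) - μ)]
    rw [Complex.sq_norm, Complex.normSq_apply] at h1
    simpa [Complex.sub_re, Complex.sub_im, pow_two] using h1
  nlinarith [sq_nonneg μ.re, sq_nonneg μ.im]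

lemma map_shift {N : ℕ} (A : Matrix (Fin N) (Fin N) ℝ) (t : ℝ) :
    (A + t • 1).map Complex.ofReal = A.map Complex.ofReal + (t : ℂ) • 1 := by
  ext i j
  by_cases h : i = j <;>
    simp [Matrix.map_apply, Matrix.add_apply, Matrix.smul_apply, Matrix.one_apply, h]

lemma stepA {N : ℕ} (B : Matrix (Fin N) (Fin N) ℝ) (z : Fin N → ℝ)
    (hspec : ∀ μ ∈ spectrum ℂ ((Matrix.diagonal z - B).map Complex.ofReal), 0 < μ.re)
    (t : ℝ) (ht : 0 ≤ t) : IsUnit (Matrix.diagonal z - B + t • 1).det := by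
  rw [isUnit_iff_ne_zero]
  intro hdet
  have hdetC : ((Matrix.diagonal z - B + t • 1).map Complex.ofReal).det = 0 := by
    have h1 := (Complex.ofRealHom.map_det (Matrix.diagonal z - B + t • 1)).symm
    rw [RingHom.mapMatrix_apply] at h1
    rw [show ((Matrix.diagonal z - B + t • 1).map Complex.ofReal)
        = ((Matrix.diagonal z - B + t • 1).map ⇑Complex.ofRealHom) from rfl, h1, hdet]
    simp
  obtain ⟨v, hv, hmv⟩ := Matrix.exists_mulVec_eq_zero_iff.2 hdetC
  have hev : ((Matrix.diagonal z - B).map Complex.ofReal).mulVec v = (-t : ℂ) • v := by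
    rw [map_shift] at hmv
    rw [add_mulVec, smul_mulVec, one_mulVec] at hmv
    have : ((Matrix.diagonal z - B).map Complex.ofReal).mulVec v = -((t:ℂ) • v) := by
      linear_combination (norm := module) hmv
    rw [this]; module
  have := hspec (-t : ℂ) (mem_spectrum_of_eig _ _ v hv hev)
  simp at this
  linarith

-- max principle base case
lemma base_nonneg {N : ℕ} (hN : 0 < N) (B : Matrix (Fin N) (Fin N) ℝ) (z : Fin N → ℝ)
    (hB : ∀ i j, 0 ≤ B i j) (t : ℝ) (hrow : ∀ i, ∑ j, B i j < z i + t)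
    (hunit : IsUnit (Matrix.diagonal z - B + t • 1).det) :
    ∀ i j, 0 ≤ (Matrix.diagonal z - B + t • 1)⁻¹ i j := by
  intro i₀ j
  set A := Matrix.diagonal z - B + t • 1 with hA
  set x : Fin N → ℝ := fun k => A⁻¹ k j with hx
  have hAx : ∀ k, ∑ l, A k l * x l = (1 : Matrix (Fin N) (Fin N) ℝ) k j := by
    intro k
    have := congrFun (congrFun (Matrix.mul_nonsing_inv A hunit) k) j
    rw [Matrix.mul_apply] at this
    exact this
  have hAentry : ∀ k l, A k l = (if k = l then z k + t else 0) - B k l := by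
    intro k l
    by_cases h : k = l <;>
      simp [hA, Matrix.add_apply, Matrix.sub_apply, Matrix.diagonal_apply,
        Matrix.smul_apply, Matrix.one_apply, h] <;> ring
  obtain ⟨i, -, hi⟩ := Finset.exists_min_image Finset.univ x ⟨⟨0, hN⟩, Finset.mem_univ _⟩
  have hxi : 0 ≤ x i := by
    by_contra hneg
    push_neg at hneg
    have h1 : ∑ l, A i l * x l = (z i + t) * x i - ∑ l, B i l * x l := by
      have : ∀ l, A i l * x l = (if i = l then (z i + t) * x l else 0) - B i l * x l := by
        intro l; rw [hAentry]; by_cases h : i = l <;> simp [h] <;> ring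
      rw [Finset.sum_congr rfl fun l _ => this l, Finset.sum_sub_distrib,
        Finset.sum_ite_eq Finset.univ i (fun l => (z i + t) * x l)]
      simp
    have h2 : ∑ l, B i l * x l ≥ (∑ l, B i l) * x i := by
      rw [Finset.sum_mul]
      exact Finset.sum_le_sum fun l _ =>
        mul_le_mul_of_nonneg_left (hi l (Finset.mem_univ l)) (hB i l)
    have h3 : (0:ℝ) ≤ (1 : Matrix (Fin N) (Fin N) ℝ) i j := by
      by_cases h : i = j <;> simp [Matrix.one_apply, h]
    rw [← hAx i] at h3
    rw [h1] at h3
    nlinarith [hrow i]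
  exact le_trans hxi (hi i₀ (Finset.mem_univ i₀))

-- resolvent descent step
lemma step_down {N : ℕ} (hN : 0 < N) (A₁ A₂ : Matrix (Fin N) (Fin N) ℝ) (δ : ℝ)
    (hδ : 0 ≤ δ) (hA2 : A₂ = A₁ - δ • 1)
    (hu1 : IsUnit A₁.det) (hu2 : IsUnit A₂.det)
    (hP : ∀ i j, 0 ≤ A₁⁻¹ i j)
    (hsmall : ∀ j, δ * ∑ k, A₁⁻¹ k j < 1) :
    ∀ i j, 0 ≤ A₂⁻¹ i j := by
  have hres : A₂⁻¹ = A₁⁻¹ + δ • (A₂⁻¹ * A₁⁻¹) := by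
    have e1 : A₂⁻¹ * (A₁ - A₂) * A₁⁻¹ = δ • (A₂⁻¹ * A₁⁻¹) := by
      rw [hA2]
      simp only [sub_sub_cancel]
      rw [Matrix.mul_smul, Matrix.mul_one, Matrix.smul_mul]
    have e2 : A₂⁻¹ * (A₁ - A₂) * A₁⁻¹ = A₂⁻¹ - A₁⁻¹ := by
      rw [Matrix.mul_sub, Matrix.sub_mul, Matrix.mul_assoc,
        Matrix.mul_nonsing_inv _ hu1, Matrix.mul_one,
        Matrix.nonsing_inv_mul _ hu2, Matrix.one_mul]
    rw [e2] at e1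
    rw [← e1]; abel
  obtain ⟨p, -, hp⟩ := Finset.exists_min_image (Finset.univ : Finset (Fin N × Fin N))
    (fun q => A₂⁻¹ q.1 q.2) ⟨(⟨0, hN⟩, ⟨0, hN⟩), Finset.mem_univ _⟩
  set m := A₂⁻¹ p.1 p.2 with hm
  have hmle : ∀ i j, m ≤ A₂⁻¹ i j := fun i j => hp (i, j) (Finset.mem_univ _)
  have hM : 0 ≤ m := by
    by_contra hneg
    push_neg at hneg
    have hentry : m = A₁⁻¹ p.1 p.2 + δ * ∑ k, A₂⁻¹ p.1 k * A₁⁻¹ k p.2 := by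
      conv_lhs => rw [hm, hres]
      simp [Matrix.add_apply, Matrix.smul_apply, Matrix.mul_apply]
    have hsumge : ∑ k, A₂⁻¹ p.1 k * A₁⁻¹ k p.2 ≥ ∑ k, m * A₁⁻¹ k p.2 :=
      Finset.sum_le_sum fun k _ => mul_le_mul_of_nonneg_right (hmle p.1 k) (hP k p.2)
    have hS : 0 ≤ ∑ k, A₁⁻¹ k p.2 :=
      Finset.sum_nonneg fun k _ => hP k p.2
    have hkey : m ≥ δ * (m * ∑ k, A₁⁻¹ k p.2) := by
      calc m = A₁⁻¹ p.1 p.2 + δ * ∑ k, A₂⁻¹ p.1 k * A₁⁻¹ k p.2 := hentry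
      _ ≥ 0 + δ * ∑ k, m * A₁⁻¹ k p.2 := by
          refine add_le_add (hP p.1 p.2) (mul_le_mul_of_nonneg_left hsumge hδ)
      _ = δ * (m * ∑ k, A₁⁻¹ k p.2) := by
          simp only [zero_add, Finset.mul_sum, mul_assoc]
    nlinarith [hsmall p.2]
  intro i j
  exact le_trans hM (hmle i j)

set_option maxHeartbeats 2000000 in
lemma inv_nonneg_of_spec {N : ℕ} (hN : 0 < N) (B : Matrix (Fin N) (Fin N) ℝ)
    (z : Fin N → ℝ) (hB : ∀ i j, 0 ≤ B i j) (hz : ∀ i, 0 ≤ z i)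
    (hspec : ∀ μ ∈ spectrum ℂ ((Matrix.diagonal z - B).map Complex.ofReal), 0 < μ.re) :
    ∀ i j, 0 ≤ (Matrix.diagonal z - B)⁻¹ i j := by
  have hne : (Finset.univ : Finset (Fin N)).Nonempty := ⟨⟨0, hN⟩, Finset.mem_univ _⟩
  set c : ℝ := 1 + Finset.univ.sup' hne (fun i => ∑ j, B i j) with hc
  have hcrow : ∀ i, ∑ j, B i j < z i + c := by
    intro i
    have h1 : ∑ j, B i j ≤ Finset.univ.sup' hne (fun i => ∑ j, B i j) :=
      Finset.le_sup' (fun i => ∑ j, B i j) (Finset.mem_univ i)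
    have := hz i
    rw [hc]; linarith
  have hc0 : 0 < c := by
    have h1 : (0:ℝ) ≤ ∑ j, B ⟨0, hN⟩ j := Finset.sum_nonneg fun j _ => hB _ j
    have h2 := Finset.le_sup' (fun i => ∑ j, B i j) (Finset.mem_univ (⟨0, hN⟩ : Fin N))
    rw [hc]; linarith
  set G : ℝ → Matrix (Fin N) (Fin N) ℝ := fun u => Matrix.diagonal z - B + (c - u) • 1
    with hG
  have hGdet : ∀ u ∈ Set.Icc (0:ℝ) c, IsUnit (G u).det := fun u hu =>
    stepA B z hspec (c - u) (by linarith [hu.2])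
  set s : Set ℝ := {u | ∀ i j, 0 ≤ (G u)⁻¹ i j} with hs
  have hIcc : Set.Icc (0:ℝ) c ⊆ s := by
    apply IsClosed.Icc_subset_of_forall_exists_gt
    · -- closedness
      have hGcont : Continuous G := by
        apply Continuous.add continuous_const
        exact (continuous_const.sub continuous_id).smul continuous_const
      have hFcont : ContinuousOn (fun u => (G u)⁻¹) (Set.Icc (0:ℝ) c) := by
        have heq : ∀ u ∈ Set.Icc (0:ℝ) c,
            ((G u).det)⁻¹ • (G u).adjugate = (G u)⁻¹ := by
          intro u hu
          rw [Matrix.inv_def, Ring.inverse_eq_inv']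
        refine ContinuousOn.congr ?_ fun u hu => (heq u hu).symm
        refine ContinuousOn.fun_smul ?_ hGcont.matrix_adjugate.continuousOn
        exact (hGcont.matrix_det.continuousOn).inv₀ fun u hu =>
          isUnit_iff_ne_zero.1 (hGdet u hu)
      have hK : IsClosed {M : Matrix (Fin N) (Fin N) ℝ | ∀ i j, 0 ≤ M i j} := by
        have heq2 : {M : Matrix (Fin N) (Fin N) ℝ | ∀ i j, 0 ≤ M i j}
            = ⋂ (i : Fin N) (j : Fin N), {M : Matrix (Fin N) (Fin N) ℝ | 0 ≤ M i j} := by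
          ext M; simp [Set.mem_iInter]
        rw [heq2]
        refine isClosed_iInter fun i => isClosed_iInter fun j => ?_
        exact IsClosed.preimage (continuous_id.matrix_elem i j) isClosed_Ici
      have hset : s ∩ Set.Icc (0:ℝ) c
          = Set.Icc (0:ℝ) c ∩ (fun u => (G u)⁻¹) ⁻¹' {M | ∀ i j, 0 ≤ M i j} := by
        ext u; constructor
        · rintro ⟨h1, h2⟩; exact ⟨h2, h1⟩
        · rintro ⟨h1, h2⟩; exact ⟨h2, h1⟩
      rw [hset]
      exact hFcont.preimage_isClosed_of_isClosed isClosed_Icc hK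
    · -- 0 ∈ s
      show ∀ i j, 0 ≤ (G 0)⁻¹ i j
      have h0 : G 0 = Matrix.diagonal z - B + c • 1 := by rw [hG]; simp
      rw [h0]
      exact base_nonneg hN B z hB c hcrow
        (by have := hGdet 0 ⟨le_refl _, le_of_lt hc0⟩; rwa [h0] at this)
    · -- inductive step
      rintro u ⟨hus, hu0, huc⟩ y hy
      have husP : ∀ i j, 0 ≤ (G u)⁻¹ i j := hus
      set C : ℝ := ∑ j, ∑ k, (G u)⁻¹ k j with hCdef
      have hC0 : 0 ≤ C :=
        Finset.sum_nonneg fun j _ => Finset.sum_nonneg fun k _ => husP k j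
      have hSj : ∀ j, ∑ k, (G u)⁻¹ k j ≤ C := fun j =>
        Finset.single_le_sum (f := fun j => ∑ k, (G u)⁻¹ k j)
          (fun j _ => Finset.sum_nonneg fun k _ => husP k j) (Finset.mem_univ j)
      set ε : ℝ := min (min (y - u) (c - u)) (1 / (2 * (C + 1))) with hεdef
      have hεpos : 0 < ε := by
        refine lt_min (lt_min ?_ ?_) (one_div_pos.2 (by linarith))
        · exact sub_pos.2 hy
        · exact sub_pos.2 huc
      have hεyu : ε ≤ y - u := le_trans (min_le_left _ _) (min_le_left _ _)
      have hεcu : ε ≤ c - u := le_trans (min_le_left _ _) (min_le_right _ _)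
      have hεC : ε ≤ 1 / (2 * (C + 1)) := min_le_right _ _
      refine ⟨u + ε, ?_, ⟨by linarith, by linarith⟩⟩
      have hA2eq : G (u + ε) = G u - ε • 1 := by
        rw [hG]
        simp only
        rw [show c - (u + ε) = (c - u) - ε by ring, sub_smul]
        abel
      have hu1 : IsUnit (G u).det := hGdet u ⟨hu0, le_of_lt huc⟩
      have hu2 : IsUnit (G (u + ε)).det := hGdet (u + ε) ⟨by linarith [hu0], by linarith⟩
      have hsmall : ∀ j, ε * ∑ k, (G u)⁻¹ k j < 1 := by
        intro j
        have hSj0 : (0:ℝ) ≤ ∑ k, (G u)⁻¹ k j := Finset.sum_nonneg fun k _ => husP k j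
        have h1 : ε * ∑ k, (G u)⁻¹ k j ≤ (1 / (2 * (C + 1))) * C := by
          calc ε * ∑ k, (G u)⁻¹ k j ≤ ε * C :=
                mul_le_mul_of_nonneg_left (hSj j) (le_of_lt hεpos)
          _ ≤ (1 / (2 * (C + 1))) * C := mul_le_mul_of_nonneg_right hεC hC0
        have h2 : (1 / (2 * (C + 1))) * C < 1 := by
          rw [div_mul_eq_mul_div, one_mul, div_lt_one (by linarith)]
          linarith
        linarith
      exact step_down hN (G u) (G (u + ε)) ε (le_of_lt hεpos) hA2eq hu1 hu2 husP hsmall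
  have hcs : c ∈ s := hIcc ⟨le_of_lt hc0, le_refl c⟩
  have hGc : G c = Matrix.diagonal z - B := by rw [hG]; simp
  rw [← hGc]
  exact hcs

lemma exists_pos_vec {N : ℕ} (hN : 0 < N) (B : Matrix (Fin N) (Fin N) ℝ)
    (z : Fin N → ℝ) (hB : ∀ i j, 0 ≤ B i j) (hz : ∀ i, 0 ≤ z i)
    (hspec : ∀ μ ∈ spectrum ℂ ((Matrix.diagonal z - B).map Complex.ofReal), 0 < μ.re) :
    ∃ x : Fin N → ℝ, (∀ i, 0 < x i) ∧ ∀ i, ∑ j, B i j * x j < z i * x i := by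
  have hinv := inv_nonneg_of_spec hN B z hB hz hspec
  have hunit : IsUnit (Matrix.diagonal z - B).det := by
    have h := stepA B z hspec 0 le_rfl
    rwa [zero_smul, add_zero] at h
  set A := Matrix.diagonal z - B with hA
  set x : Fin N → ℝ := fun k => ∑ j, A⁻¹ k j with hx
  have hx0 : ∀ k, 0 ≤ x k := fun k => Finset.sum_nonneg fun j _ => hinv k j
  have hAx : ∀ i, ∑ l, A i l * x l = 1 := by
    intro i
    calc ∑ l, A i l * x l = ∑ l, ∑ j, A i l * A⁻¹ l j := by
          exact Finset.sum_congr rfl fun l _ => by rw [hx, Finset.mul_sum]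
    _ = ∑ j, ∑ l, A i l * A⁻¹ l j := Finset.sum_comm
    _ = ∑ j, (A * A⁻¹) i j := by
          exact Finset.sum_congr rfl fun j _ => (Matrix.mul_apply).symm
    _ = ∑ j, (1 : Matrix (Fin N) (Fin N) ℝ) i j := by
          rw [Matrix.mul_nonsing_inv A hunit]
    _ = 1 := by simp [Matrix.one_apply]
  have hrow : ∀ i, z i * x i - ∑ l, B i l * x l = 1 := by
    intro i
    have h1 : ∑ l, A i l * x l = z i * x i - ∑ l, B i l * x l := by
      have he : ∀ l, A i l * x l = (if i = l then z i * x l else 0) - B i l * x l := by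
        intro l
        rw [hA]
        by_cases h : i = l <;>
          simp [Matrix.sub_apply, Matrix.diagonal_apply, h] <;> ring
      rw [Finset.sum_congr rfl fun l _ => he l, Finset.sum_sub_distrib,
        Finset.sum_ite_eq Finset.univ i (fun l => z i * x l)]
      simp
    rw [← h1, hAx i]
  refine ⟨x, fun i => ?_, fun i => ?_⟩
  · have h1 := hrow i
    have h2 : (0:ℝ) ≤ ∑ l, B i l * x l :=
      Finset.sum_nonneg fun l _ => mul_nonneg (hB i l) (hx0 l)
    by_contra hc
    push_neg at hc
    nlinarith [hz i, hx0 i]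
  · have h1 := hrow i
    linarith

-- Hölder inequality for two-term exponents
lemma holder_sum {N : ℕ} (a b : ℝ) (ha : 0 < a) (hb : 0 < b) (hab : a + b = 1)
    (c d : Fin N → ℝ) (hc : ∀ j, 0 ≤ c j) (hd : ∀ j, 0 ≤ d j) :
    ∑ j, (c j) ^ a * (d j) ^ b ≤ (∑ j, c j) ^ a * (∑ j, d j) ^ b := by
  rcases eq_or_lt_of_le (Finset.sum_nonneg fun j _ => hc j) with hS | hS
  · have hall : ∀ j ∈ Finset.univ, c j = 0 :=
      (Finset.sum_eq_zero_iff_of_nonneg fun j _ => hc j).1 hS.symm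
    have : ∀ j ∈ Finset.univ, (c j) ^ a * (d j) ^ b = 0 := by
      intro j hj; rw [hall j hj, Real.zero_rpow (ne_of_gt ha), zero_mul]
    rw [Finset.sum_congr rfl this, Finset.sum_const_zero, ← hS,
      Real.zero_rpow (ne_of_gt ha), zero_mul]
  rcases eq_or_lt_of_le (Finset.sum_nonneg fun j _ => hd j) with hT | hT
  · have hall : ∀ j ∈ Finset.univ, d j = 0 :=
      (Finset.sum_eq_zero_iff_of_nonneg fun j _ => hd j).1 hT.symm
    have : ∀ j ∈ Finset.univ, (c j) ^ a * (d j) ^ b = 0 := by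
      intro j hj; rw [hall j hj, Real.zero_rpow (ne_of_gt hb), mul_zero]
    rw [Finset.sum_congr rfl this, Finset.sum_const_zero, ← hT,
      Real.zero_rpow (ne_of_gt hb), mul_zero]
  set S := ∑ j, c j with hSdef
  set T := ∑ j, d j with hTdef
  have hSa : (0:ℝ) < S ^ a := Real.rpow_pos_of_pos hS a
  have hTb : (0:ℝ) < T ^ b := Real.rpow_pos_of_pos hT b
  have key : ∀ j, (c j) ^ a * (d j) ^ b
      ≤ S ^ a * T ^ b * (a * (c j / S) + b * (d j / T)) := by
    intro j
    have hgm := Real.geom_mean_le_arith_mean2_weighted (le_of_lt ha) (le_of_lt hb)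
      (div_nonneg (hc j) (le_of_lt hS)) (div_nonneg (hd j) (le_of_lt hT)) hab
    have he : (c j / S) ^ a * (d j / T) ^ b = (c j) ^ a * (d j) ^ b / (S ^ a * T ^ b) := by
      rw [Real.div_rpow (hc j) (le_of_lt hS), Real.div_rpow (hd j) (le_of_lt hT)]
      ring
    rw [he] at hgm
    calc (c j) ^ a * (d j) ^ b
        = S ^ a * T ^ b * ((c j) ^ a * (d j) ^ b / (S ^ a * T ^ b)) := by
          field_simp
    _ ≤ S ^ a * T ^ b * (a * (c j / S) + b * (d j / T)) :=
          mul_le_mul_of_nonneg_left hgm (le_of_lt (mul_pos hSa hTb))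
  calc ∑ j, (c j) ^ a * (d j) ^ b
      ≤ ∑ j, S ^ a * T ^ b * (a * (c j / S) + b * (d j / T)) :=
        Finset.sum_le_sum fun j _ => key j
  _ = S ^ a * T ^ b * ∑ j, (a * (c j / S) + b * (d j / T)) := by rw [← Finset.mul_sum]
  _ = S ^ a * T ^ b := by
      rw [Finset.sum_add_distrib]
      have e1 : ∑ j, a * (c j / S) = a := by
        rw [← Finset.mul_sum, ← Finset.sum_div, ← hSdef, div_self (ne_of_gt hS), mul_one]
      have e2 : ∑ j, b * (d j / T) = b := by
        rw [← Finset.mul_sum, ← Finset.sum_div, ← hTdef, div_self (ne_of_gt hT), mul_one]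
      rw [e1, e2, hab, mul_one]

theorem statement6 {N : ℕ} (hN : 2 ≤ N)
    (B : Matrix (Fin N) (Fin N) ℝ) (hBnn : ∀ i j, 0 ≤ B i j) :
    Convex ℝ {z : Fin N → ℝ | (∀ i, 0 ≤ z i) ∧
      ∀ μ ∈ spectrum ℂ ((Matrix.diagonal z - B).map Complex.ofReal), 0 < μ.re} := by
  have hN0 : 0 < N := lt_of_lt_of_le two_pos hN
  intro z₁ hz₁ z₂ hz₂ a b ha hb hab
  obtain ⟨hz₁nn, hz₁spec⟩ := hz₁
  obtain ⟨hz₂nn, hz₂spec⟩ := hz₂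
  rcases eq_or_lt_of_le ha with rfl | ha'
  · have hb1 : b = 1 := by linarith
    have : (0:ℝ) • z₁ + b • z₂ = z₂ := by rw [hb1, zero_smul, one_smul, zero_add]
    rw [this]
    exact ⟨hz₂nn, hz₂spec⟩
  rcases eq_or_lt_of_le hb with rfl | hb'
  · have ha1 : a = 1 := by linarith
    have : a • z₁ + (0:ℝ) • z₂ = z₁ := by rw [ha1, zero_smul, one_smul, add_zero]
    rw [this]
    exact ⟨hz₁nn, hz₁spec⟩
  constructor
  · intro i
    simp only [Pi.add_apply, Pi.smul_apply, smul_eq_mul]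
    exact add_nonneg (mul_nonneg ha (hz₁nn i)) (mul_nonneg hb (hz₂nn i))
  obtain ⟨x₁, hx₁pos, hx₁row⟩ := exists_pos_vec hN0 B z₁ hBnn hz₁nn hz₁spec
  obtain ⟨x₂, hx₂pos, hx₂row⟩ := exists_pos_vec hN0 B z₂ hBnn hz₂nn hz₂spec
  set x : Fin N → ℝ := fun j => (x₁ j) ^ a * (x₂ j) ^ b with hxdef
  have hxpos : ∀ j, 0 < x j := fun j =>
    mul_pos (Real.rpow_pos_of_pos (hx₁pos j) a) (Real.rpow_pos_of_pos (hx₂pos j) b)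
  refine gersh hN0 B hBnn _ x hxpos ?_
  intro i
  have hz₁i : 0 < z₁ i := by
    have h0 : (0:ℝ) ≤ ∑ j, B i j * x₁ j :=
      Finset.sum_nonneg fun j _ => mul_nonneg (hBnn i j) (le_of_lt (hx₁pos j))
    nlinarith [hx₁row i, hx₁pos i]
  have hz₂i : 0 < z₂ i := by
    have h0 : (0:ℝ) ≤ ∑ j, B i j * x₂ j :=
      Finset.sum_nonneg fun j _ => mul_nonneg (hBnn i j) (le_of_lt (hx₂pos j))
    nlinarith [hx₂row i, hx₂pos i]
  have step1 : ∑ j, B i j * x j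
      = ∑ j, (B i j * x₁ j) ^ a * (B i j * x₂ j) ^ b := by
    refine Finset.sum_congr rfl fun j _ => ?_
    rw [Real.mul_rpow (hBnn i j) (le_of_lt (hx₁pos j)),
      Real.mul_rpow (hBnn i j) (le_of_lt (hx₂pos j)), hxdef]
    have hBab : (B i j) ^ a * (B i j) ^ b = B i j := by
      rw [← Real.rpow_add' (hBnn i j) (by rw [hab]; norm_num), hab, Real.rpow_one]
    calc B i j * ((x₁ j) ^ a * (x₂ j) ^ b)
        = ((B i j) ^ a * (B i j) ^ b) * ((x₁ j) ^ a * (x₂ j) ^ b) := by rw [hBab]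
    _ = (B i j) ^ a * (x₁ j) ^ a * ((B i j) ^ b * (x₂ j) ^ b) := by ring
  have step2 : ∑ j, (B i j * x₁ j) ^ a * (B i j * x₂ j) ^ b
      ≤ (∑ j, B i j * x₁ j) ^ a * (∑ j, B i j * x₂ j) ^ b :=
    holder_sum a b ha' hb' hab _ _
      (fun j => mul_nonneg (hBnn i j) (le_of_lt (hx₁pos j)))
      (fun j => mul_nonneg (hBnn i j) (le_of_lt (hx₂pos j)))
  have step3 : (∑ j, B i j * x₁ j) ^ a * (∑ j, B i j * x₂ j) ^ b
      < (z₁ i * x₁ i) ^ a * (z₂ i * x₂ i) ^ b := by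
    have hu0 : (0:ℝ) ≤ ∑ j, B i j * x₁ j :=
      Finset.sum_nonneg fun j _ => mul_nonneg (hBnn i j) (le_of_lt (hx₁pos j))
    have hv0 : (0:ℝ) ≤ ∑ j, B i j * x₂ j :=
      Finset.sum_nonneg fun j _ => mul_nonneg (hBnn i j) (le_of_lt (hx₂pos j))
    have hV : (0:ℝ) < z₂ i * x₂ i := mul_pos hz₂i (hx₂pos i)
    calc (∑ j, B i j * x₁ j) ^ a * (∑ j, B i j * x₂ j) ^ b
        ≤ (∑ j, B i j * x₁ j) ^ a * (z₂ i * x₂ i) ^ b := by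
          refine mul_le_mul_of_nonneg_left ?_ (Real.rpow_nonneg hu0 a)
          exact Real.rpow_le_rpow hv0 (le_of_lt (hx₂row i)) (le_of_lt hb')
    _ < (z₁ i * x₁ i) ^ a * (z₂ i * x₂ i) ^ b := by
          refine mul_lt_mul_of_pos_right ?_ (Real.rpow_pos_of_pos hV b)
          exact Real.rpow_lt_rpow hu0 (hx₁row i) ha'
  have step4 : (z₁ i * x₁ i) ^ a * (z₂ i * x₂ i) ^ b
      ≤ (a • z₁ + b • z₂) i * x i := by
    have e : (z₁ i * x₁ i) ^ a * (z₂ i * x₂ i) ^ b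
        = ((z₁ i) ^ a * (z₂ i) ^ b) * x i := by
      rw [Real.mul_rpow (le_of_lt hz₁i) (le_of_lt (hx₁pos i)),
        Real.mul_rpow (le_of_lt hz₂i) (le_of_lt (hx₂pos i)), hxdef]
      ring
    rw [e]
    have hgm := Real.geom_mean_le_arith_mean2_weighted (le_of_lt ha') (le_of_lt hb')
      (le_of_lt hz₁i) (le_of_lt hz₂i) hab
    have : (a • z₁ + b • z₂) i = a * z₁ i + b * z₂ i := by
      simp [Pi.add_apply, Pi.smul_apply, smul_eq_mul]
    rw [this]
    exact mul_le_mul_of_nonneg_right hgm (le_of_lt (hxpos i))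
  calc ∑ j, B i j * x j
      = ∑ j, (B i j * x₁ j) ^ a * (B i j * x₂ j) ^ b := step1
  _ ≤ (∑ j, B i j * x₁ j) ^ a * (∑ j, B i j * x₂ j) ^ b := step2
  _ < (z₁ i * x₁ i) ^ a * (z₂ i * x₂ i) ^ b := step3
  _ ≤ (a • z₁ + b • z₂) i * x i := step4
end
end

section
/- Let (s_R, p_R, z_R) be a feasible point of problem (P_R1) that attains its optimal value. Define p̃ := (diag(z_R) − B)^{-1}λ and s̃ := s_R + diag(α)^{-1}·B·(p_R − p̃). Then (s̃, p̃) is feasible for problem (P), i.e., s̃ ≥ 0, p̃ ≥ 0 and g(s̃, p̃) = 0, and moreover f(s_R, p_R) ≤ f* ≤ f(s̃, p̃). -/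
noncomputable section

open Matrix

/-- The objective `f(s,p) = w(s) + cᵀp`. -/
def fobj {N : ℕ} (w : (Fin N → ℝ) → ℝ) (c : Fin N → ℝ) (s p : Fin N → ℝ) : ℝ :=
  w s + ∑ i, c i * p i

/-- Feasibility for the original problem (P). -/
def FeasP {N : ℕ} (B : Matrix (Fin N) (Fin N) ℝ) (lam δ α : Fin N → ℝ)
    (s p : Fin N → ℝ) : Prop :=
  (∀ i, 0 ≤ s i) ∧ (∀ i, 0 ≤ p i) ∧ gfun B lam δ α s p = 0

/-- The set `Ω` of nonnegative `z` such that `diag(z) - B` has all eigenvalues with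
positive real part. -/
def OmegaSet {N : ℕ} (B : Matrix (Fin N) (Fin N) ℝ) : Set (Fin N → ℝ) :=
  {z | (∀ i, 0 ≤ z i) ∧
    ∀ μ ∈ spectrum ℂ ((Matrix.diagonal z - B).map Complex.ofReal), 0 < μ.re}

/-- Feasibility for the convex relaxation (P_R1). -/
def FeasPR1 {N : ℕ} (B : Matrix (Fin N) (Fin N) ℝ) (lam δ α : Fin N → ℝ)
    (s p z : Fin N → ℝ) : Prop :=
  (∀ i, 0 ≤ s i) ∧ (∀ i, p i ≤ 1) ∧ z ∈ OmegaSet B ∧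
  (∀ i, (Matrix.diagonal z - B)⁻¹.mulVec lam i ≤ p i) ∧
  (∀ i, z i = α i * s i + δ i + lam i + B.mulVec p i)

namespace Helper7

abbrev Mat (N : ℕ) := Matrix (Fin N) (Fin N) ℝ

variable {N : ℕ}

lemma nn_mul {X Y : Mat N} (hX : ∀ i j, 0 ≤ X i j) (hY : ∀ i j, 0 ≤ Y i j) :
    ∀ i j, 0 ≤ (X * Y) i j := by
  intro i j
  rw [Matrix.mul_apply]
  exact Finset.sum_nonneg fun l _ => mul_nonneg (hX i l) (hY l j)

lemma nn_pow {X : Mat N} (hX : ∀ i j, 0 ≤ X i j) : ∀ k i j, 0 ≤ (X ^ k) i j := by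
  intro k
  induction k with
  | zero =>
    intro i j
    rw [pow_zero]
    by_cases h : i = j <;> simp [Matrix.one_apply, h]
  | succ k ih =>
    rw [pow_succ]
    exact nn_mul ih hX

lemma pow_mono {X Y : Mat N} (hX : ∀ i j, 0 ≤ X i j) (hXY : ∀ i j, X i j ≤ Y i j) :
    ∀ k i j, (X ^ k) i j ≤ (Y ^ k) i j := by
  intro k
  induction k with
  | zero => intro i j; rw [pow_zero, pow_zero]
  | succ k ih =>
    intro i j
    rw [pow_succ, pow_succ, Matrix.mul_apply, Matrix.mul_apply]
    apply Finset.sum_le_sum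
    intro l _
    exact mul_le_mul (ih i l) (hXY l j) (hX l j) (le_trans (nn_pow hX k i l) (ih i l))

lemma pow_entry_le (hNpos : 0 < N) {X : Mat N} {a : ℝ} (ha : 0 ≤ a)
    (hX : ∀ i j, 0 ≤ X i j) (hXa : ∀ i j, (N : ℝ) * X i j ≤ a) :
    ∀ n, 1 ≤ n → ∀ i j, (X ^ n) i j ≤ a ^ n / N := by
  have hNR : (0:ℝ) < N := by exact_mod_cast hNpos
  have hentry : ∀ i j, X i j ≤ a / N := by
    intro i j
    rw [le_div_iff₀ hNR]
    linarith [hXa i j]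
  intro n hn
  induction n with
  | zero => omega
  | succ n ih =>
    intro i j
    rcases Nat.eq_or_lt_of_le hn with h1 | h1
    · rw [← h1, pow_one]; simpa using hentry i j
    · have hn' : 1 ≤ n := by omega
      rw [pow_succ, Matrix.mul_apply]
      have hcol : ∑ l, X l j ≤ a := by
        calc ∑ l, X l j ≤ ∑ _l : Fin N, a / N :=
              Finset.sum_le_sum fun l _ => hentry l j
        _ = (N : ℝ) * (a / N) := by simp [Finset.sum_const, mul_comm]
        _ = a := by field_simp
      calc ∑ l, (X ^ n) i l * X l j ≤ ∑ l, (a ^ n / N) * X l j := by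
            apply Finset.sum_le_sum
            intro l _
            exact mul_le_mul_of_nonneg_right (ih hn' i l) (hX l j)
      _ = (a ^ n / N) * ∑ l, X l j := by rw [Finset.mul_sum]
      _ ≤ (a ^ n / N) * a := by
            apply mul_le_mul_of_nonneg_left hcol
            positivity
      _ = a ^ (n + 1) / N := by ring


lemma nn_inv_one_sub (hNpos : 0 < N) {x : Mat N} {a : ℝ} (ha0 : 0 ≤ a) (ha1 : a < 1)
    (hx : ∀ i j, 0 ≤ x i j) (hxa : ∀ i j, (N : ℝ) * x i j ≤ a)
    (hdet : (1 - x).det ≠ 0) : ∀ i j, 0 ≤ (1 - x)⁻¹ i j := by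
  have hNR : (0:ℝ) < N := by exact_mod_cast hNpos
  set Y := (1 - x)⁻¹ with hYdef
  have hdu : IsUnit (1 - x).det := isUnit_iff_ne_zero.2 hdet
  have hmulr : (1 - x) * Y = 1 := Matrix.mul_nonsing_inv _ hdu
  -- key identity : Y = (∑ k in range n, x^k) + x^n * Y
  have hid : ∀ n : ℕ, Y = (∑ k ∈ Finset.range n, x ^ k) + x ^ n * Y := by
    intro n
    have h1 : (∑ k ∈ Finset.range n, x ^ k) * (x - 1) = x ^ n - 1 := geom_sum_mul x n
    have h2 : (1 - x ^ n) * Y = (∑ k ∈ Finset.range n, x ^ k) * ((1 - x) * Y) := by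
      rw [← Matrix.mul_assoc]
      congr 1
      have h3 : (∑ k ∈ Finset.range n, x ^ k) * (1 - x) = 1 - x ^ n := by
        calc (∑ k ∈ Finset.range n, x ^ k) * (1 - x)
            = -((∑ k ∈ Finset.range n, x ^ k) * (x - 1)) := by rw [← mul_neg, neg_sub]
        _ = 1 - x ^ n := by rw [h1, neg_sub]
      rw [h3]
    rw [hmulr, Matrix.mul_one] at h2
    have := h2.symm
    rw [Matrix.sub_mul, Matrix.one_mul] at this
    -- this : ∑ = Y - x^n * Y
    have h4 := congrArg (· + x ^ n * Y) this
    simpa using h4.symm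
  set KY := ∑ p : Fin N, ∑ q : Fin N, |Y p q| with hKY
  have hKYnn : 0 ≤ KY := Finset.sum_nonneg fun p _ => Finset.sum_nonneg fun q _ => abs_nonneg _
  have hYb : ∀ p q, |Y p q| ≤ KY := by
    intro p q
    calc |Y p q| ≤ ∑ q' : Fin N, |Y p q'| :=
          Finset.single_le_sum (f := fun q' => |Y p q'|)
            (fun q' _ => abs_nonneg _) (Finset.mem_univ q)
    _ ≤ KY := Finset.single_le_sum (f := fun p' => ∑ q' : Fin N, |Y p' q'|)
          (fun p' _ => Finset.sum_nonneg fun q' _ => abs_nonneg _) (Finset.mem_univ p)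
  intro i j
  have hbound : ∀ n : ℕ, -(KY * a ^ (n+1)) ≤ Y i j := by
    intro n
    have hidn := hid (n + 1)
    have hsum_nn : 0 ≤ (∑ k ∈ Finset.range (n+1), x ^ k) i j := by
      rw [Matrix.sum_apply]
      exact Finset.sum_nonneg fun k _ => nn_pow hx k i j
    have hxn : ∀ l, (x ^ (n+1)) i l ≤ a ^ (n+1) / N :=
      fun l => pow_entry_le hNpos ha0 hx hxa (n+1) (by omega) i l
    have hterm : -(KY * a ^ (n+1)) ≤ (x ^ (n+1) * Y) i j := by
      rw [Matrix.mul_apply]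
      have hlb : ∀ l ∈ Finset.univ, (a ^ (n+1) / N) * (-KY) ≤ (x ^ (n+1)) i l * Y l j := by
        intro l _
        have h1 : (x ^ (n+1)) i l * Y l j ≥ (x ^ (n+1)) i l * (-KY) := by
          apply mul_le_mul_of_nonneg_left _ (nn_pow hx (n+1) i l)
          linarith [abs_le.1 (hYb l j)]
        have h2 : (a ^ (n+1) / N) * (-KY) ≤ (x ^ (n+1)) i l * (-KY) :=
          mul_le_mul_of_nonpos_right (hxn l) (neg_nonpos.2 hKYnn)
        linarith
      calc -(KY * a ^ (n+1)) = ∑ _l : Fin N, (a ^ (n+1) / N) * (-KY) := by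
            rw [Finset.sum_const, Finset.card_univ, Fintype.card_fin, nsmul_eq_mul]
            field_simp
      _ ≤ ∑ l, (x ^ (n+1)) i l * Y l j := Finset.sum_le_sum hlb
    have hYij : Y i j = (∑ k ∈ Finset.range (n+1), x ^ k) i j + (x ^ (n+1) * Y) i j := by
      conv_lhs => rw [hidn]
      rw [Matrix.add_apply]
    linarith
  have htend : Filter.Tendsto (fun n : ℕ => -(KY * a ^ (n+1))) Filter.atTop (nhds 0) := by
    have h0 : Filter.Tendsto (fun n : ℕ => a ^ n) Filter.atTop (nhds 0) :=
      tendsto_pow_atTop_nhds_zero_of_lt_one ha0 ha1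
    have : Filter.Tendsto (fun n : ℕ => -(KY * (a * a ^ n))) Filter.atTop (nhds (-(KY * (a * 0)))) := by
      apply Filter.Tendsto.neg
      exact (Filter.Tendsto.const_mul _ (Filter.Tendsto.const_mul _ h0))
    simpa [pow_succ, mul_comm] using this
  exact le_of_tendsto htend (Filter.Eventually.of_forall hbound)


lemma map_addsmul (M : Mat N) (u : ℝ) :
    ((M + u • (1 : Mat N)).map Complex.ofReal)
      = M.map Complex.ofReal + (u : ℂ) • (1 : Matrix (Fin N) (Fin N) ℂ) := by
  ext i j
  by_cases h : i = j <;>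
    simp [Matrix.map_apply, Matrix.add_apply, Matrix.smul_apply, Matrix.one_apply, h]

lemma det_ne_zero_of_spec (M : Mat N)
    (hspec : ∀ μ ∈ spectrum ℂ (M.map Complex.ofReal), 0 < μ.re)
    {u : ℝ} (hu : 0 ≤ u) : (M + u • (1 : Mat N)).det ≠ 0 := by
  intro h
  have hdetC : ((M + u • (1 : Mat N)).map Complex.ofReal).det = 0 := by
    have hh := RingHom.map_det Complex.ofRealHom (M + u • (1 : Mat N))
    rw [RingHom.mapMatrix_apply] at hh
    have : (M + u • (1 : Mat N)).map Complex.ofRealHom = (M + u • (1 : Mat N)).map Complex.ofReal := by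
      ext i j; simp [Matrix.map_apply]
    rw [this] at hh
    rw [← hh, h]
    simp
  rw [map_addsmul] at hdetC
  have hmem : (-(u : ℂ)) ∈ spectrum ℂ (M.map Complex.ofReal) := by
    rw [spectrum.mem_iff]
    intro hun
    rw [Algebra.algebraMap_eq_smul_one] at hun
    have heq : (-(u:ℂ)) • (1 : Matrix (Fin N) (Fin N) ℂ) - M.map Complex.ofReal
        = -(M.map Complex.ofReal + (u:ℂ) • 1) := by
      rw [neg_smul]; abel
    rw [heq] at hun
    rw [Matrix.isUnit_iff_isUnit_det] at hun
    rw [Matrix.det_neg, hdetC, mul_zero] at hun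
    exact (not_isUnit_zero : ¬ IsUnit (0:ℂ)) hun
  have := hspec _ hmem
  rw [Complex.neg_re, Complex.ofReal_re] at this
  linarith


lemma smul_aux (R : ℝ) (hR : R ≠ 0) (D E : Mat N) (h : D = R • (1 : Mat N) - E) :
    (1 : Mat N) - R⁻¹ • E = R⁻¹ • D := by
  subst h
  rw [smul_sub, smul_smul, inv_mul_cancel₀ hR, one_smul]

lemma nn_inverse_of_M (hNpos : 0 < N) (M : Mat N)
    (hspec : ∀ μ ∈ spectrum ℂ (M.map Complex.ofReal), 0 < μ.re)
    (hoff : ∀ i j, i ≠ j → M i j ≤ 0) :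
    M.det ≠ 0 ∧ ∀ i j, 0 ≤ M⁻¹ i j := by
  have hNR : (0:ℝ) < N := by exact_mod_cast hNpos
  set t : ℝ := 1 + ∑ i, |M i i| with ht
  have htsum : 0 ≤ ∑ i : Fin N, |M i i| := Finset.sum_nonneg fun i _ => abs_nonneg _
  have ht1 : 1 ≤ t := by simp only [ht]; linarith
  have htM : ∀ i, M i i ≤ t := by
    intro i
    have h1 : |M i i| ≤ ∑ i' : Fin N, |M i' i'| :=
      Finset.single_le_sum (f := fun i' => |M i' i'|) (fun i' _ => abs_nonneg _)
        (Finset.mem_univ i)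
    have := le_abs_self (M i i)
    simp only [ht]; linarith
  set A : ℝ → Mat N := fun r => M + (r - t) • 1 with hA
  have hdetA : ∀ r, t ≤ r → (A r).det ≠ 0 := fun r hr =>
    det_ne_zero_of_spec M hspec (sub_nonneg.2 hr)
  set C : Mat N := t • (1 : Mat N) - M with hC
  have hCnn : ∀ i j, 0 ≤ C i j := by
    intro i j
    simp only [hC, Matrix.sub_apply, Matrix.smul_apply, Matrix.one_apply, smul_eq_mul]
    by_cases h : i = j
    · subst h; simp; linarith [htM i]
    · simp [h]; linarith [hoff i j h]
  have hAr : ∀ r, A r = r • (1 : Mat N) - C := by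
    intro r; simp only [hA, hC]; module
  set c0 : ℝ := 1 + ∑ i, ∑ j, |C i j| with hc0def
  have hc0sum : 0 ≤ ∑ i : Fin N, ∑ j : Fin N, |C i j| :=
    Finset.sum_nonneg fun i _ => Finset.sum_nonneg fun j _ => abs_nonneg _
  have hc0pos : 0 < c0 := by simp only [hc0def]; linarith
  have hCb : ∀ i j, C i j ≤ c0 := by
    intro i j
    have h1 : |C i j| ≤ ∑ j' : Fin N, |C i j'| :=
      Finset.single_le_sum (f := fun j' => |C i j'|) (fun j' _ => abs_nonneg _)
        (Finset.mem_univ j)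
    have h2 : ∑ j' : Fin N, |C i j'| ≤ ∑ i' : Fin N, ∑ j' : Fin N, |C i' j'| :=
      Finset.single_le_sum (f := fun i' => ∑ j' : Fin N, |C i' j'|)
        (fun i' _ => Finset.sum_nonneg fun j' _ => abs_nonneg _) (Finset.mem_univ i)
    have := le_abs_self (C i j)
    simp only [hc0def]; linarith
  set R : ℝ := 2 * N * c0 + t with hR
  have htR : t ≤ R := by
    simp only [hR]
    nlinarith
  have hRpos : 0 < R := by linarith
  -- base case : entrywise nonnegativity of (A R)⁻¹
  have hbase : ∀ i j, 0 ≤ (A R)⁻¹ i j := by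
    set x0 : Mat N := R⁻¹ • C with hx0
    have hx0nn : ∀ i j, 0 ≤ x0 i j := by
      intro i j
      simp only [hx0, Matrix.smul_apply, smul_eq_mul]
      exact mul_nonneg (by positivity) (hCnn i j)
    have hx0a : ∀ i j, (N : ℝ) * x0 i j ≤ 1/2 := by
      intro i j
      simp only [hx0, Matrix.smul_apply, smul_eq_mul]
      rw [show (N:ℝ) * (R⁻¹ * C i j) = (N * C i j) / R by ring, div_le_iff₀ hRpos]
      have : (N:ℝ) * C i j ≤ N * c0 := by
        apply mul_le_mul_of_nonneg_left (hCb i j) (le_of_lt hNR)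
      simp only [hR]
      nlinarith
    have honemx : (1 : Mat N) - x0 = R⁻¹ • A R :=
      smul_aux R (ne_of_gt hRpos) (A R) C (hAr R)
    have hdet1x : ((1:Mat N) - x0).det ≠ 0 := by
      rw [honemx, Matrix.det_smul]
      exact mul_ne_zero (pow_ne_zero _ (inv_ne_zero (ne_of_gt hRpos))) (hdetA R htR)
    have hXnn := nn_inv_one_sub hNpos (by norm_num : (0:ℝ) ≤ 1/2) (by norm_num : (1:ℝ)/2 < 1)
      hx0nn hx0a hdet1x
    have hfactor : A R = R • ((1:Mat N) - x0) := by
      rw [honemx, smul_smul, mul_inv_cancel₀ (ne_of_gt hRpos), one_smul]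
    have hleft : (R⁻¹ • ((1:Mat N) - x0)⁻¹) * A R = 1 := by
      rw [hfactor, Matrix.smul_mul, Matrix.mul_smul, smul_smul,
        inv_mul_cancel₀ (ne_of_gt hRpos), one_smul,
        Matrix.nonsing_inv_mul _ (isUnit_iff_ne_zero.2 hdet1x)]
    rw [Matrix.inv_eq_left_inv hleft]
    intro i j
    simp only [Matrix.smul_apply, smul_eq_mul]
    exact mul_nonneg (by positivity) (hXnn i j)
  -- uniform entry bound on the inverse over [t, R]
  have hAcont : Continuous A := by
    apply continuous_const.add
    exact (continuous_id.sub continuous_const).smul continuous_const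
  have hFeq : ∀ r, t ≤ r → (A r)⁻¹ = ((A r).det)⁻¹ • (A r).adjugate := by
    intro r hr
    rw [Matrix.inv_def, Ring.inverse_eq_inv]
  set g : ℝ → ℝ := fun r => ∑ i, ∑ j, |(((A r).det)⁻¹ • (A r).adjugate) i j| with hg
  have hgcont : ContinuousOn g (Set.Icc t R) := by
    apply continuousOn_finset_sum
    intro i _
    apply continuousOn_finset_sum
    intro j _
    apply ContinuousOn.abs
    have h1 : ContinuousOn (fun r => ((A r).det)⁻¹) (Set.Icc t R) := by
      apply ContinuousOn.inv₀
      · exact (hAcont.matrix_det).continuousOn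
      · intro r hr; exact hdetA r hr.1
    have h2 : Continuous (fun r => (A r).adjugate i j) := by
      have hadj : Continuous fun r => (A r).adjugate := hAcont.matrix_adjugate
      exact (continuous_apply j).comp ((continuous_apply i).comp hadj)
    intro r hr
    have := (h1 r hr).mul (h2.continuousOn r hr)
    simpa [Matrix.smul_apply, smul_eq_mul, Pi.mul_def] using this
  obtain ⟨K0, hK0⟩ := isCompact_Icc.exists_bound_of_continuousOn hgcont
  set K : ℝ := max K0 1 with hK
  have hKpos : 0 < K := lt_of_lt_of_le one_pos (le_max_right _ _)
  have hFb : ∀ r, r ∈ Set.Icc t R → ∀ i j, (A r)⁻¹ i j ≤ K := by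
    intro r hr i j
    have h1 : |(A r)⁻¹ i j| ≤ g r := by
      rw [hFeq r hr.1]
      calc |(((A r).det)⁻¹ • (A r).adjugate) i j|
          ≤ ∑ j' : Fin N, |(((A r).det)⁻¹ • (A r).adjugate) i j'| :=
            Finset.single_le_sum (f := fun j' => |(((A r).det)⁻¹ • (A r).adjugate) i j'|)
              (fun j' _ => abs_nonneg _) (Finset.mem_univ j)
      _ ≤ g r := Finset.single_le_sum
              (f := fun i' => ∑ j' : Fin N, |(((A r).det)⁻¹ • (A r).adjugate) i' j'|)
              (fun i' _ => Finset.sum_nonneg fun j' _ => abs_nonneg _) (Finset.mem_univ i)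
    have h2 : g r ≤ K0 := by
      have := hK0 r hr
      calc g r ≤ |g r| := le_abs_self _
      _ = ‖g r‖ := (Real.norm_eq_abs _).symm
      _ ≤ K0 := this
    calc (A r)⁻¹ i j ≤ |(A r)⁻¹ i j| := le_abs_self _
    _ ≤ K0 := le_trans h1 h2
    _ ≤ K := le_max_left _ _
  set ε : ℝ := 1 / (2 * N * K) with hε
  have hεpos : 0 < ε := by positivity
  -- stepping lemma
  have hstep : ∀ r' r'', t ≤ r' → r' ≤ r'' → r'' ≤ R → r'' - r' ≤ ε →
      (∀ i j, 0 ≤ (A r'')⁻¹ i j) → ∀ i j, 0 ≤ (A r')⁻¹ i j := by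
    intro r' r'' h1 h2 h3 h4 hnn
    set x : Mat N := (r'' - r') • (A r'')⁻¹ with hx
    have hdet'' := hdetA r'' (le_trans h1 h2)
    have hdet' := hdetA r' h1
    have hAdiff : A r' = A r'' - (r'' - r') • (1 : Mat N) := by
      simp only [hA]; module
    have honex : (1 : Mat N) - x = (A r'')⁻¹ * A r' := by
      rw [hAdiff, Matrix.mul_sub, Matrix.nonsing_inv_mul _ (isUnit_iff_ne_zero.2 hdet''),
        Matrix.mul_smul, Matrix.mul_one]
    have hdetx : ((1:Mat N) - x).det ≠ 0 := by
      rw [honex, Matrix.det_mul, Matrix.det_nonsing_inv]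
      apply mul_ne_zero _ hdet'
      rw [Ring.inverse_eq_inv]
      exact inv_ne_zero hdet''
    have hxnn : ∀ i j, 0 ≤ x i j := by
      intro i j
      simp only [hx, Matrix.smul_apply, smul_eq_mul]
      exact mul_nonneg (by linarith) (hnn i j)
    have hxa : ∀ i j, (N : ℝ) * x i j ≤ 1/2 := by
      intro i j
      simp only [hx, Matrix.smul_apply, smul_eq_mul]
      have hb : (A r'')⁻¹ i j ≤ K := hFb r'' ⟨le_trans h1 h2, h3⟩ i j
      have h5 : (N:ℝ) * ((r'' - r') * (A r'')⁻¹ i j) ≤ (N:ℝ) * (ε * K) := by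
        apply mul_le_mul_of_nonneg_left _ (le_of_lt hNR)
        apply mul_le_mul h4 hb (hnn i j) (le_of_lt hεpos)
      have h6 : (N:ℝ) * (ε * K) = 1/2 := by
        simp only [hε]; field_simp
      linarith
    have hnninv := nn_inv_one_sub hNpos (by norm_num : (0:ℝ) ≤ 1/2) (by norm_num : (1:ℝ)/2 < 1)
      hxnn hxa hdetx
    have hfact : A r' = A r'' * ((1:Mat N) - x) := by
      rw [honex, ← Matrix.mul_assoc, Matrix.mul_nonsing_inv _ (isUnit_iff_ne_zero.2 hdet''),
        Matrix.one_mul]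
    rw [hfact, Matrix.mul_inv_rev]
    exact nn_mul hnninv hnn
  -- downward induction
  have hind : ∀ n : ℕ, ∀ r, t ≤ r → r ≤ R → R - r ≤ n * ε → ∀ i j, 0 ≤ (A r)⁻¹ i j := by
    intro n
    induction n with
    | zero =>
      intro r h1 h2 h3
      have : r = R := le_antisymm h2 (by simpa using h3)
      rw [this]; exact hbase
    | succ n ih =>
      intro r h1 h2 h3
      set r'' := min R (r + ε) with hr''
      have hr''le : r ≤ r'' := le_min h2 (by linarith)
      have h''R : r'' ≤ R := min_le_left _ _
      have hgap : r'' - r ≤ ε := by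
        have := min_le_right R (r + ε); linarith
      have hRr'' : R - r'' ≤ n * ε := by
        rcases le_or_gt R (r + ε) with h | h
        · have he : r'' = R := min_eq_left h
          rw [he]; simp; positivity
        · have he : r'' = r + ε := min_eq_right h.le
          rw [he]; push_cast at h3 ⊢; linarith
      exact hstep r r'' h1 hr''le h''R hgap (ih r'' (le_trans h1 hr''le) h''R hRr'')
  obtain ⟨n, hn⟩ := exists_nat_ge ((R - t)/ε)
  have hfinal := hind n t le_rfl htR (by rw [div_le_iff₀ hεpos] at hn; linarith)
  have hAt : A t = M := by simp [hA]
  rw [hAt] at hfinal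
  have hdt := hdetA t le_rfl
  rw [hAt] at hdt
  exact ⟨hdt, hfinal⟩


lemma spec_re_pos (hNpos : 0 < N) (B : Mat N)
    (hBnn : ∀ i j, 0 ≤ B i j)
    (hBirr : ∀ i j, ∃ k : ℕ, 1 ≤ k ∧ 0 < (B ^ k) i j)
    (z p lam : Fin N → ℝ) (hz : ∀ i, 0 ≤ z i) (hp : ∀ i, 0 ≤ p i)
    (hlam : ∀ i, 0 ≤ lam i) (hlam0 : lam ≠ 0)
    (heq : ∀ i, z i * p i - B.mulVec p i = lam i) :
    ∀ μ ∈ spectrum ℂ ((Matrix.diagonal z - B).map Complex.ofReal), 0 < μ.re := by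
  haveI hNe : Nonempty (Fin N) := ⟨⟨0, hNpos⟩⟩
  set t : ℝ := 1 + ∑ i, z i with htdef
  have hzsum : 0 ≤ ∑ i : Fin N, z i := Finset.sum_nonneg fun i _ => hz i
  have ht1 : 1 ≤ t := by simp only [htdef]; linarith
  have ht0 : 0 < t := by linarith
  have hzt : ∀ i, z i ≤ t := by
    intro i
    have : z i ≤ ∑ i' : Fin N, z i' :=
      Finset.single_le_sum (f := fun i' => z i') (fun i' _ => hz i') (Finset.mem_univ i)
    simp only [htdef]; linarith
  set C : Mat N := Matrix.of (fun i j => (if i = j then t - z i else 0) + B i j) with hCdef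
  have hCapp : ∀ i j, C i j = (if i = j then t - z i else 0) + B i j := fun i j => rfl
  have hCnn : ∀ i j, 0 ≤ C i j := by
    intro i j
    rw [hCapp]
    by_cases h : i = j
    · rw [if_pos h]; linarith [hzt i, hBnn i j]
    · rw [if_neg h]; simpa using hBnn i j
  have hBC : ∀ i j, B i j ≤ C i j := by
    intro i j
    rw [hCapp]
    by_cases h : i = j
    · rw [if_pos h]; linarith [hzt i]
    · rw [if_neg h]; simp
  have hmulVec : ∀ i, B.mulVec p i = ∑ j, B i j * p j := by
    intro i; simp [Matrix.mulVec, dotProduct]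
  have hCp : ∀ i, ∑ j, C i j * p j = t * p i - lam i := by
    intro i
    have h1 : ∑ j, C i j * p j
        = ∑ j, ((if i = j then t - z i else 0) * p j) + ∑ j, B i j * p j := by
      rw [← Finset.sum_add_distrib]
      apply Finset.sum_congr rfl
      intro j _
      rw [hCapp]; ring
    have h2 : ∑ j, ((if i = j then t - z i else 0) * p j) = (t - z i) * p i := by
      rw [Finset.sum_eq_single i]
      · simp
      · intro j _ hj
        have hij : ¬ i = j := fun h => hj h.symm
        simp [hij]
      · intro h; exact absurd (Finset.mem_univ i) h
    rw [h1, h2, ← hmulVec i]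
    have := heq i
    linarith
  have hCple : ∀ i, ∑ j, C i j * p j ≤ t * p i := by
    intro i; rw [hCp]; linarith [hlam i]
  -- powers
  have hCkp : ∀ k i, ∑ j, (C ^ k) i j * p j ≤ t ^ k * p i := by
    intro k
    induction k with
    | zero =>
      intro i
      rw [pow_zero, pow_zero, one_mul]
      rw [Finset.sum_eq_single i]
      · simp [Matrix.one_apply]
      · intro j _ hj
        have hij : ¬ i = j := fun h => hj h.symm
        simp [Matrix.one_apply, hij]
      · intro h; exact absurd (Finset.mem_univ i) h
    | succ k ih =>
      intro i
      rw [pow_succ']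
      calc ∑ j, (C * C ^ k) i j * p j
          = ∑ j, ∑ l, C i l * ((C ^ k) l j * p j) := by
            apply Finset.sum_congr rfl; intro j _
            rw [Matrix.mul_apply, Finset.sum_mul]
            apply Finset.sum_congr rfl; intro l _; ring
      _ = ∑ l, ∑ j, C i l * ((C ^ k) l j * p j) := Finset.sum_comm
      _ = ∑ l, C i l * (∑ j, (C ^ k) l j * p j) := by
            apply Finset.sum_congr rfl; intro l _
            rw [Finset.mul_sum]
      _ ≤ ∑ l, C i l * (t ^ k * p l) := by
            apply Finset.sum_le_sum; intro l _
            exact mul_le_mul_of_nonneg_left (ih l) (hCnn i l)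
      _ = t ^ k * ∑ l, C i l * p l := by
            rw [Finset.mul_sum]
            apply Finset.sum_congr rfl; intro l _; ring
      _ ≤ t ^ k * (t * p i) := by
            exact mul_le_mul_of_nonneg_left (hCple i) (by positivity)
      _ = t ^ (k + 1) * p i := by ring
  -- p is strictly positive
  have hppos : ∀ i, 0 < p i := by
    intro i
    rcases (hp i).lt_or_eq with h | h
    · exact h
    · exfalso
      have hpne : ∃ j, 0 < p j := by
        by_contra hc
        push_neg at hc
        have hp0 : p = 0 := funext fun j => le_antisymm (hc j) (hp j)
        apply hlam0
        funext j
        have := heq j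
        rw [hp0] at this
        simp [Matrix.mulVec, dotProduct] at this
        simp [← this]
      obtain ⟨j, hj⟩ := hpne
      obtain ⟨k, hk1, hkpos⟩ := hBirr i j
      have hCk : 0 < (C ^ k) i j := lt_of_lt_of_le hkpos (pow_mono hBnn hBC k i j)
      have hsum : 0 < ∑ l, (C ^ k) i l * p l := by
        have h1 : (C ^ k) i j * p j ≤ ∑ l, (C ^ k) i l * p l :=
          Finset.single_le_sum (f := fun l => (C ^ k) i l * p l)
            (fun l _ => mul_nonneg (nn_pow hCnn k i l) (hp l)) (Finset.mem_univ j)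
        nlinarith
      have h2 := hCkp k i
      rw [← h] at h2
      nlinarith
  -- take an eigenvalue
  intro μ hμ
  rw [spectrum.mem_iff] at hμ
  set Mc : Matrix (Fin N) (Fin N) ℂ := (Matrix.diagonal z - B).map Complex.ofReal with hMc
  have hdet0 : (Matrix.scalar (Fin N) μ - Mc).det = 0 := by
    by_contra hd
    exact hμ (by
      rw [Algebra.algebraMap_eq_smul_one]
      rw [Matrix.isUnit_iff_isUnit_det]
      have : (μ • (1 : Matrix (Fin N) (Fin N) ℂ) - Mc) = Matrix.scalar (Fin N) μ - Mc := by
        congr 1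
        rw [Matrix.scalar_apply]
        ext i j
        by_cases h : i = j <;> simp [Matrix.smul_apply, Matrix.one_apply, Matrix.diagonal_apply, h]
      rw [this]
      exact isUnit_iff_ne_zero.2 hd)
  obtain ⟨w, hw0, hww⟩ := (Matrix.exists_mulVec_eq_zero_iff).2 hdet0
  -- eigen equation entrywise
  have heig : ∀ i, μ * w i = (z i : ℂ) * w i - ∑ j, (B i j : ℂ) * w j := by
    intro i
    have h1 := congrFun hww i
    simp only [Matrix.mulVec, dotProduct, Pi.zero_apply] at h1
    have h2 : ∑ j, (Matrix.scalar (Fin N) μ - Mc) i j * w j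
        = μ * w i - ((z i : ℂ) * w i - ∑ j, (B i j : ℂ) * w j) := by
      have hterm : ∀ j, (Matrix.scalar (Fin N) μ - Mc) i j * w j
          = (if i = j then (μ - (z i : ℂ)) * w j else 0) + (B i j : ℂ) * w j := by
        intro j
        by_cases h : i = j
        · simp only [Matrix.sub_apply, Matrix.scalar_apply, Matrix.diagonal_apply, hMc,
            Matrix.map_apply, if_pos h, Matrix.sub_apply]
          push_cast
          ring
        · simp only [Matrix.sub_apply, Matrix.scalar_apply, Matrix.diagonal_apply, hMc,
            Matrix.map_apply, if_neg h, Matrix.sub_apply]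
          push_cast
          ring
      rw [Finset.sum_congr rfl (fun j _ => hterm j), Finset.sum_add_distrib]
      have h3 : ∑ j, (if i = j then (μ - (z i : ℂ)) * w j else 0) = (μ - (z i : ℂ)) * w i := by
        rw [Finset.sum_eq_single i]
        · simp
        · intro j _ hj
          have hij : ¬ i = j := fun h => hj h.symm
          simp [hij]
        · intro h; exact absurd (Finset.mem_univ i) h
      rw [h3]; ring
    rw [h2] at h1
    linear_combination h1
  set ν : ℂ := (t : ℂ) - μ with hν
  have hνeq : ∀ i, ν * w i = ∑ j, (C i j : ℂ) * w j := by
    intro i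
    have h1 : ∑ j, (C i j : ℂ) * w j
        = ((t - z i : ℝ) : ℂ) * w i + ∑ j, (B i j : ℂ) * w j := by
      have hentry : ∀ j, (C i j : ℂ) * w j
          = (if i = j then ((t - z i : ℝ) : ℂ) * w j else 0) + (B i j : ℂ) * w j := by
        intro j
        rw [hCapp]
        by_cases h : i = j
        · rw [if_pos h, if_pos h]; push_cast; ring
        · rw [if_neg h, if_neg h]; push_cast; ring
      rw [Finset.sum_congr rfl (fun j _ => hentry j), Finset.sum_add_distrib]
      congr 1
      rw [Finset.sum_eq_single i]
      · simp
      · intro j _ hj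
        have hij : ¬ i = j := fun h => hj h.symm
        simp [hij]
      · intro h; exact absurd (Finset.mem_univ i) h
    rw [h1]
    have := heig i
    push_cast
    linear_combination -this
  have habs : ∀ i, ‖ν‖ * ‖w i‖ ≤ ∑ j, C i j * ‖w j‖ := by
    intro i
    calc ‖ν‖ * ‖w i‖ = ‖ν * w i‖ :=
          (norm_mul _ _).symm
    _ = ‖∑ j, (C i j : ℂ) * w j‖ := by rw [hνeq i]
    _ ≤ ∑ j, ‖(C i j : ℂ) * w j‖ := norm_sum_le _ _
    _ = ∑ j, C i j * ‖w j‖ := by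
          apply Finset.sum_congr rfl; intro j _
          rw [norm_mul, Complex.norm_real, Real.norm_of_nonneg (hCnn i j)]
  -- suffices |ν| < t
  have hre : ‖ν‖ < t → 0 < μ.re := by
    intro h
    have h1 : ν.re ≤ ‖ν‖ := Complex.re_le_norm ν
    have h2 : ν.re = t - μ.re := by simp [hν, Complex.sub_re, Complex.ofReal_re]
    linarith
  apply hre
  by_contra hge
  push_neg at hge
  -- maximum of y
  set y : Fin N → ℝ := fun i => ‖w i‖ / p i with hy
  obtain ⟨i0, _, hi0⟩ := Finset.exists_max_image Finset.univ y Finset.univ_nonempty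
  set Y : ℝ := y i0 with hY
  have hyle : ∀ i, y i ≤ Y := fun i => hi0 i (Finset.mem_univ i)
  have hwy : ∀ i, ‖w i‖ = y i * p i := by
    intro i
    show ‖w i‖ = ‖w i‖ / p i * p i
    rw [div_mul_cancel₀ _ (ne_of_gt (hppos i))]
  have hYpos : 0 < Y := by
    have hex : ∃ i, w i ≠ 0 := by
      by_contra hc
      push_neg at hc
      exact hw0 (funext hc)
    obtain ⟨i, hi⟩ := hex
    have : 0 < ‖w i‖ := norm_pos_iff.mpr hi
    have hyi : 0 < y i := by
      rw [hy]
      exact div_pos this (hppos i)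
    linarith [hyle i]
  -- key lemma L
  have hL : ∀ i, y i = Y → (lam i = 0 ∧ ∀ j, 0 < C i j → y j = Y) := by
    intro i hyi
    have h1 : t * (Y * p i) ≤ ∑ j, C i j * (y j * p j) := by
      have := habs i
      rw [hwy i, hyi] at this
      calc t * (Y * p i) ≤ ‖ν‖ * (Y * p i) := by
            apply mul_le_mul_of_nonneg_right hge
            exact mul_nonneg (le_of_lt hYpos) (hp i)
      _ ≤ ∑ j, C i j * ‖w j‖ := this
      _ = ∑ j, C i j * (y j * p j) := by
            apply Finset.sum_congr rfl; intro j _; rw [hwy j]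
    have h2 : ∑ j, C i j * (y j * p j) ≤ ∑ j, C i j * (Y * p j) := by
      apply Finset.sum_le_sum; intro j _
      apply mul_le_mul_of_nonneg_left _ (hCnn i j)
      exact mul_le_mul_of_nonneg_right (hyle j) (hp j)
    have h3 : ∑ j, C i j * (Y * p j) = Y * (t * p i - lam i) := by
      rw [← hCp i, Finset.mul_sum]
      apply Finset.sum_congr rfl; intro j _; ring
    have hlam_i : lam i = 0 := by
      have : Y * lam i ≤ 0 := by nlinarith
      have h4 : 0 ≤ Y * lam i := mul_nonneg (le_of_lt hYpos) (hlam i)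
      have h5 : Y * lam i = 0 := le_antisymm this h4
      rcases mul_eq_zero.1 h5 with h | h
      · exact absurd h (ne_of_gt hYpos)
      · exact h
    refine ⟨hlam_i, ?_⟩
    -- equality forces
    have hsum0 : ∑ j, C i j * ((Y - y j) * p j) = 0 := by
      have he : ∑ j, C i j * ((Y - y j) * p j)
          = ∑ j, C i j * (Y * p j) - ∑ j, C i j * (y j * p j) := by
        rw [← Finset.sum_sub_distrib]
        apply Finset.sum_congr rfl; intro j _; ring
      rw [he, h3, hlam_i]
      have : ∑ j, C i j * (y j * p j) = Y * (t * p i) := by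
        have hle : ∑ j, C i j * (y j * p j) ≤ Y * (t * p i) := by
          rw [hlam_i] at h3
          calc ∑ j, C i j * (y j * p j) ≤ ∑ j, C i j * (Y * p j) := h2
          _ = Y * (t * p i - 0) := h3
          _ = Y * (t * p i) := by ring
        have hge' : Y * (t * p i) ≤ ∑ j, C i j * (y j * p j) := by
          calc Y * (t * p i) = t * (Y * p i) := by ring
          _ ≤ ∑ j, C i j * (y j * p j) := h1
        linarith
      rw [this]; ring
    intro j hCij
    have hall := (Finset.sum_eq_zero_iff_of_nonneg (fun j' _ =>
      mul_nonneg (hCnn i j') (mul_nonneg (by linarith [hyle j'] : (0:ℝ) ≤ Y - y j') (hp j')))).1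
      hsum0 j (Finset.mem_univ j)
    have hppj := hppos j
    have : (Y - y j) * p j = 0 := by
      rcases mul_eq_zero.1 hall with h | h
      · exact absurd h (ne_of_gt hCij)
      · exact h
    rcases mul_eq_zero.1 this with h | h
    · linarith [sub_eq_zero.1 h]
    · exact absurd h (ne_of_gt hppj)
  -- propagation along powers
  have hprop : ∀ k : ℕ, ∀ i j, y i = Y → 0 < (C ^ k) i j → y j = Y := by
    intro k
    induction k with
    | zero =>
      intro i j hyi hpos
      rw [pow_zero] at hpos
      by_cases h : i = j
      · rw [← h]; exact hyi
      · simp [Matrix.one_apply, h] at hpos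
    | succ k ih =>
      intro i j hyi hpos
      rw [pow_succ'] at hpos
      rw [Matrix.mul_apply] at hpos
      have hex : ∃ l, 0 < C i l * (C ^ k) l j := by
        by_contra hc
        push_neg at hc
        have : ∑ l, C i l * (C ^ k) l j ≤ 0 :=
          Finset.sum_nonpos fun l _ => hc l
        linarith
      obtain ⟨l, hl⟩ := hex
      have hCil : 0 < C i l := by
        rcases (hCnn i l).lt_or_eq with h | h
        · exact h
        · exfalso; rw [← h] at hl; simp at hl
      have hCkl : 0 < (C ^ k) l j := by
        rcases (nn_pow hCnn k l j).lt_or_eq with h | h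
        · exact h
        · exfalso; rw [← h] at hl; simp at hl
      exact ih l j ((hL i hyi).2 l hCil) hCkl
  -- contradiction with lam ≠ 0
  have hex1 : ∃ i1, 0 < lam i1 := by
    by_contra hc
    push_neg at hc
    exact hlam0 (funext fun i => le_antisymm (hc i) (hlam i))
  obtain ⟨i1, hi1⟩ := hex1
  obtain ⟨k, _, hkpos⟩ := hBirr i0 i1
  have hCk : 0 < (C ^ k) i0 i1 := lt_of_lt_of_le hkpos (pow_mono hBnn hBC k i0 i1)
  have hy1 : y i1 = Y := hprop k i0 i1 rfl hCk
  have := (hL i1 hy1).1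
  linarith


end Helper7

open Helper7 in
theorem statement7 {N : ℕ} (hN : 2 ≤ N)
    (B : Matrix (Fin N) (Fin N) ℝ) (hBnn : ∀ i j, 0 ≤ B i j) (hBirr : MatIrred B)
    (lam δ α : Fin N → ℝ)
    (hlam : ∀ i, 0 ≤ lam i) (hlam0 : lam ≠ 0)
    (hδ : ∀ i, 0 < δ i) (hα : ∀ i, 0 < α i)
    (w : (Fin N → ℝ) → ℝ) (hwcont : Continuous w)
    (hwconv : ConvexOn ℝ Set.univ w)
    (hwmono : ∀ s s' : Fin N → ℝ, s ≤ s' → s ≠ s' → w s < w s')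
    (c : Fin N → ℝ) (hc : ∀ i, 0 < c i)
    (sR pR zR : Fin N → ℝ)
    (hfeas : FeasPR1 B lam δ α sR pR zR)
    (hopt : ∀ s p z : Fin N → ℝ, FeasPR1 B lam δ α s p z →
      fobj w c sR pR ≤ fobj w c s p)
    (ptil stil : Fin N → ℝ)
    (hptil : ptil = (Matrix.diagonal zR - B)⁻¹.mulVec lam)
    (hstil : stil = fun i => sR i + (α i)⁻¹ * B.mulVec (fun j => pR j - ptil j) i) :
    FeasP B lam δ α stil ptil ∧
    fobj w c sR pR ≤ sInf {v | ∃ s p, FeasP B lam δ α s p ∧ v = fobj w c s p} ∧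
    sInf {v | ∃ s p, FeasP B lam δ α s p ∧ v = fobj w c s p} ≤ fobj w c stil ptil := by
  have hNpos : 0 < N := by omega
  obtain ⟨hsR, hpR1, ⟨hzRnn, hzRspec⟩, hpRge, hzReq⟩ := hfeas
  set M : Mat N := Matrix.diagonal zR - B with hM
  have hoff : ∀ i j, i ≠ j → M i j ≤ 0 := by
    intro i j h
    simp only [hM, Matrix.sub_apply, Matrix.diagonal_apply, if_neg h]
    linarith [hBnn i j]
  obtain ⟨hMdet, hMinv⟩ := nn_inverse_of_M hNpos M hzRspec hoff
  have hMunit : IsUnit M.det := isUnit_iff_ne_zero.2 hMdet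
  -- ptil is nonnegative
  have hptil_nn : ∀ i, 0 ≤ ptil i := by
    intro i
    rw [hptil]
    show 0 ≤ M⁻¹.mulVec lam i
    simp only [Matrix.mulVec, dotProduct]
    exact Finset.sum_nonneg fun j _ => mul_nonneg (hMinv i j) (hlam j)
  -- M * ptil = lam
  have hMp : M.mulVec ptil = lam := by
    rw [hptil]
    show M.mulVec (M⁻¹.mulVec lam) = lam
    rw [Matrix.mulVec_mulVec, Matrix.mul_nonsing_inv _ hMunit, Matrix.one_mulVec]
  have hMp' : ∀ i, zR i * ptil i - B.mulVec ptil i = lam i := by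
    intro i
    have h1 := congrFun hMp i
    rw [hM, Matrix.sub_mulVec] at h1
    simpa [Matrix.mulVec_diagonal] using h1
  -- ptil ≤ pR
  have hple : ∀ i, ptil i ≤ pR i := by
    intro i
    rw [hptil]
    exact hpRge i
  -- stil nonnegative
  have hstil_nn : ∀ i, 0 ≤ stil i := by
    intro i
    rw [hstil]
    dsimp only
    have hBv : 0 ≤ B.mulVec (fun j => pR j - ptil j) i := by
      simp only [Matrix.mulVec, dotProduct]
      exact Finset.sum_nonneg fun j _ =>
        mul_nonneg (hBnn i j) (by linarith [hple j])
    have h1 := hsR i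
    have h2 := (hα i)
    positivity
  -- gfun vanishes
  have hg : gfun B lam δ α stil ptil = 0 := by
    funext i
    simp only [gfun, Pi.zero_apply]
    have h1 := hMp' i
    have h2 := hzReq i
    have h3 : α i * stil i = α i * sR i + (B.mulVec pR i - B.mulVec ptil i) := by
      rw [hstil]
      dsimp only
      rw [mul_add, mul_inv_cancel_left₀ (ne_of_gt (hα i))]
      congr 1
      have hfe : (fun j => pR j - ptil j) = pR - ptil := rfl
      rw [hfe, Matrix.mulVec_sub]
      rfl
    have h4 : α i * stil i + δ i = zR i * (1 - ptil i) := by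
      linear_combination h1 - h2 + h3
    linear_combination (ptil i - 1) * h1 - ptil i * h4
  have hFeasP : FeasP B lam δ α stil ptil := ⟨hstil_nn, hptil_nn, hg⟩
  -- every P-feasible point dominates the relaxed optimum
  have key : ∀ s p, FeasP B lam δ α s p → fobj w c sR pR ≤ fobj w c s p := by
    rintro s p ⟨hs, hp, hgsp⟩
    have hgi : ∀ i, (1 - p i) * (lam i + B.mulVec p i) - (α i * s i + δ i) * p i = 0 := by
      intro i
      have := congrFun hgsp i
      simpa [gfun] using this
    set z : Fin N → ℝ := fun i => α i * s i + δ i + lam i + B.mulVec p i with hzdef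
    have hBp_nn : ∀ i, 0 ≤ B.mulVec p i := by
      intro i
      simp only [Matrix.mulVec, dotProduct]
      exact Finset.sum_nonneg fun j _ => mul_nonneg (hBnn i j) (hp j)
    have hznn : ∀ i, 0 ≤ z i := by
      intro i
      simp only [hzdef]
      have := mul_nonneg (le_of_lt (hα i)) (hs i)
      linarith [hδ i, hlam i, hBp_nn i]
    have hp1 : ∀ i, p i ≤ 1 := by
      intro i
      by_contra hgt
      push_neg at hgt
      have h1 := hgi i
      nlinarith [hBp_nn i, hlam i, hδ i, mul_nonneg (le_of_lt (hα i)) (hs i), hp i]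
    have hMzp : ∀ i, z i * p i - B.mulVec p i = lam i := by
      intro i
      have h1 := hgi i
      simp only [hzdef]
      linear_combination -h1
    have hspecz := spec_re_pos hNpos B hBnn hBirr z p lam hznn hp hlam hlam0 hMzp
    have hdetz : (Matrix.diagonal z - B).det ≠ 0 := by
      have h := det_ne_zero_of_spec (Matrix.diagonal z - B) hspecz (le_refl 0)
      simpa using h
    have hMzvec : (Matrix.diagonal z - B).mulVec p = lam := by
      funext i
      rw [Matrix.sub_mulVec]
      have := hMzp i
      simpa [Matrix.mulVec_diagonal] using this
    have hinvp : (Matrix.diagonal z - B)⁻¹.mulVec lam = p := by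
      rw [← hMzvec, Matrix.mulVec_mulVec,
        Matrix.nonsing_inv_mul _ (isUnit_iff_ne_zero.2 hdetz), Matrix.one_mulVec]
    exact hopt s p z ⟨hs, hp1, ⟨hznn, hspecz⟩,
      fun i => le_of_eq (congrFun hinvp i), fun i => rfl⟩
  -- conclusion
  have hne : Set.Nonempty {v | ∃ s p, FeasP B lam δ α s p ∧ v = fobj w c s p} :=
    ⟨fobj w c stil ptil, stil, ptil, hFeasP, rfl⟩
  have hlb : ∀ v ∈ {v | ∃ s p, FeasP B lam δ α s p ∧ v = fobj w c s p},
      fobj w c sR pR ≤ v := by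
    rintro v ⟨s, p, hf, rfl⟩
    exact key s p hf
  exact ⟨hFeasP, le_csInf hne hlb,
    csInf_le ⟨fobj w c sR pR, fun v hv => hlb v hv⟩ ⟨stil, ptil, hFeasP, rfl⟩⟩
end
end

section
/- Assume additionally that w is differentiable and that Bᵀ·diag(α)^{-1}·∇w(s) ≤ c (entrywise) for every s ≥ 0. Let (s_R, p_R, z_R) be a feasible point of problem (P_R1) attaining its optimal value, and let p̃ := (diag(z_R) − B)^{-1}λ and s̃ := s_R + diag(α)^{-1}·B·(p_R − p̃). Then the relaxation is exact: f(s̃, p̃) = f(s_R, p_R) = f*, so (s̃, p̃) is an optimal point of problem (P) and the optimal value of (P_R1) equals the optimal value of (P). -/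
noncomputable section

open Matrix

lemma pow_nonneg' {N : ℕ} {B : Matrix (Fin N) (Fin N) ℝ} (hBnn : ∀ i j, 0 ≤ B i j) :
    ∀ k i j, 0 ≤ (B ^ k) i j := by
  intro k
  induction k with
  | zero => intro i j; simp [Matrix.one_apply]; positivity
  | succ k ih =>
      intro i j
      rw [pow_succ, Matrix.mul_apply]
      exact Finset.sum_nonneg fun l _ => mul_nonneg (ih i l) (hBnn l j)

lemma irred_prop {N : ℕ} {B : Matrix (Fin N) (Fin N) ℝ} (hBnn : ∀ i j, 0 ≤ B i j)
    (hBirr : MatIrred B) (T : Fin N → Prop)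
    (hT : ∀ i, T i → ∀ j, 0 < B i j → T j) {i₀ : Fin N} (hi₀ : T i₀) :
    ∀ j, T j := by
  have key : ∀ k i j, T i → 0 < (B ^ k) i j → T j := by
    intro k
    induction k with
    | zero =>
        intro i j hi hpos
        rw [pow_zero, Matrix.one_apply] at hpos
        by_cases h : i = j
        · exact h ▸ hi
        · simp [h] at hpos
    | succ k ih =>
        intro i j hi hpos
        rw [pow_succ, Matrix.mul_apply] at hpos
        obtain ⟨l, -, hl⟩ := Finset.exists_lt_of_sum_lt (by simpa using hpos : (∑ l : Fin N, (0:ℝ)) < ∑ l, (B ^ k) i l * B l j)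
        have h1 : 0 < (B ^ k) i l := by
          rcases lt_or_eq_of_le (pow_nonneg' hBnn k i l) with h | h
          · exact h
          · exfalso; rw [← h] at hl; simpa using hl
        have h2 : 0 < B l j := by
          rcases lt_or_eq_of_le (hBnn l j) with h | h
          · exact h
          · exfalso; rw [← h] at hl; simpa using hl
        exact hT l (ih i l hi h1) j h2
  intro j
  obtain ⟨k, -, hk⟩ := hBirr i₀ j
  exact key k i₀ j hi₀ hk

lemma grad_le {n : ℕ} {w : (Fin n → ℝ) → ℝ} (hwconv : ConvexOn ℝ Set.univ w)
    (hwdiff : Differentiable ℝ w) (x y : Fin n → ℝ) :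
    fderiv ℝ w x (y - x) ≤ w y - w x := by
  set L : ℝ → (Fin n → ℝ) := fun t => x + t • (y - x) with hL
  have hLaff : ConvexOn ℝ Set.univ (w ∘ L) := by
    have h1 := hwconv.comp_affineMap
      ((AffineMap.lineMap x y : ℝ →ᵃ[ℝ] (Fin n → ℝ)))
    have h2 : (AffineMap.lineMap x y : ℝ →ᵃ[ℝ] (Fin n → ℝ)) ⁻¹' Set.univ = Set.univ := by
      simp
    rw [h2] at h1
    have h3 : w ∘ L = w ∘ ⇑(AffineMap.lineMap x y) := by
      funext t
      simp only [Function.comp_apply, hL, AffineMap.lineMap_apply, vsub_eq_sub, vadd_eq_add]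
      rw [add_comm]
    rw [h3]
    exact h1
  have hLd : HasDerivAt L (y - x) 0 := by
    have h1 : HasDerivAt (fun t : ℝ => t • (y - x)) ((1:ℝ) • (y - x)) 0 :=
      (hasDerivAt_id 0).smul_const (y - x)
    have h2 := h1.const_add x
    rw [one_smul] at h2; exact h2
  have hφd : HasDerivAt (w ∘ L) (fderiv ℝ w x (y - x)) 0 := by
    have hx : L 0 = x := by simp [hL]
    have hw : HasFDerivAt w (fderiv ℝ w x) (L 0) := by
      rw [hx]; exact (hwdiff x).hasFDerivAt
    exact hw.comp_hasDerivAt 0 hLd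
  have hs := ConvexOn.le_slope_of_hasDerivAt hLaff (Set.mem_univ (0:ℝ)) (Set.mem_univ (1:ℝ))
    one_pos hφd
  rw [slope_def_field] at hs
  have h1 : L 1 = y := by simp [hL]
  have h0 : L 0 = x := by simp [hL]
  simp only [Function.comp_apply, h1, h0] at hs
  simpa using hs

lemma fderiv_expand {n : ℕ} (D : (Fin n → ℝ) →L[ℝ] ℝ) (v : Fin n → ℝ) :
    D v = ∑ j, v j * D (Pi.single j 1) := by
  have h1 : v = ∑ j, v j • (Pi.single j (1:ℝ) : Fin n → ℝ) := by
    funext k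
    rw [Finset.sum_apply]
    simp [Pi.single_apply]
  conv_lhs => rw [h1]
  rw [map_sum]
  exact Finset.sum_congr rfl fun j _ => by rw [D.map_smul]; simp

section AuxStatement8
variable {N : ℕ} {B : Matrix (Fin N) (Fin N) ℝ} {lam δ α s p z : Fin N → ℝ}


lemma mulVec_nonneg (hBnn : ∀ i j, 0 ≤ B i j) (hp : ∀ i, 0 ≤ p i) :
    ∀ i, 0 ≤ B.mulVec p i := by
  intro i
  rw [Matrix.mulVec, dotProduct]
  exact Finset.sum_nonneg fun j _ => mul_nonneg (hBnn i j) (hp j)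

lemma feas_lt_one (hδ : ∀ i, 0 < δ i) (hα : ∀ i, 0 < α i) (hlam : ∀ i, 0 ≤ lam i)
    (hBnn : ∀ i j, 0 ≤ B i j)
    (hs : ∀ i, 0 ≤ s i) (hp : ∀ i, 0 ≤ p i) (hg : gfun B lam δ α s p = 0) :
    ∀ i, p i < 1 := by
  intro i
  by_contra h
  push_neg at h
  have hgi := congrFun hg i
  simp only [gfun, Pi.zero_apply] at hgi
  have h1 : (1 - p i) * (lam i + B.mulVec p i) ≤ 0 :=
    mul_nonpos_of_nonpos_of_nonneg (by linarith) (add_nonneg (hlam i) (mulVec_nonneg hBnn hp i))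
  have h2 : 0 < (α i * s i + δ i) * p i :=
    mul_pos (by have := mul_nonneg (hα i).le (hs i); linarith [hδ i]) (by linarith)
  linarith

lemma feas_pos (hδ : ∀ i, 0 < δ i) (hα : ∀ i, 0 < α i) (hlam : ∀ i, 0 ≤ lam i)
    (hlam0 : lam ≠ 0) (hBnn : ∀ i j, 0 ≤ B i j) (hBirr : MatIrred B)
    (hs : ∀ i, 0 ≤ s i) (hp : ∀ i, 0 ≤ p i) (hg : gfun B lam δ α s p = 0) :
    ∀ i, 0 < p i := by
  by_contra h
  push_neg at h
  obtain ⟨i₀, hi₀⟩ := h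
  have hi₀0 : p i₀ = 0 := le_antisymm hi₀ (hp i₀)
  -- T i : p i = 0
  have hstep : ∀ i, p i = 0 → ∀ j, 0 < B i j → p j = 0 := by
    intro i hpi j hBij
    have hgi := congrFun hg i
    simp only [gfun, Pi.zero_apply, hpi] at hgi
    have h1 : lam i + B.mulVec p i = 0 := by linarith
    have h2 : B.mulVec p i = 0 :=
      le_antisymm (by linarith [hlam i]) (mulVec_nonneg hBnn hp i)
    have h3 : ∀ j, B i j * p j = 0 := by
      rw [Matrix.mulVec, dotProduct] at h2
      have := (Finset.sum_eq_zero_iff_of_nonneg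
        (fun j _ => mul_nonneg (hBnn i j) (hp j))).mp h2
      intro j; exact this j (Finset.mem_univ j)
    rcases mul_eq_zero.mp (h3 j) with h | h
    · exact absurd h (ne_of_gt hBij)
    · exact h
  have hall : ∀ j, p j = 0 := irred_prop hBnn hBirr (fun i => p i = 0) hstep hi₀0
  apply hlam0
  funext i
  have hgi := congrFun hg i
  simp only [gfun, Pi.zero_apply, hall i] at hgi
  have h2 : B.mulVec p i = 0 := by
    rw [Matrix.mulVec, dotProduct]
    exact Finset.sum_eq_zero fun j _ => by rw [hall j, mul_zero]
  rw [h2] at hgi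
  simpa using hgi

lemma feas_mulVec (hg : gfun B lam δ α s p = 0) :
    (Matrix.diagonal (fun i => α i * s i + δ i + lam i + B.mulVec p i) - B).mulVec p = lam := by
  funext i
  have hgi := congrFun hg i
  simp only [gfun, Pi.zero_apply] at hgi
  simp only [Matrix.sub_mulVec, Matrix.mulVec_diagonal, Pi.sub_apply]
  ring_nf
  ring_nf at hgi
  linarith

lemma omega_det_ne (hz : z ∈ OmegaSet B) {t : ℝ} (ht : 0 ≤ t) :
    (Matrix.diagonal (fun i => z i + t) - B).det ≠ 0 := by
  intro hdet
  have hC : ((Matrix.diagonal (fun i => z i + t) - B).map Complex.ofReal).det = 0 := by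
    have h0 := RingHom.map_det Complex.ofRealHom (Matrix.diagonal (fun i => z i + t) - B)
    rw [RingHom.mapMatrix_apply] at h0
    rw [show (Matrix.diagonal (fun i => z i + t) - B).map Complex.ofReal
        = (Matrix.diagonal (fun i => z i + t) - B).map Complex.ofRealHom from rfl, ← h0, hdet]
    simp
  have hkey : algebraMap ℂ (Matrix (Fin N) (Fin N) ℂ) (-t) -
      (Matrix.diagonal z - B).map Complex.ofReal
      = -((Matrix.diagonal (fun i => z i + t) - B).map Complex.ofReal) := by
    ext i j
    simp only [Matrix.sub_apply, Matrix.map_apply, Matrix.algebraMap_matrix_apply,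
      Matrix.diagonal_apply, Matrix.neg_apply]
    split_ifs with h
    · simp [Complex.ext_iff]
      ring
    · push_cast; ring
  have hnu : ¬ IsUnit (algebraMap ℂ (Matrix (Fin N) (Fin N) ℂ) (-t) -
      (Matrix.diagonal z - B).map Complex.ofReal) := by
    rw [hkey]
    intro hu
    have := (Matrix.isUnit_iff_isUnit_det _).mp hu
    rw [Matrix.det_neg, hC, mul_zero] at this
    exact (by simpa using this : IsUnit (0:ℂ)).ne_zero rfl
  have hmem : (-t : ℂ) ∈ spectrum ℂ ((Matrix.diagonal z - B).map Complex.ofReal) :=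
    spectrum.mem_iff.mpr hnu
  have := hz.2 _ hmem
  simp at this
  linarith

lemma spectrum_eigenvector {M : Matrix (Fin N) (Fin N) ℝ} {μ : ℂ}
    (h : μ ∈ spectrum ℂ (M.map Complex.ofReal)) :
    ∃ v : Fin N → ℂ, v ≠ 0 ∧ (M.map Complex.ofReal).mulVec v = μ • v := by
  have hnu := spectrum.mem_iff.mp h
  have hdet : (algebraMap ℂ (Matrix (Fin N) (Fin N) ℂ) μ - M.map Complex.ofReal).det = 0 := by
    by_contra hd
    exact hnu ((Matrix.isUnit_iff_isUnit_det _).mpr (isUnit_iff_ne_zero.mpr hd))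
  obtain ⟨v, hv0, hv⟩ := (Matrix.exists_mulVec_eq_zero_iff).mpr hdet
  refine ⟨v, hv0, ?_⟩
  have := hv
  rw [Matrix.sub_mulVec] at this
  have halg : (algebraMap ℂ (Matrix (Fin N) (Fin N) ℂ) μ).mulVec v = μ • v := by
    funext i
    rw [Matrix.algebraMap_eq_diagonal, Matrix.mulVec_diagonal]
    simp
  rw [halg] at this
  funext i
  have := congrFun this i
  simp only [Pi.sub_apply, Pi.zero_apply] at this
  exact (sub_eq_zero.mp this).symm

lemma eigen_re_pos (hBnn : ∀ i j, 0 ≤ B i j) (hBirr : MatIrred B)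
    (hlam : ∀ i, 0 ≤ lam i) (hlam0 : lam ≠ 0)
    (hzpos : ∀ i, 0 < z i) (hppos : ∀ i, 0 < p i)
    (hAp : ∀ a, z a * p a - ∑ j, B a j * p j = lam a) :
    ∀ μ ∈ spectrum ℂ ((Matrix.diagonal z - B).map Complex.ofReal), 0 < μ.re := by
  intro μ hμ
  by_contra hre
  push_neg at hre
  obtain ⟨v, hv0, hv⟩ := spectrum_eigenvector hμ
  -- entrywise eigen equation
  have heq : ∀ a, ((z a : ℂ) - μ) * v a = ∑ j, (B a j : ℂ) * v j := by
    intro a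
    have h1 := congrFun hv a
    rw [Matrix.mulVec, dotProduct] at h1
    simp only [Matrix.map_apply, Matrix.sub_apply, Matrix.diagonal_apply, Pi.smul_apply,
      smul_eq_mul] at h1
    have h2 : ∑ j, (((if a = j then z a else 0 : ℝ) - B a j : ℝ) : ℂ) * v j
        = (z a : ℂ) * v a - ∑ j, (B a j : ℂ) * v j := by
      have e : ∀ j, (((if a = j then z a else 0 : ℝ) - B a j : ℝ) : ℂ) * v j
          = (if a = j then (z a : ℂ) * v j else 0) - (B a j : ℂ) * v j := by
        intro j
        push_cast
        split_ifs <;> push_cast <;> ring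
      rw [Finset.sum_congr rfl (fun j _ => e j), Finset.sum_sub_distrib]
      congr 1
      simp
    rw [h2] at h1
    linear_combination h1
  -- norm bound at any index where ‖v‖/p is bounded by r appropriately
  obtain ⟨i, -, hmax⟩ := Finset.exists_max_image Finset.univ (fun j => ‖v j‖ / p j)
    (by
      obtain ⟨j, hj⟩ := Function.ne_iff.mp hv0
      exact ⟨j, Finset.mem_univ j⟩)
  set r : ℝ := ‖v i‖ / p i with hr
  have hle : ∀ j, ‖v j‖ ≤ r * p j := by
    intro j
    have := hmax j (Finset.mem_univ j)
    rw [div_le_iff₀ (hppos j)] at this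
    linarith [this]
  have hvi : ‖v i‖ = r * p i := by
    rw [hr, div_mul_cancel₀ _ (ne_of_gt (hppos i))]
  have hrpos : 0 < r := by
    obtain ⟨j, hj⟩ := Function.ne_iff.mp hv0
    have h1 : 0 < ‖v j‖ := by simpa using hj
    have := hle j
    nlinarith [hppos j, (hppos i).le, norm_nonneg (v i)]
  -- generic norm estimate
  have hest : ∀ a, ‖v a‖ = r * p a →
      ‖(z a : ℂ) - μ‖ * (r * p a) ≤ r * (z a * p a - lam a) := by
    intro a ha
    have h1 : ‖((z a : ℂ) - μ) * v a‖ ≤ ∑ j, B a j * ‖v j‖ := by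
      rw [heq a]
      refine (norm_sum_le _ _).trans ?_
      refine Finset.sum_le_sum fun j _ => ?_
      rw [norm_mul, Complex.norm_real, Real.norm_eq_abs, abs_of_nonneg (hBnn a j)]
    have h2 : ∑ j, B a j * ‖v j‖ ≤ ∑ j, B a j * (r * p j) :=
      Finset.sum_le_sum fun j _ => mul_le_mul_of_nonneg_left (hle j) (hBnn a j)
    have h3 : ∑ j, B a j * (r * p j) = r * (z a * p a - lam a) := by
      rw [← hAp a, show z a * p a - (z a * p a - ∑ j, B a j * p j)
          = ∑ j, B a j * p j from by ring, Finset.mul_sum]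
      exact Finset.sum_congr rfl fun j _ => by ring
    rw [norm_mul, ha] at h1
    linarith
  -- at the max index, Re μ ≤ 0 forces μ = 0 and lam i = 0
  have hnormge : ∀ a, (z a : ℝ) ≤ ‖(z a : ℂ) - μ‖ := by
    intro a
    have h1 : (z a : ℝ) - μ.re ≤ ‖(z a : ℂ) - μ‖ := by
      have := Complex.re_le_norm ((z a : ℂ) - μ)
      simpa using this
    linarith
  have hi1 := hest i hvi
  have hzi := hzpos i
  have hpi := hppos i
  have hkey : z i * (r * p i) ≤ r * (z i * p i - lam i) :=
    le_trans (mul_le_mul_of_nonneg_right (hnormge i) (by positivity)) hi1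
  have h5 : r * lam i = 0 :=
    le_antisymm (by nlinarith [hkey]) (mul_nonneg hrpos.le (hlam i))
  have hlami : lam i = 0 := by
    rcases mul_eq_zero.mp h5 with h | h
    · exact absurd h (ne_of_gt hrpos)
    · exact h
  have hup : ‖(z i : ℂ) - μ‖ ≤ z i := by
    by_contra hcon
    push_neg at hcon
    have hrp : 0 < r * p i := by positivity
    nlinarith [hi1, hlami, mul_lt_mul_of_pos_right hcon hrp]
  have hnormeq : ‖(z i : ℂ) - μ‖ = z i := le_antisymm hup (hnormge i)
  have hμ0 : μ = 0 := by
    have h1 : ‖(z i : ℂ) - μ‖ ^ 2 = (z i - μ.re) ^ 2 + μ.im ^ 2 := by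
      rw [Complex.sq_norm, Complex.normSq_apply]
      simp [Complex.sub_re, Complex.sub_im]
      ring
    rw [hnormeq] at h1
    have him : μ.im = 0 := by nlinarith
    have hrμ : μ.re = 0 := by nlinarith
    exact Complex.ext hrμ him
  subst hμ0
  -- propagation
  have main : ∀ a, ‖v a‖ = r * p a → lam a = 0 ∧ ∀ b, 0 < B a b → ‖v b‖ = r * p b := by
    intro a ha
    have h1 := hest a ha
    have h2 := hnormge a
    have hza := hzpos a
    have hpa := hppos a
    have hnorm0 : ‖(z a : ℂ) - 0‖ = z a := by
      simp [abs_of_pos hza]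
    rw [hnorm0] at h1
    have h5a : r * lam a = 0 := by
      have hka : z a * (r * p a) ≤ r * (z a * p a - lam a) := h1
      refine le_antisymm (by nlinarith [hka]) (mul_nonneg hrpos.le (hlam a))
    have hlama : lam a = 0 := by
      rcases mul_eq_zero.mp h5a with h | h
      · exact absurd h (ne_of_gt hrpos)
      · exact h
    refine ⟨hlama, ?_⟩
    -- equality in the sum bound
    have heqa := heq a
    have hA1 : ‖((z a : ℂ) - 0) * v a‖ = z a * (r * p a) := by
      rw [norm_mul, hnorm0, ha]
    have hB1 : ‖∑ j, (B a j : ℂ) * v j‖ ≤ ∑ j, B a j * ‖v j‖ := by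
      refine (norm_sum_le _ _).trans ?_
      refine Finset.sum_le_sum fun j _ => ?_
      rw [norm_mul, Complex.norm_real, Real.norm_eq_abs, abs_of_nonneg (hBnn a j)]
    have hC1 : ∑ j, B a j * (r * p j) = r * (z a * p a - lam a) := by
      rw [← hAp a, show z a * p a - (z a * p a - ∑ j, B a j * p j)
          = ∑ j, B a j * p j from by ring, Finset.mul_sum]
      exact Finset.sum_congr rfl fun j _ => by ring
    have hsum_eq : ∑ j, B a j * ‖v j‖ = ∑ j, B a j * (r * p j) := by
      have hge : ∑ j, B a j * ‖v j‖ ≥ z a * (r * p a) := by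
        rw [← hA1, heqa]
        exact hB1
      have hub : ∑ j, B a j * (r * p j) ≤ z a * (r * p a) := by
        rw [hC1, hlama]
        exact le_of_eq (by ring)
      have hls : ∑ j, B a j * ‖v j‖ ≤ ∑ j, B a j * (r * p j) :=
        Finset.sum_le_sum fun j _ => mul_le_mul_of_nonneg_left (hle j) (hBnn a j)
      linarith
    intro b hb
    have hterm : ∀ j ∈ Finset.univ, B a j * ‖v j‖ = B a j * (r * p j) := by
      intro j _
      by_contra hne
      have hlt : B a j * ‖v j‖ < B a j * (r * p j) :=
        lt_of_le_of_ne (mul_le_mul_of_nonneg_left (hle j) (hBnn a j)) hne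
      have : ∑ j, B a j * ‖v j‖ < ∑ j, B a j * (r * p j) :=
        Finset.sum_lt_sum (fun j _ => mul_le_mul_of_nonneg_left (hle j) (hBnn a j))
          ⟨j, Finset.mem_univ j, hlt⟩
      linarith
    have := hterm b (Finset.mem_univ b)
    exact mul_left_cancel₀ (ne_of_gt hb) this
  have hall := irred_prop hBnn hBirr (fun a => ‖v a‖ = r * p a)
    (fun a ha b hb => (main a ha).2 b hb) hvi
  apply hlam0
  funext j
  exact (main j (hall j)).1

lemma inv_mulVec_nonneg (hNe : Nonempty (Fin N)) (hBnn : ∀ i j, 0 ≤ B i j)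
    (hBirr : MatIrred B) (hlam : ∀ i, 0 ≤ lam i) (hlam0 : lam ≠ 0)
    (hz : z ∈ OmegaSet B) :
    ∀ i, 0 ≤ (Matrix.diagonal z - B)⁻¹.mulVec lam i := by
  classical
  set A : ℝ → Matrix (Fin N) (Fin N) ℝ := fun t => Matrix.diagonal (fun i => z i + t) - B
    with hA
  set p : ℝ → (Fin N → ℝ) := fun t => (A t)⁻¹.mulVec lam with hp
  have hA0 : A 0 = Matrix.diagonal z - B := by
    simp [hA]
  -- the key equation
  have hApt : ∀ t, 0 ≤ t → (A t).mulVec (p t) = lam := by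
    intro t ht
    have hdet : IsUnit (A t).det := isUnit_iff_ne_zero.mpr (omega_det_ne hz ht)
    rw [hp]
    simp only
    rw [Matrix.mulVec_mulVec, Matrix.mul_nonsing_inv _ hdet, Matrix.one_mulVec]
  have heq : ∀ t, 0 ≤ t → ∀ a, (z a + t) * p t a - ∑ j, B a j * p t j = lam a := by
    intro t ht a
    have h1 := congrFun (hApt t ht) a
    rw [Matrix.sub_mulVec] at h1
    simp only [Pi.sub_apply, Matrix.mulVec_diagonal] at h1
    rw [show (B.mulVec (p t)) a = ∑ j, B a j * p t j from rfl] at h1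
    linarith
  -- minimum principle
  have MP : ∀ t, 0 ≤ t → (∀ i, 0 ≤ p t i) → ∀ i, 0 < p t i := by
    intro t ht hnn
    by_contra h
    push_neg at h
    obtain ⟨i₀, hi₀⟩ := h
    have hi₀0 : p t i₀ = 0 := le_antisymm hi₀ (hnn i₀)
    have hstep : ∀ a, p t a = 0 → ∀ b, 0 < B a b → p t b = 0 := by
      intro a hpa b hab
      have h1 := heq t ht a
      rw [hpa, mul_zero] at h1
      have h2 : ∑ j, B a j * p t j = 0 := by
        have hnnsum : 0 ≤ ∑ j, B a j * p t j :=
          Finset.sum_nonneg fun j _ => mul_nonneg (hBnn a j) (hnn j)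
        linarith [hlam a]
      have h3 := (Finset.sum_eq_zero_iff_of_nonneg
        (fun j _ => mul_nonneg (hBnn a j) (hnn j))).mp h2 b (Finset.mem_univ b)
      rcases mul_eq_zero.mp h3 with h | h
      · exact absurd h (ne_of_gt hab)
      · exact h
    have hall := irred_prop hBnn hBirr (fun a => p t a = 0) hstep hi₀0
    apply hlam0
    funext a
    have h1 := heq t ht a
    rw [hall a, mul_zero] at h1
    rw [Finset.sum_eq_zero (fun j _ => by rw [hall j, mul_zero])] at h1
    simp only [Pi.zero_apply]
    linarith
  -- large t
  set t₁ : ℝ := 1 + ∑ i, ∑ j, B i j with ht₁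
  have hsumnn : 0 ≤ ∑ i, ∑ j, B i j :=
    Finset.sum_nonneg fun i _ => Finset.sum_nonneg fun j _ => hBnn i j
  have ht₁pos : (0:ℝ) < t₁ := by positivity
  have hrow : ∀ a, ∑ j, B a j ≤ ∑ i, ∑ j, B i j :=
    fun a => Finset.single_le_sum (f := fun i => ∑ j, B i j)
      (fun i _ => Finset.sum_nonneg fun j _ => hBnn i j) (Finset.mem_univ a)
  have hlarge : ∀ i, 0 ≤ p t₁ i := by
    by_contra h
    push_neg at h
    obtain ⟨i₂, hi₂⟩ := h
    obtain ⟨a, -, hmin⟩ := Finset.exists_min_image Finset.univ (fun i => p t₁ i)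
      Finset.univ_nonempty
    have hpa : p t₁ a < 0 := lt_of_le_of_lt (hmin i₂ (Finset.mem_univ i₂)) hi₂
    have h1 := heq t₁ ht₁pos.le a
    have h2 : ∑ j, B a j * p t₁ j ≥ p t₁ a * ∑ j, B a j := by
      rw [Finset.mul_sum]
      refine Finset.sum_le_sum fun j _ => ?_
      have := hmin j (Finset.mem_univ j)
      nlinarith [hBnn a j]
    have h3 : p t₁ a * (z a + t₁ - ∑ j, B a j) ≥ lam a := by nlinarith
    have h4 : z a + t₁ - ∑ j, B a j ≥ 1 := by
      have := hrow a
      have := hz.1 a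
      simp only [ht₁] at *
      linarith
    nlinarith [hlam a]
  -- continuity
  have hAc : Continuous A := by
    apply continuous_matrix
    intro i j
    simp only [hA, Matrix.sub_apply, Matrix.diagonal_apply]
    split_ifs
    · exact (continuous_const.add continuous_id).sub continuous_const
    · exact continuous_const
  have hcont : ∀ i, ContinuousOn (fun t => p t i) (Set.Icc 0 t₁) := by
    intro i
    have h1 : ∀ t, p t i = ((A t).det)⁻¹ * ((A t).adjugate.mulVec lam i) := by
      intro t
      rw [hp]
      simp only
      rw [Matrix.inv_def, Ring.inverse_eq_inv, Matrix.smul_mulVec]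
      rfl
    simp only [h1]
    apply ContinuousOn.mul
    · apply ContinuousOn.inv₀
      · exact (hAc.matrix_det).continuousOn
      · intro t ht'
        exact omega_det_ne hz ht'.1
    · apply Continuous.continuousOn
      have hadj : Continuous fun t => (A t).adjugate := hAc.matrix_adjugate
      have : Continuous fun t => ((A t).adjugate).mulVec lam := by
        apply continuous_pi
        intro a
        exact Continuous.dotProduct (continuous_pi fun j => (continuous_apply _).comp
          ((continuous_apply a).comp hadj)) continuous_const
      exact (continuous_apply i).comp this
  -- connectedness glue
  have hfinal : ∀ i, 0 ≤ p 0 i := by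
    by_contra h
    push_neg at h
    obtain ⟨i₀, hi₀⟩ := h
    set K : Set ℝ := ⋃ i, (Set.Icc 0 t₁ ∩ (fun t => p t i) ⁻¹' Set.Iic 0) with hK
    have hKc : IsClosed K :=
      isClosed_iUnion_of_finite fun i =>
        ContinuousOn.preimage_isClosed_of_isClosed (hcont i) isClosed_Icc isClosed_Iic
    have h0K : (0:ℝ) ∈ K :=
      Set.mem_iUnion.mpr ⟨i₀, ⟨Set.mem_Icc.mpr ⟨le_refl 0, ht₁pos.le⟩, le_of_lt hi₀⟩⟩
    have hKsub : K ⊆ Set.Icc 0 t₁ := by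
      intro t htK
      obtain ⟨i, hi⟩ := Set.mem_iUnion.mp htK
      exact hi.1
    have hKbdd : BddAbove K := BddAbove.mono hKsub bddAbove_Icc
    set u : ℝ := sSup K with hu
    have huK : u ∈ K := IsClosed.csSup_mem hKc ⟨0, h0K⟩ hKbdd
    obtain ⟨iu, hiu⟩ := Set.mem_iUnion.mp huK
    have huIcc : u ∈ Set.Icc 0 t₁ := hiu.1
    have hut₁ : u < t₁ := by
      rcases lt_or_eq_of_le huIcc.2 with h | h
      · exact h
      · exfalso
        have := MP t₁ ht₁pos.le hlarge iu
        rw [← h] at this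
        exact absurd hiu.2 (not_le.mpr this)
    have hIoc : ∀ s ∈ Set.Ioc u t₁, ∀ i, 0 < p s i := by
      intro s hs i
      by_contra hcon
      push_neg at hcon
      have hsK : s ∈ K := Set.mem_iUnion.mpr
        ⟨i, ⟨Set.mem_Icc.mpr ⟨le_trans huIcc.1 hs.1.le, hs.2⟩, hcon⟩⟩
      exact absurd (le_csSup hKbdd hsK) (not_le.mpr hs.1)
    have hunn : ∀ i, 0 ≤ p u i := by
      intro i
      have hCc : IsClosed (Set.Icc 0 t₁ ∩ (fun t => p t i) ⁻¹' Set.Ici 0) :=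
        ContinuousOn.preimage_isClosed_of_isClosed (hcont i) isClosed_Icc isClosed_Ici
      have hsub : Set.Ioc u t₁ ⊆ Set.Icc 0 t₁ ∩ (fun t => p t i) ⁻¹' Set.Ici 0 := by
        intro s hs
        exact ⟨Set.mem_Icc.mpr ⟨le_trans huIcc.1 hs.1.le, hs.2⟩, (hIoc s hs i).le⟩
      have hcl : u ∈ Set.Icc 0 t₁ ∩ (fun t => p t i) ⁻¹' Set.Ici 0 := by
        have h1 : u ∈ closure (Set.Ioc u t₁) := by
          rw [closure_Ioc (ne_of_lt hut₁)]
          exact Set.mem_Icc.mpr ⟨le_refl u, hut₁.le⟩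
        have h2 : closure (Set.Ioc u t₁) ⊆ Set.Icc 0 t₁ ∩ (fun t => p t i) ⁻¹' Set.Ici 0 := by
          have h3 := closure_mono hsub
          rwa [hCc.closure_eq] at h3
        exact h2 h1
      exact hcl.2
    have := MP u huIcc.1 hunn iu
    exact absurd hiu.2 (not_le.mpr this)
  intro i
  have := hfinal i
  rw [hp] at this
  simp only at this
  rw [hA0] at this
  exact this

end AuxStatement8

theorem statement8 {N : ℕ} (hN : 2 ≤ N)
    (B : Matrix (Fin N) (Fin N) ℝ) (hBnn : ∀ i j, 0 ≤ B i j) (hBirr : MatIrred B)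
    (lam δ α : Fin N → ℝ)
    (hlam : ∀ i, 0 ≤ lam i) (hlam0 : lam ≠ 0)
    (hδ : ∀ i, 0 < δ i) (hα : ∀ i, 0 < α i)
    (w : (Fin N → ℝ) → ℝ) (hwcont : Continuous w)
    (hwconv : ConvexOn ℝ Set.univ w)
    (hwmono : ∀ s s' : Fin N → ℝ, s ≤ s' → s ≠ s' → w s < w s')
    (hwdiff : Differentiable ℝ w)
    (c : Fin N → ℝ) (hc : ∀ i, 0 < c i)
    (hgrad : ∀ s : Fin N → ℝ, 0 ≤ s → ∀ i,
      ∑ j, B j i * (α j)⁻¹ * fderiv ℝ w s (Pi.single j 1) ≤ c i)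
    (sR pR zR : Fin N → ℝ)
    (hfeas : FeasPR1 B lam δ α sR pR zR)
    (hopt : ∀ s p z : Fin N → ℝ, FeasPR1 B lam δ α s p z →
      fobj w c sR pR ≤ fobj w c s p)
    (ptil stil : Fin N → ℝ)
    (hptil : ptil = (Matrix.diagonal zR - B)⁻¹.mulVec lam)
    (hstil : stil = fun i => sR i + (α i)⁻¹ * B.mulVec (fun j => pR j - ptil j) i) :
    fobj w c stil ptil = fobj w c sR pR ∧
    fobj w c sR pR = sInf {v | ∃ s p, FeasP B lam δ α s p ∧ v = fobj w c s p} ∧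
    FeasP B lam δ α stil ptil ∧
    (∀ s p : Fin N → ℝ, FeasP B lam δ α s p → fobj w c stil ptil ≤ fobj w c s p) ∧
    sInf {v | ∃ s p z, FeasPR1 B lam δ α s p z ∧ v = fobj w c s p} =
      sInf {v | ∃ s p, FeasP B lam δ α s p ∧ v = fobj w c s p} := by
  classical
  have hNe : Nonempty (Fin N) := ⟨⟨0, by omega⟩⟩
  obtain ⟨hsR, hpR1, hzRΩ, hpRge, hzReq⟩ := hfeas
  -- basic facts about ptil
  have hptil0 : ∀ i, 0 ≤ ptil i := by
    rw [hptil]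
    exact inv_mulVec_nonneg hNe hBnn hBirr hlam hlam0 hzRΩ
  have hptil_le : ∀ i, ptil i ≤ pR i := by
    intro i; rw [hptil]; exact hpRge i
  have hdet0 : (Matrix.diagonal zR - B).det ≠ 0 := by
    have h := omega_det_ne hzRΩ (le_refl (0:ℝ))
    simpa using h
  have hAptil : (Matrix.diagonal zR - B).mulVec ptil = lam := by
    rw [hptil, Matrix.mulVec_mulVec, Matrix.mul_nonsing_inv _ (isUnit_iff_ne_zero.mpr hdet0),
      Matrix.one_mulVec]
  have hAptile : ∀ a, zR a * ptil a - B.mulVec ptil a = lam a := by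
    intro a
    have h := congrFun hAptil a
    rw [Matrix.sub_mulVec] at h
    simp only [Pi.sub_apply, Matrix.mulVec_diagonal] at h
    linarith
  -- z-identity for stil
  have hsub : B.mulVec (fun j => pR j - ptil j) = B.mulVec pR - B.mulVec ptil := by
    rw [show (fun j => pR j - ptil j) = pR - ptil from rfl, Matrix.mulVec_sub]
  have hzeq : ∀ i, α i * stil i + δ i + lam i + B.mulVec ptil i = zR i := by
    intro i
    rw [hstil]
    simp only
    rw [hsub]
    have h1 : α i * (sR i + (α i)⁻¹ * (B.mulVec pR - B.mulVec ptil) i)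
        = α i * sR i + (B.mulVec pR i - B.mulVec ptil i) := by
      have hαi : α i ≠ 0 := (hα i).ne'
      field_simp
      rw [Pi.sub_apply]
    rw [h1]
    have h2 := hzReq i
    linarith
  have hstil0 : ∀ i, 0 ≤ stil i := by
    intro i
    rw [hstil]
    simp only
    have h1 : 0 ≤ B.mulVec (fun j => pR j - ptil j) i := by
      rw [show B.mulVec (fun j => pR j - ptil j) i = ∑ j, B i j * (pR j - ptil j) from rfl]
      exact Finset.sum_nonneg fun j _ =>
        mul_nonneg (hBnn i j) (sub_nonneg.mpr (hptil_le j))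
    have h2 : 0 ≤ (α i)⁻¹ := (inv_pos.mpr (hα i)).le
    nlinarith [hsR i]
  -- (stil, ptil, zR) is feasible for (P_R1)
  have hfeas2 : FeasPR1 B lam δ α stil ptil zR := by
    refine ⟨hstil0, fun i => le_trans (hptil_le i) (hpR1 i), hzRΩ, ?_, fun i => (hzeq i).symm⟩
    intro i
    rw [← hptil]
  have hle1 : fobj w c sR pR ≤ fobj w c stil ptil := hopt stil ptil zR hfeas2
  -- gradient inequality
  have hDle : fderiv ℝ w stil (stil - sR) ≤ ∑ i, c i * (pR i - ptil i) := by
    rw [fderiv_expand (fderiv ℝ w stil) (stil - sR)]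
    have hstep1 : ∀ j, (stil - sR) j * (fderiv ℝ w stil) (Pi.single j 1)
        = ∑ i, (B j i * (α j)⁻¹ * (fderiv ℝ w stil) (Pi.single j 1)) * (pR i - ptil i) := by
      intro j
      have h1 : (stil - sR) j = (α j)⁻¹ * ∑ i, B j i * (pR i - ptil i) := by
        rw [hstil]
        simp only [Pi.sub_apply]
        rw [show B.mulVec (fun k => pR k - ptil k) j = ∑ i, B j i * (pR i - ptil i) from rfl]
        ring
      rw [h1, Finset.mul_sum, Finset.sum_mul]
      exact Finset.sum_congr rfl fun i _ => by ring
    rw [Finset.sum_congr rfl (fun j _ => hstep1 j), Finset.sum_comm]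
    refine Finset.sum_le_sum fun i _ => ?_
    rw [← Finset.sum_mul]
    have h2 : ∑ j, B j i * (α j)⁻¹ * (fderiv ℝ w stil) (Pi.single j 1) ≤ c i :=
      hgrad stil (fun k => hstil0 k) i
    have h3 : 0 ≤ pR i - ptil i := sub_nonneg.mpr (hptil_le i)
    exact mul_le_mul_of_nonneg_right h2 h3
  have hle2 : fobj w c stil ptil ≤ fobj w c sR pR := by
    have hD := grad_le hwconv hwdiff stil sR
    have hneg : fderiv ℝ w stil (stil - sR) = -(fderiv ℝ w stil (sR - stil)) := by
      rw [show stil - sR = -(sR - stil) from by abel, map_neg]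
    have hw1 : w stil - w sR ≤ ∑ i, c i * (pR i - ptil i) := by
      rw [hneg] at hDle
      linarith
    have hsplit : ∑ i, c i * (pR i - ptil i) = ∑ i, c i * pR i - ∑ i, c i * ptil i := by
      rw [← Finset.sum_sub_distrib]
      exact Finset.sum_congr rfl fun i _ => by ring
    rw [fobj, fobj]
    rw [hsplit] at hw1
    linarith
  have feq1 : fobj w c stil ptil = fobj w c sR pR := le_antisymm hle2 hle1
  -- (stil, ptil) is feasible for (P)
  have hFeasPtil : FeasP B lam δ α stil ptil := by
    refine ⟨hstil0, hptil0, ?_⟩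
    funext i
    show (1 - ptil i) * (lam i + B.mulVec ptil i) - (α i * stil i + δ i) * ptil i = 0
    have h1 : lam i + B.mulVec ptil i = zR i * ptil i := by linarith [hAptile i]
    have h2 : α i * stil i + δ i = zR i - (lam i + B.mulVec ptil i) := by linarith [hzeq i]
    rw [h2, h1]
    ring
  -- lifting feasible points of (P) to (P_R1)
  have hlift : ∀ s p : Fin N → ℝ, FeasP B lam δ α s p →
      FeasPR1 B lam δ α s p (fun i => α i * s i + δ i + lam i + B.mulVec p i) := by
    intro s p hf
    obtain ⟨hs, hp, hg⟩ := hf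
    set z : Fin N → ℝ := fun i => α i * s i + δ i + lam i + B.mulVec p i with hz
    have hzpos : ∀ i, 0 < z i := by
      intro i
      have h1 : 0 ≤ B.mulVec p i := mulVec_nonneg hBnn hp i
      have := mul_nonneg (hα i).le (hs i)
      simp only [hz]
      linarith [hδ i, hlam i]
    have hppos := feas_pos hδ hα hlam hlam0 hBnn hBirr hs hp hg
    have hAps : (Matrix.diagonal z - B).mulVec p = lam := feas_mulVec hg
    have hApse : ∀ a, z a * p a - ∑ j, B a j * p j = lam a := by
      intro a
      have h := congrFun hAps a
      rw [Matrix.sub_mulVec] at h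
      simp only [Pi.sub_apply, Matrix.mulVec_diagonal] at h
      rw [show B.mulVec p a = ∑ j, B a j * p j from rfl] at h
      linarith
    have hzΩ : z ∈ OmegaSet B :=
      ⟨fun i => (hzpos i).le, eigen_re_pos hBnn hBirr hlam hlam0 hzpos hppos hApse⟩
    have hdetz : (Matrix.diagonal z - B).det ≠ 0 := by
      have h := omega_det_ne hzΩ (le_refl (0:ℝ))
      simpa using h
    have hinv : (Matrix.diagonal z - B)⁻¹.mulVec lam = p := by
      rw [← hAps, Matrix.mulVec_mulVec,
        Matrix.nonsing_inv_mul _ (isUnit_iff_ne_zero.mpr hdetz), Matrix.one_mulVec]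
    exact ⟨hs, fun i => (feas_lt_one hδ hα hlam hBnn hs hp hg i).le, hzΩ,
      fun i => le_of_eq (congrFun hinv i), fun i => rfl⟩
  -- lower bound for all feasible points of (P)
  have hlb : ∀ s p : Fin N → ℝ, FeasP B lam δ α s p → fobj w c sR pR ≤ fobj w c s p := by
    intro s p hf
    exact hopt s p _ (hlift s p hf)
  -- the infimum characterizations
  have hmemP : fobj w c sR pR ∈ {v | ∃ s p, FeasP B lam δ α s p ∧ v = fobj w c s p} :=
    ⟨stil, ptil, hFeasPtil, feq1.symm⟩
  have hlbP : ∀ v ∈ {v | ∃ s p, FeasP B lam δ α s p ∧ v = fobj w c s p},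
      fobj w c sR pR ≤ v := by
    rintro v ⟨s, p, hf, rfl⟩
    exact hlb s p hf
  have hInfP : sInf {v | ∃ s p, FeasP B lam δ α s p ∧ v = fobj w c s p} = fobj w c sR pR :=
    le_antisymm (csInf_le ⟨fobj w c sR pR, hlbP⟩ hmemP) (le_csInf ⟨_, hmemP⟩ hlbP)
  have hmemR : fobj w c sR pR ∈
      {v | ∃ s p z, FeasPR1 B lam δ α s p z ∧ v = fobj w c s p} :=
    ⟨sR, pR, zR, ⟨hsR, hpR1, hzRΩ, hpRge, hzReq⟩, rfl⟩
  have hlbR : ∀ v ∈ {v | ∃ s p z, FeasPR1 B lam δ α s p z ∧ v = fobj w c s p},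
      fobj w c sR pR ≤ v := by
    rintro v ⟨s, p, z, hf, rfl⟩
    exact hopt s p z hf
  have hInfR : sInf {v | ∃ s p z, FeasPR1 B lam δ α s p z ∧ v = fobj w c s p}
      = fobj w c sR pR :=
    le_antisymm (csInf_le ⟨fobj w c sR pR, hlbR⟩ hmemR) (le_csInf ⟨_, hmemR⟩ hlbR)
  refine ⟨feq1, hInfP.symm, hFeasPtil, ?_, by rw [hInfR, hInfP]⟩
  intro s p hf
  rw [feq1]
  exact hlb s p hf
end
end

section
/- Let (s⁺, p⁺, y⁺, t⁺, U⁺) be a feasible point of problem (P_R2) that attains its optimal value. Define p′ := e^{−y⁺} and s′ := s⁺ + diag(α)^{-1}·B·(p⁺ − p′). Then (s′, p′) is feasible for problem (P), i.e., s′ ≥ 0, p′ ≥ 0 and g(s′, p′) = 0, and f(s⁺, p⁺) ≤ f* ≤ f(s′, p′). -/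
noncomputable section

open Matrix

/-- Feasibility for the convex relaxation (P_R2) based on exponential cones. -/
def FeasPR2 {N : ℕ} (B : Matrix (Fin N) (Fin N) ℝ) (lam δ α : Fin N → ℝ)
    (s p y t : Fin N → ℝ) (U : Matrix (Fin N) (Fin N) ℝ) : Prop :=
  (∀ i, 0 ≤ s i) ∧ (∀ i, 0 ≤ y i) ∧
  (∀ i, t i + ∑ j, U i j = lam i + B.mulVec p i + α i * s i + δ i) ∧
  (∀ i, Real.exp (-(y i)) ≤ p i) ∧ (∀ i, p i ≤ 1) ∧
  (∀ i, lam i * Real.exp (y i) ≤ t i) ∧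
  (∀ i j, Real.exp (y i) * B i j * Real.exp (-(y j)) ≤ U i j)

lemma mulVec_apply' {N : ℕ} (B : Matrix (Fin N) (Fin N) ℝ) (p : Fin N → ℝ) (i : Fin N) :
    B.mulVec p i = ∑ j, B i j * p j := by
  simp [Matrix.mulVec, dotProduct]

lemma powEntryNonneg {N : ℕ} (B : Matrix (Fin N) (Fin N) ℝ) (hBnn : ∀ i j, 0 ≤ B i j) :
    ∀ k, ∀ i j, 0 ≤ (B ^ k) i j := by
  intro k
  induction k with
  | zero => intro i j; rw [pow_zero, Matrix.one_apply]; split <;> norm_num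
  | succ k ih =>
    intro i j
    rw [pow_succ, Matrix.mul_apply]
    exact Finset.sum_nonneg fun m _ => mul_nonneg (ih i m) (hBnn m j)

/-- Any feasible point of (P) has strictly positive `p`. -/
lemma feasP_pos {N : ℕ} (B : Matrix (Fin N) (Fin N) ℝ) (hBnn : ∀ i j, 0 ≤ B i j)
    (hBirr : MatIrred B) (lam δ α : Fin N → ℝ) (hlam : ∀ i, 0 ≤ lam i) (hlam0 : lam ≠ 0)
    (s p : Fin N → ℝ) (h : FeasP B lam δ α s p) :
    ∀ i, 0 < p i := by
  obtain ⟨hs, hp, hg⟩ := h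
  have hg' : ∀ i, (1 - p i) * (lam i + B.mulVec p i) = (α i * s i + δ i) * p i := by
    intro i
    have := congrFun hg i
    simp only [gfun, Pi.zero_apply] at this
    linarith
  have hBp : ∀ i, 0 ≤ B.mulVec p i := fun i => by
    rw [mulVec_apply']
    exact Finset.sum_nonneg fun j _ => mul_nonneg (hBnn i j) (hp j)
  have hzero : ∀ i, p i = 0 → B.mulVec p i = 0 ∧ lam i = 0 := by
    intro i h0
    have h1 := hg' i
    rw [h0] at h1
    simp at h1
    constructor <;> linarith [hlam i, hBp i]
  by_cases hp0 : p = 0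
  · exfalso
    apply hlam0
    funext i
    exact (hzero i (by rw [hp0]; rfl)).2
  obtain ⟨j, hj⟩ := Function.ne_iff.mp hp0
  have hjpos : 0 < p j := lt_of_le_of_ne (hp j) (fun hh => hj hh.symm)
  have key : ∀ k, ∀ i, p i = 0 → (B ^ (k + 1)).mulVec p i = 0 := by
    intro k
    induction k with
    | zero => intro i h0; rw [pow_one]; exact (hzero i h0).1
    | succ k ih =>
      intro i h0
      have hsplit : (B ^ (k + 1 + 1)).mulVec p i = ∑ m, B i m * (B ^ (k + 1)).mulVec p m := by
        rw [pow_succ', ← Matrix.mulVec_mulVec, mulVec_apply']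
      rw [hsplit]
      apply Finset.sum_eq_zero
      intro m _
      by_cases hm : p m = 0
      · rw [ih m hm, mul_zero]
      · have h1 := (hzero i h0).1
        rw [mulVec_apply'] at h1
        have h2 : ∀ x ∈ Finset.univ, 0 ≤ B i x * p x := fun x _ => mul_nonneg (hBnn i x) (hp x)
        have h3 := (Finset.sum_eq_zero_iff_of_nonneg h2).mp h1 m (Finset.mem_univ m)
        have hBim : B i m = 0 := by
          rcases mul_eq_zero.mp h3 with h | h
          · exact h
          · exact absurd h hm
        rw [hBim, zero_mul]
  intro i
  rcases lt_or_eq_of_le (hp i) with h | h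
  · exact h
  exfalso
  obtain ⟨k, hk1, hkpos⟩ := hBirr i j
  obtain ⟨k', rfl⟩ : ∃ k', k = k' + 1 := ⟨k - 1, by omega⟩
  have h1 := key k' i h.symm
  rw [mulVec_apply'] at h1
  have hterm : (B ^ (k' + 1)) i j * p j ≤ ∑ m, (B ^ (k' + 1)) i m * p m :=
    Finset.single_le_sum (fun m _ => mul_nonneg (powEntryNonneg B hBnn _ i m) (hp m))
      (Finset.mem_univ j)
  rw [h1] at hterm
  nlinarith

/-- Any feasible point of (P) has `p < 1`. -/
lemma feasP_lt_one {N : ℕ} (B : Matrix (Fin N) (Fin N) ℝ) (hBnn : ∀ i j, 0 ≤ B i j)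
    (hBirr : MatIrred B) (lam δ α : Fin N → ℝ) (hlam : ∀ i, 0 ≤ lam i) (hlam0 : lam ≠ 0)
    (hδ : ∀ i, 0 < δ i) (hα : ∀ i, 0 < α i)
    (s p : Fin N → ℝ) (h : FeasP B lam δ α s p) :
    ∀ i, p i < 1 := by
  have hpos := feasP_pos B hBnn hBirr lam δ α hlam hlam0 s p h
  obtain ⟨hs, hp, hg⟩ := h
  intro i
  have hg' : (1 - p i) * (lam i + B.mulVec p i) = (α i * s i + δ i) * p i := by
    have := congrFun hg i
    simp only [gfun, Pi.zero_apply] at this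
    linarith
  have hBp : 0 ≤ B.mulVec p i := by
    rw [mulVec_apply']
    exact Finset.sum_nonneg fun j _ => mul_nonneg (hBnn i j) (hp j)
  by_contra hcon
  push_neg at hcon
  have h1 : (1 - p i) * (lam i + B.mulVec p i) ≤ 0 :=
    mul_nonpos_iff.mpr (Or.inr ⟨by linarith, by linarith [hlam i]⟩)
  have h2 : 0 < (α i * s i + δ i) * p i := by
    apply mul_pos _ (hpos i)
    nlinarith [mul_nonneg (hα i).le (hs i), hδ i]
  linarith

lemma sum_ite_sub {N : ℕ} (f : Fin N → ℝ) (i : Fin N) (a : ℝ) :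
    ∑ j, (if j = i then f i - a else f j) = (∑ j, f j) - a := by
  have h : ∀ j, (if j = i then f i - a else f j) = f j - (if j = i then a else 0) := by
    intro j; by_cases hj : j = i <;> simp [hj]
  simp only [h, Finset.sum_sub_distrib, Finset.sum_ite_eq' Finset.univ i (fun _ => a),
    Finset.mem_univ, if_true]

/-- Tightness of the exponential-cone constraints at an optimal point of (P_R2). -/
lemma tightRow {N : ℕ}
    (B : Matrix (Fin N) (Fin N) ℝ) (hBnn : ∀ i j, 0 ≤ B i j)
    (lam δ α : Fin N → ℝ) (hlam : ∀ i, 0 ≤ lam i)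
    (w : (Fin N → ℝ) → ℝ) (c : Fin N → ℝ) (hc : ∀ i, 0 < c i)
    (sP pP yP tP : Fin N → ℝ) (UP : Matrix (Fin N) (Fin N) ℝ)
    (hfeas : FeasPR2 B lam δ α sP pP yP tP UP)
    (hopt : ∀ (s p y t : Fin N → ℝ) (U : Matrix (Fin N) (Fin N) ℝ),
      FeasPR2 B lam δ α s p y t U → fobj w c sP pP ≤ fobj w c s p)
    (i : Fin N) :
    tP i + ∑ j, UP i j = Real.exp (yP i) * (lam i + ∑ j, B i j * Real.exp (-(yP j))) := by
  obtain ⟨hs, hy, heq, hpl, hpu, ht, hU⟩ := hfeas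
  set S : ℝ := ∑ j, B i j * Real.exp (-(yP j)) with hS
  have hSnn : 0 ≤ S := Finset.sum_nonneg fun j _ => mul_nonneg (hBnn i j) (Real.exp_nonneg _)
  have hge : Real.exp (yP i) * (lam i + S) ≤ tP i + ∑ j, UP i j := by
    have h1 : ∑ j, Real.exp (yP i) * B i j * Real.exp (-(yP j)) ≤ ∑ j, UP i j :=
      Finset.sum_le_sum fun j _ => hU i j
    have h2 : Real.exp (yP i) * (lam i + S) =
        lam i * Real.exp (yP i) + ∑ j, Real.exp (yP i) * B i j * Real.exp (-(yP j)) := by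
      rw [mul_add, hS, Finset.mul_sum, mul_comm (Real.exp (yP i)) (lam i)]
      congr 1
      exact Finset.sum_congr rfl fun j _ => (mul_assoc _ _ _).symm
    rw [h2]
    exact add_le_add (ht i) h1
  rcases eq_or_lt_of_le hge with h | hlt
  · exact h.symm
  exfalso
  set ε : ℝ := tP i + ∑ j, UP i j - Real.exp (yP i) * (lam i + S) with hε
  have hεpos : 0 < ε := by simp only [hε]; linarith
  have hCnn : 0 ≤ Real.exp (yP i) * (lam i + S) :=
    mul_nonneg (Real.exp_nonneg _) (add_nonneg (hlam i) hSnn)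
  set C : ℝ := Real.exp (yP i) * (lam i + S) with hC
  set dy : ℝ := Real.log (1 + ε / (C + 1)) with hdy
  have hfrac : 0 < ε / (C + 1) := div_pos hεpos (by linarith)
  have hdypos : 0 < dy := Real.log_pos (by linarith)
  have hexpdy : Real.exp dy = 1 + ε / (C + 1) := Real.exp_log (by linarith)
  have hkey : (Real.exp dy - 1) * C ≤ ε := by
    rw [hexpdy]
    have he : (1 + ε / (C + 1) - 1) * C = ε * (C / (C + 1)) := by
      field_simp
      ring
    rw [he]
    have h1 : C / (C + 1) ≤ 1 := by
      rw [div_le_one (by linarith)]; linarith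
    nlinarith
  set θ : ℝ := Real.exp (-(yP i)) * (1 - Real.exp (-dy)) with hθ
  have hedlt : Real.exp (-dy) < 1 := by
    have := Real.exp_lt_exp.mpr (show -dy < 0 by linarith)
    simpa using this
  have hθpos : 0 < θ := mul_pos (Real.exp_pos _) (by linarith)
  have heyi1 : Real.exp (-(yP i)) ≤ 1 := by
    have := Real.exp_le_exp.mpr (show -(yP i) ≤ 0 by linarith [hy i])
    simpa using this
  have hθle : θ ≤ 1 - Real.exp (-dy) := by
    rw [hθ]
    nlinarith [Real.exp_pos (-dy)]
  have honele : (1 : ℝ) ≤ Real.exp dy := Real.one_le_exp hdypos.le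
  have hinv : Real.exp (-dy) * Real.exp dy = 1 := by
    rw [← Real.exp_add]; simp
  have hcmp : 1 - Real.exp (-dy) ≤ Real.exp dy - 1 := by
    nlinarith [sq_nonneg (Real.exp dy - 1)]
  set y' : Fin N → ℝ := fun j => if j = i then yP i + dy else yP j with hy'
  set p' : Fin N → ℝ := fun j => if j = i then pP i - θ else pP j with hp'
  set U' : Matrix (Fin N) (Fin N) ℝ := fun k j =>
    if k = i then Real.exp (yP i + dy) * B i j * Real.exp (-(y' j))
    else if j = i then UP k i - B k i * θ else UP k j with hU'
  set t' : Fin N → ℝ := fun k =>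
    if k = i then (lam i + B.mulVec p' i + α i * sP i + δ i) - ∑ j, U' i j else tP k with ht'
  have hy'i : y' i = yP i + dy := by simp [hy']
  have hy'ne : ∀ j, j ≠ i → y' j = yP j := fun j hj => by simp [hy', hj]
  have hp'i : p' i = pP i - θ := by simp [hp']
  have hp'ne : ∀ j, j ≠ i → p' j = pP j := fun j hj => by simp [hp', hj]
  have hU'i : ∀ j, U' i j = Real.exp (yP i + dy) * B i j * Real.exp (-(y' j)) := fun j => by
    simp [hU']
  have hU'ne : ∀ k j, k ≠ i → j ≠ i → U' k j = UP k j := fun k j hk hj => by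
    simp [hU', hk, hj]
  have hU'ki : ∀ k, k ≠ i → U' k i = UP k i - B k i * θ := fun k hk => by simp [hU', hk]
  have ht'i : t' i = (lam i + B.mulVec p' i + α i * sP i + δ i) - ∑ j, U' i j := by simp [ht']
  have ht'ne : ∀ k, k ≠ i → t' k = tP k := fun k hk => by simp [ht', hk]
  have hmv : ∀ k, B.mulVec p' k = B.mulVec pP k - B k i * θ := by
    intro k
    rw [mulVec_apply', mulVec_apply']
    have h : ∀ j, B k j * p' j = B k j * pP j - (if j = i then B k i * θ else 0) := by
      intro j
      by_cases hj : j = i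
      · rw [hj, hp'i, if_pos rfl]; ring
      · rw [hp'ne j hj, if_neg hj]; ring
    simp only [h, Finset.sum_sub_distrib, Finset.sum_ite_eq' Finset.univ i
      (fun _ => B k i * θ), Finset.mem_univ, if_true]
  have hU'sum : ∀ k, k ≠ i → ∑ j, U' k j = (∑ j, UP k j) - B k i * θ := by
    intro k hk
    have h : ∀ j, U' k j = UP k j - (if j = i then B k i * θ else 0) := by
      intro j
      by_cases hj : j = i
      · rw [hj, hU'ki k hk, if_pos rfl]
      · rw [hU'ne k j hk hj, if_neg hj]; ring
    simp only [h, Finset.sum_sub_distrib, Finset.sum_ite_eq' Finset.univ i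
      (fun _ => B k i * θ), Finset.mem_univ, if_true]
  have e1 : Real.exp (yP i + dy) * Real.exp (-(yP i + dy)) = 1 := by
    rw [← Real.exp_add, show yP i + dy + -(yP i + dy) = 0 by ring, Real.exp_zero]
  have e2 : Real.exp (yP i + dy) * Real.exp (-(yP i)) = Real.exp dy := by
    rw [← Real.exp_add]; congr 1; ring
  have e3 : Real.exp (-(yP i + dy)) = Real.exp (-(yP i)) * Real.exp (-dy) := by
    rw [← Real.exp_add]; congr 1; ring
  have e4 : Real.exp (yP i + dy) = Real.exp (yP i) * Real.exp dy := Real.exp_add _ _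
  have hUrowi : ∑ j, U' i j = Real.exp (yP i + dy) * S - (Real.exp dy - 1) * B i i := by
    have h : ∀ j, U' i j = Real.exp (yP i + dy) * (B i j * Real.exp (-(yP j)))
        - (if j = i then (Real.exp dy - 1) * B i i else 0) := by
      intro j
      by_cases hj : j = i
      · rw [hj, hU'i i, hy'i, if_pos rfl]
        linear_combination (B i i) * e1 - (B i i) * e2
      · rw [hU'i j, hy'ne j hj, if_neg hj]; ring
    simp only [h, Finset.sum_sub_distrib, Finset.sum_ite_eq' Finset.univ i
      (fun _ => (Real.exp dy - 1) * B i i), Finset.mem_univ, if_true, ← Finset.mul_sum, ← hS]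
  have hfeas' : FeasPR2 B lam δ α sP p' y' t' U' := by
    refine ⟨hs, ?_, ?_, ?_, ?_, ?_, ?_⟩
    · intro j
      by_cases hj : j = i
      · rw [hj, hy'i]; linarith [hy i]
      · rw [hy'ne j hj]; exact hy j
    · intro k
      by_cases hk : k = i
      · rw [hk, ht'i]; ring
      · rw [ht'ne k hk, hU'sum k hk, hmv k]
        linarith only [heq k]
    · intro j
      by_cases hj : j = i
      · rw [hj, hy'i, hp'i, e3, hθ]
        linarith only [hpl i]
      · rw [hy'ne j hj, hp'ne j hj]; exact hpl j
    · intro j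
      by_cases hj : j = i
      · rw [hj, hp'i]; linarith only [hpu i, hθpos]
      · rw [hp'ne j hj]; exact hpu j
    · intro k
      by_cases hk : k = i
      · rw [hk, hy'i, ht'i, hmv i, hUrowi, e4]
        have hkey' : (Real.exp dy - 1) * (Real.exp (yP i) * (lam i + S)) ≤ ε := by
          rw [← hC]; exact hkey
        have hεeq : ε = tP i + ∑ j, UP i j - Real.exp (yP i) * (lam i + S) := by
          rw [hε, hC]
        have hBfact : 0 ≤ B i i * (Real.exp dy - 1 - θ) :=
          mul_nonneg (hBnn i i) (by linarith)
        linarith only [hkey', hεeq, heq i, hBfact]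
      · rw [hy'ne k hk, ht'ne k hk]; exact ht k
    · intro k j
      by_cases hk : k = i
      · rw [hk, hy'i, hU'i j]
      · by_cases hj : j = i
        · rw [hj, hy'i, hy'ne k hk, hU'ki k hk, e3, hθ]
          have hprod : 0 ≤ (Real.exp (yP k) - 1) *
              (B k i * Real.exp (-(yP i)) * (1 - Real.exp (-dy))) :=
            mul_nonneg (sub_nonneg.mpr (Real.one_le_exp (hy k)))
              (mul_nonneg (mul_nonneg (hBnn k i) (Real.exp_nonneg _)) (by linarith))
          linarith only [hU k i, hprod]
        · rw [hy'ne k hk, hy'ne j hj, hU'ne k j hk hj]; exact hU k j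
  have hle := hopt sP p' y' t' U' hfeas'
  have hobj : fobj w c sP p' = fobj w c sP pP - c i * θ := by
    unfold fobj
    have h : ∀ j, c j * p' j = c j * pP j - (if j = i then c i * θ else 0) := by
      intro j
      by_cases hj : j = i
      · rw [hj, hp'i, if_pos rfl]; ring
      · rw [hp'ne j hj, if_neg hj]; ring
    simp only [h, Finset.sum_sub_distrib, Finset.sum_ite_eq' Finset.univ i
      (fun _ => c i * θ), Finset.mem_univ, if_true]
    ring
  rw [hobj] at hle
  linarith only [hle, mul_pos (hc i) hθpos]

theorem statement10 {N : ℕ} (hN : 2 ≤ N)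
    (B : Matrix (Fin N) (Fin N) ℝ) (hBnn : ∀ i j, 0 ≤ B i j) (hBirr : MatIrred B)
    (lam δ α : Fin N → ℝ)
    (hlam : ∀ i, 0 ≤ lam i) (hlam0 : lam ≠ 0)
    (hδ : ∀ i, 0 < δ i) (hα : ∀ i, 0 < α i)
    (w : (Fin N → ℝ) → ℝ) (hwcont : Continuous w)
    (hwconv : ConvexOn ℝ Set.univ w)
    (hwmono : ∀ s s' : Fin N → ℝ, s ≤ s' → s ≠ s' → w s < w s')
    (c : Fin N → ℝ) (hc : ∀ i, 0 < c i)
    (sP pP yP tP : Fin N → ℝ) (UP : Matrix (Fin N) (Fin N) ℝ)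
    (hfeas : FeasPR2 B lam δ α sP pP yP tP UP)
    (hopt : ∀ (s p y t : Fin N → ℝ) (U : Matrix (Fin N) (Fin N) ℝ),
      FeasPR2 B lam δ α s p y t U → fobj w c sP pP ≤ fobj w c s p)
    (p' s' : Fin N → ℝ)
    (hp' : p' = fun i => Real.exp (-(yP i)))
    (hs' : s' = fun i => sP i + (α i)⁻¹ * B.mulVec (fun j => pP j - p' j) i) :
    FeasP B lam δ α s' p' ∧
    fobj w c sP pP ≤ sInf {v | ∃ s p, FeasP B lam δ α s p ∧ v = fobj w c s p} ∧
    sInf {v | ∃ s p, FeasP B lam δ α s p ∧ v = fobj w c s p} ≤ fobj w c s' p' := by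
  obtain ⟨hs, hy, heq, hpl, hpu, ht, hU⟩ := hfeas
  have htight := tightRow B hBnn lam δ α hlam w c hc sP pP yP tP UP
    ⟨hs, hy, heq, hpl, hpu, ht, hU⟩ hopt
  -- Feasibility of (s', p')
  have hdiff : ∀ j, 0 ≤ pP j - p' j := by
    intro j; rw [hp']; simp only; linarith [hpl j]
  have hfeasP : FeasP B lam δ α s' p' := by
    refine ⟨?_, ?_, ?_⟩
    · intro i
      rw [hs']
      have h1 : 0 ≤ B.mulVec (fun j => pP j - p' j) i := by
        rw [mulVec_apply']
        exact Finset.sum_nonneg fun j _ => mul_nonneg (hBnn i j) (hdiff j)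
      have h2 : 0 ≤ (α i)⁻¹ := inv_nonneg.mpr (hα i).le
      exact add_nonneg (hs i) (mul_nonneg h2 h1)
    · intro i; rw [hp']; positivity
    · funext i
      simp only [gfun, Pi.zero_apply]
      have hmvd : B.mulVec (fun j => pP j - p' j) i = B.mulVec pP i - B.mulVec p' i := by
        rw [mulVec_apply', mulVec_apply', mulVec_apply', ← Finset.sum_sub_distrib]
        exact Finset.sum_congr rfl fun j _ => by ring
      have hmvp' : B.mulVec p' i = ∑ j, B i j * Real.exp (-(yP j)) := by
        rw [mulVec_apply', hp']
      have hq : Real.exp (-(yP i)) * Real.exp (yP i) = 1 := by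
        rw [← Real.exp_add]; simp
      have h12 : lam i + B.mulVec pP i + α i * sP i + δ i
          = Real.exp (yP i) * (lam i + B.mulVec p' i) := by
        rw [hmvp', ← htight i]
        exact (heq i).symm
      have hainv : α i * (α i)⁻¹ = 1 := mul_inv_cancel₀ (hα i).ne'
      have hp'i : p' i = Real.exp (-(yP i)) := by rw [hp']
      have hs'i : s' i = sP i + (α i)⁻¹ * B.mulVec (fun j => pP j - p' j) i := by rw [hs']
      rw [hs'i, hmvd, hp'i]
      linear_combination (-(Real.exp (-(yP i)))) * h12
        - (lam i + B.mulVec p' i) * hq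
        - (Real.exp (-(yP i)) * (B.mulVec pP i - B.mulVec p' i)) * hainv
  -- lower bound for all feasible points of (P)
  have hlb : ∀ s p, FeasP B lam δ α s p → fobj w c sP pP ≤ fobj w c s p := by
    intro s p hP
    have hpos := feasP_pos B hBnn hBirr lam δ α hlam hlam0 s p hP
    have hlt1 := feasP_lt_one B hBnn hBirr lam δ α hlam hlam0 hδ hα s p hP
    obtain ⟨hs0, hp0, hg0⟩ := hP
    have hg' : ∀ i, (1 - p i) * (lam i + B.mulVec p i) = (α i * s i + δ i) * p i := by
      intro i
      have := congrFun hg0 i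
      simp only [gfun, Pi.zero_apply] at this
      linarith
    set yQ : Fin N → ℝ := fun i => -Real.log (p i) with hyQ
    have hexpQ : ∀ i, Real.exp (-(yQ i)) = p i := by
      intro i; simp only [hyQ, neg_neg]; exact Real.exp_log (hpos i)
    have hexpQ' : ∀ i, Real.exp (yQ i) = (p i)⁻¹ := by
      intro i; simp only [hyQ]
      rw [Real.exp_neg, Real.exp_log (hpos i)]
    set tQ : Fin N → ℝ := fun i => lam i / p i with htQ
    set UQ : Matrix (Fin N) (Fin N) ℝ := fun k j => B k j * p j / p k with hUQ
    have hfeasQ : FeasPR2 B lam δ α s p yQ tQ UQ := by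
      refine ⟨hs0, ?_, ?_, ?_, ?_, ?_, ?_⟩
      · intro i
        simp only [hyQ, neg_nonneg]
        exact Real.log_nonpos (hp0 i) (le_of_lt (hlt1 i))
      · intro i
        simp only [htQ, hUQ]
        have hsum : ∑ j, B i j * p j / p i = (B.mulVec p i) / p i := by
          rw [mulVec_apply', Finset.sum_div]
        rw [hsum]
        have hpi := hpos i
        field_simp
        linear_combination hg' i
      · intro i; rw [hexpQ i]
      · exact fun i => (hlt1 i).le
      · intro i
        rw [hexpQ' i]
        simp only [htQ]
        rw [div_eq_mul_inv]
      · intro k j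
        rw [hexpQ' k, hexpQ j]
        simp only [hUQ]
        rw [div_eq_mul_inv]
        ring_nf
        exact le_refl _
    exact hopt s p yQ tQ UQ hfeasQ
  have hmem : fobj w c s' p' ∈ {v | ∃ s p, FeasP B lam δ α s p ∧ v = fobj w c s p} :=
    ⟨s', p', hfeasP, rfl⟩
  have hbdd : fobj w c sP pP ∈ lowerBounds {v | ∃ s p, FeasP B lam δ α s p ∧ v = fobj w c s p} := by
    rintro v ⟨s, p, hsp, rfl⟩
    exact hlb s p hsp
  exact ⟨hfeasP, le_csInf ⟨_, hmem⟩ hbdd, csInf_le ⟨_, hbdd⟩ hmem⟩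
end
end

section
/- Let q ∈ ℝ^N satisfy 0 < q_i < 1 for all i, and set λ′ := λ + q∘(Bq) and B′ := diag(1 − q)·B. Consider problem (S_R1): minimize w(s) + cᵀe^{−y} over s ≥ 0, y ∈ ℝ^N, t ∈ ℝ^N, U ∈ ℝ^{N×N} subject to t + U·1 = α∘s + δ + λ + Bq, t ≥ λ′∘e^{y}, and U ≥ diag(e^{y})·B′·diag(e^{−y}) entrywise. Then at every feasible point attaining the optimal value of (S_R1), both inequality constraints are active: t = λ′∘e^{y} and U = diag(e^{y})·B′·diag(e^{−y}); that is, this convex relaxation is exact. -/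
noncomputable section

open Matrix

/-- Feasibility for the convex relaxation (S_R1) of the SCP subproblem. -/
def FeasSR1 {N : ℕ} (B : Matrix (Fin N) (Fin N) ℝ) (lam δ α lam' : Fin N → ℝ)
    (B' : Matrix (Fin N) (Fin N) ℝ) (q : Fin N → ℝ)
    (s y t : Fin N → ℝ) (U : Matrix (Fin N) (Fin N) ℝ) : Prop :=
  (∀ i, 0 ≤ s i) ∧
  (∀ i, t i + ∑ j, U i j = α i * s i + δ i + lam i + B.mulVec q i) ∧
  (∀ i, lam' i * Real.exp (y i) ≤ t i) ∧
  (∀ i j, Real.exp (y i) * B' i j * Real.exp (-(y j)) ≤ U i j)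

theorem statement12 {N : ℕ} (hN : 2 ≤ N)
    (B : Matrix (Fin N) (Fin N) ℝ) (hBnn : ∀ i j, 0 ≤ B i j) (hBirr : MatIrred B)
    (lam δ α : Fin N → ℝ)
    (hlam : ∀ i, 0 ≤ lam i)
    (hδ : ∀ i, 0 < δ i) (hα : ∀ i, 0 < α i)
    (w : (Fin N → ℝ) → ℝ) (hwcont : Continuous w)
    (hwconv : ConvexOn ℝ Set.univ w)
    (hwmono : ∀ s s' : Fin N → ℝ, s ≤ s' → s ≠ s' → w s < w s')
    (c : Fin N → ℝ) (hc : ∀ i, 0 < c i)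
    (q : Fin N → ℝ) (hq : ∀ i, 0 < q i ∧ q i < 1)
    (lam' : Fin N → ℝ) (hlam' : lam' = fun i => lam i + q i * B.mulVec q i)
    (B' : Matrix (Fin N) (Fin N) ℝ)
    (hB' : B' = Matrix.diagonal (fun i => 1 - q i) * B)
    (s y t : Fin N → ℝ) (U : Matrix (Fin N) (Fin N) ℝ)
    (hfeas : FeasSR1 B lam δ α lam' B' q s y t U)
    (hopt : ∀ (s' y' t' : Fin N → ℝ) (U' : Matrix (Fin N) (Fin N) ℝ),
      FeasSR1 B lam δ α lam' B' q s' y' t' U' →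
      w s + ∑ i, c i * Real.exp (-(y i)) ≤ w s' + ∑ i, c i * Real.exp (-(y' i))) :
    (∀ i, t i = lam' i * Real.exp (y i)) ∧
    (∀ i j, U i j = Real.exp (y i) * B' i j * Real.exp (-(y j))) := by
  obtain ⟨hs, heqc, ht, hU⟩ := hfeas
  -- basic nonnegativity facts
  have hq' : ∀ i, 0 ≤ 1 - q i := fun i => by linarith [(hq i).2]
  have hB'nn : ∀ i j, 0 ≤ B' i j := by
    intro i j
    rw [hB', Matrix.diagonal_mul]
    exact mul_nonneg (hq' i) (hBnn i j)
  have hBqnn : ∀ i, 0 ≤ B.mulVec q i := by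
    intro i
    rw [Matrix.mulVec, dotProduct]
    apply Finset.sum_nonneg
    intro j _
    exact mul_nonneg (hBnn i j) (hq j).1.le
  have hlam'nn : ∀ i, 0 ≤ lam' i := by
    intro i
    rw [hlam']
    exact add_nonneg (hlam i) (mul_nonneg (hq i).1.le (hBqnn i))
  -- irreducibility gives: every row of B has a positive entry
  have hrow : ∀ i, ∃ l, 0 < B i l := by
    intro i
    by_contra h
    push_neg at h
    have hz : ∀ l, B i l = 0 := fun l => le_antisymm (h l) (hBnn i l)
    have hzk : ∀ k : ℕ, ∀ j, (B ^ (k + 1)) i j = 0 := by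
      intro k j
      rw [pow_succ', Matrix.mul_apply]
      apply Finset.sum_eq_zero
      intro l _
      rw [hz l, zero_mul]
    obtain ⟨k, hk1, hkpos⟩ := hBirr i i
    obtain ⟨m, rfl⟩ := Nat.exists_eq_add_of_le hk1
    rw [add_comm] at hkpos
    rw [hzk m i] at hkpos
    exact lt_irrefl 0 hkpos
  -- key: at optimum each row's constraint sum is tight
  have key : ∀ i, t i + ∑ j, U i j ≤
      lam' i * Real.exp (y i) + ∑ j, Real.exp (y i) * B' i j * Real.exp (-(y j)) := by
    intro i
    by_contra hlt
    push_neg at hlt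
    set R := lam' i * Real.exp (y i) + ∑ j, Real.exp (y i) * B' i j * Real.exp (-(y j)) with hR
    set T := t i + ∑ j, U i j with hT
    have htermnn : ∀ j, 0 ≤ Real.exp (y i) * B' i j * Real.exp (-(y j)) := by
      intro j
      exact mul_nonneg (mul_nonneg (Real.exp_pos _).le (hB'nn i j)) (Real.exp_pos _).le
    have hRpos : 0 < R := by
      obtain ⟨l, hl⟩ := hrow i
      have hB'il : 0 < B' i l := by
        rw [hB', Matrix.diagonal_mul]
        have : 0 < 1 - q i := by linarith [(hq i).2]
        exact mul_pos this hl
      have h1 : 0 < Real.exp (y i) * B' i l * Real.exp (-(y l)) :=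
        mul_pos (mul_pos (Real.exp_pos _) hB'il) (Real.exp_pos _)
      have h2 : Real.exp (y i) * B' i l * Real.exp (-(y l)) ≤
          ∑ j, Real.exp (y i) * B' i j * Real.exp (-(y j)) :=
        Finset.single_le_sum (fun j _ => htermnn j) (Finset.mem_univ l)
      have h3 : 0 ≤ lam' i * Real.exp (y i) :=
        mul_nonneg (hlam'nn i) (Real.exp_pos _).le
      linarith
    set η := Real.log (T / R) with hη
    have hTRgt : 1 < T / R := by
      rw [lt_div_iff₀ hRpos]
      linarith
    have hηpos : 0 < η := Real.log_pos hTRgt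
    have hexpη : Real.exp η = T / R := Real.exp_log (by positivity)
    -- perturbed point
    set y' : Fin N → ℝ := Function.update y i (y i + η) with hy'
    set t' : Fin N → ℝ := Function.update t i (lam' i * Real.exp (y i + η)) with ht'
    set U' : Matrix (Fin N) (Fin N) ℝ :=
      fun k j => if k = i then Real.exp (y i + η) * B' i j * Real.exp (-(y j)) else U k j
      with hU'
    have hexpi : ∀ j, Real.exp (y i + η) * B' i j * Real.exp (-(y j)) =
        Real.exp η * (Real.exp (y i) * B' i j * Real.exp (-(y j))) := by
      intro j
      rw [Real.exp_add]
      ring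
    have hfeas' : FeasSR1 B lam δ α lam' B' q s y' t' U' := by
      refine ⟨hs, ?_, ?_, ?_⟩
      · intro k
        by_cases hk : k = i
        · subst hk
          have hrowsum : t' k + ∑ j, U' k j = Real.exp η * R := by
            simp only [ht', hU', Function.update_self, if_pos rfl]
            rw [hR]
            simp only [hexpi]
            rw [← Finset.mul_sum, Real.exp_add]
            ring
          rw [hrowsum, hexpη, div_mul_cancel₀ _ (ne_of_gt hRpos), hT]
          exact heqc k
        · have h1 : t' k = t k := Function.update_of_ne hk _ _
          have h2 : ∀ j, U' k j = U k j := fun j => by simp [hU', hk]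
          rw [h1]
          simp only [h2]
          exact heqc k
      · intro k
        by_cases hk : k = i
        · subst hk
          simp [ht', hy']
        · have h1 : t' k = t k := Function.update_of_ne hk _ _
          have h2 : y' k = y k := Function.update_of_ne hk _ _
          rw [h1, h2]
          exact ht k
      · intro k j
        by_cases hk : k = i
        · subst hk
          have h1 : y' k = y k + η := Function.update_self _ _ _
          have h2 : U' k j = Real.exp (y k + η) * B' k j * Real.exp (-(y j)) := by
            simp [hU']
          rw [h1, h2]
          by_cases hj : j = k
          · subst hj
            have h3 : y' j = y j + η := Function.update_self _ _ _
            rw [h3]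
            have : Real.exp (-(y j + η)) ≤ Real.exp (-(y j)) := by
              apply Real.exp_le_exp.2
              linarith
            exact mul_le_mul_of_nonneg_left this
              (mul_nonneg (Real.exp_pos _).le (hB'nn j j))
          · have h3 : y' j = y j := Function.update_of_ne (by exact fun h => hj h) _ _
            rw [h3]
        · have h1 : y' k = y k := Function.update_of_ne hk _ _
          have h2 : U' k j = U k j := by simp [hU', hk]
          rw [h1, h2]
          by_cases hj : j = i
          · subst hj
            have h3 : y' j = y j + η := Function.update_self _ _ _
            rw [h3]
            calc Real.exp (y k) * B' k j * Real.exp (-(y j + η))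
                ≤ Real.exp (y k) * B' k j * Real.exp (-(y j)) := by
                  apply mul_le_mul_of_nonneg_left _
                    (mul_nonneg (Real.exp_pos _).le (hB'nn k j))
                  apply Real.exp_le_exp.2
                  linarith
              _ ≤ U k j := hU k j
          · have h3 : y' j = y j := Function.update_of_ne hj _ _
            rw [h3]
            exact hU k j
    have hle := hopt s y' t' U' hfeas'
    have hlt2 : ∑ j, c j * Real.exp (-(y' j)) < ∑ j, c j * Real.exp (-(y j)) := by
      apply Finset.sum_lt_sum
      · intro j _
        by_cases hj : j = i
        · subst hj
          have h3 : y' j = y j + η := Function.update_self _ _ _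
          rw [h3]
          apply mul_le_mul_of_nonneg_left _ (hc j).le
          apply Real.exp_le_exp.2
          linarith
        · have h3 : y' j = y j := Function.update_of_ne hj _ _
          rw [h3]
      · refine ⟨i, Finset.mem_univ i, ?_⟩
        have h3 : y' i = y i + η := Function.update_self _ _ _
        rw [h3]
        apply mul_lt_mul_of_pos_left _ (hc i)
        apply Real.exp_lt_exp.2
        linarith
    linarith
  -- deduce entrywise tightness from the sum tightness
  have main : ∀ i, t i = lam' i * Real.exp (y i) ∧
      ∀ j, U i j = Real.exp (y i) * B' i j * Real.exp (-(y j)) := by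
    intro i
    have hk := key i
    have hsle : ∑ j, Real.exp (y i) * B' i j * Real.exp (-(y j)) ≤ ∑ j, U i j :=
      Finset.sum_le_sum (fun j _ => hU i j)
    have hteq : t i = lam' i * Real.exp (y i) := le_antisymm (by linarith [ht i]) (ht i)
    have hsumeq : ∑ j, Real.exp (y i) * B' i j * Real.exp (-(y j)) = ∑ j, U i j :=
      le_antisymm hsle (by linarith)
    refine ⟨hteq, ?_⟩
    have := (Finset.sum_eq_sum_iff_of_le (fun j _ => hU i j)).1 hsumeq
    intro j
    exact (this j (Finset.mem_univ j)).symm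
  exact ⟨fun i => (main i).1, fun i j => (main i).2 j⟩
end
end
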